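/- arXiv:1208.5820 — 7 statements merged into one kernel-verified Lean document; each statement's English description precedes it below -/
import Mathlib

section
/- Let c_1, …, c_L be nonnegative integers with c_1 > 0 and c_L > 0, let f(x) = x^L − (c_1 x^{L−1} + c_2 x^{L−2} + ⋯ + c_{L−1} x + c_L), and let λ_1 be its unique positive real root. Then every complex root λ of f with λ ≠ λ_1 satisfies |λ| < λ_1. -/
open Polynomial

/-- The characteristic polynomial `x^L − (c₁ x^{L−1} + c₂ x^{L−2} + ⋯ + c_{L−1} x + c_L)`
of a positive linear recurrence, as a complex polynomial. -/
noncomputable def charPolyC (L : ℕ) (c : ℕ → ℕ) : Polynomial ℂ :=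
  X ^ L - ∑ i ∈ Finset.Icc 1 L, C (c i : ℂ) * X ^ (L - i)

lemma re_eq_abs_imp {w : ℂ} (h : w.re = ‖w‖) : w = (w.re : ℂ) := by
  have h1 : (‖w‖)^2 = w.re^2 + w.im^2 := by
    rw [Complex.sq_norm, Complex.normSq_apply]; ring
  rw [← h] at h1
  have h2 : w.im ^ 2 = 0 := by linarith
  have him : w.im = 0 := by
    have := sq_eq_zero_iff.mp h2
    exact this
  exact Complex.ext (by simp) (by simp [him])

/-- Let `c₁, …, c_L` be nonnegative integers with `c₁ > 0` and `c_L > 0`,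
let `f(x) = x^L − (c₁ x^{L−1} + ⋯ + c_L)`, and let `λ₁` be its unique positive real root.
Then every complex root `λ ≠ λ₁` of `f` satisfies `|λ| < λ₁`. -/
theorem dominant_root (L : ℕ) (hL : 1 ≤ L) (c : ℕ → ℕ)
    (hc1 : 0 < c 1) (hcL : 0 < c L)
    (lam1 : ℝ) (hpos : 0 < lam1)
    (hroot : (charPolyC L c).eval (lam1 : ℂ) = 0)
    (huniq : ∀ x : ℝ, 0 < x → (charPolyC L c).eval (x : ℂ) = 0 → x = lam1) :
    ∀ z : ℂ, (charPolyC L c).eval z = 0 → z ≠ (lam1 : ℂ) → ‖z‖ < lam1 := by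
  intro z hz0 hne
  obtain ⟨M, rfl⟩ : ∃ M, L = M + 1 := ⟨L - 1, (Nat.succ_pred_eq_of_pos hL).symm⟩
  have hz : z ^ (M+1) = ∑ i ∈ Finset.Icc 1 (M+1), (c i : ℂ) * z ^ (M+1-i) := by
    simp [charPolyC, eval_finset_sum, sub_eq_zero] at hz0
    exact hz0
  have hlamC : (lam1:ℂ) ^ (M+1) = ∑ i ∈ Finset.Icc 1 (M+1), (c i : ℂ) * (lam1:ℂ) ^ (M+1-i) := by
    simp [charPolyC, eval_finset_sum, sub_eq_zero] at hroot
    exact hroot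
  have hlamR : lam1 ^ (M+1) = ∑ i ∈ Finset.Icc 1 (M+1), (c i : ℝ) * lam1 ^ (M+1-i) := by
    exact_mod_cast hlamC
  set r := ‖z‖ with hr
  have hr0 : 0 ≤ r := norm_nonneg z
  have habsz : ∀ k : ℕ, ‖z ^ k‖ = r ^ k := fun k => norm_pow _ _
  have habs : r ^ (M+1) ≤ ∑ i ∈ Finset.Icc 1 (M+1), (c i : ℝ) * r ^ (M+1-i) := by
    calc r ^ (M+1) = ‖z ^ (M+1)‖ := (habsz _).symm
      _ = ‖∑ i ∈ Finset.Icc 1 (M+1), (c i : ℂ) * z ^ (M+1-i)‖ := by rw [hz]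
      _ ≤ ∑ i ∈ Finset.Icc 1 (M+1), ‖(c i : ℂ) * z ^ (M+1-i)‖ :=
          norm_sum_le _ _
      _ = ∑ i ∈ Finset.Icc 1 (M+1), (c i : ℝ) * r ^ (M+1-i) := by
          refine Finset.sum_congr rfl fun i _ => ?_
          rw [norm_mul, norm_pow, Complex.norm_natCast]
  have hrle : r ≤ lam1 := by
    by_contra hgt
    push_neg at hgt
    have hrpos : 0 < r := hpos.trans hgt
    have hrat : 1 ≤ r / lam1 := (one_le_div hpos).2 hgt.le
    have hmul : lam1 * (r / lam1) = r := by field_simp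
    have hsum : ∑ i ∈ Finset.Icc 1 (M+1), (c i : ℝ) * r ^ (M+1-i)
        ≤ (∑ i ∈ Finset.Icc 1 (M+1), (c i : ℝ) * lam1 ^ (M+1-i)) * (r/lam1) ^ M := by
      rw [Finset.sum_mul]
      refine Finset.sum_le_sum fun i hi => ?_
      rw [mul_assoc]
      refine mul_le_mul_of_nonneg_left ?_ (Nat.cast_nonneg _)
      calc r ^ (M+1-i) = (lam1 * (r/lam1)) ^ (M+1-i) := by rw [hmul]
        _ = lam1 ^ (M+1-i) * (r/lam1) ^ (M+1-i) := mul_pow _ _ _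
        _ ≤ lam1 ^ (M+1-i) * (r/lam1) ^ M := by
            refine mul_le_mul_of_nonneg_left ?_ (pow_nonneg hpos.le _)
            refine pow_le_pow_right₀ hrat ?_
            have : 1 ≤ i := (Finset.mem_Icc.mp hi).1
            omega
    have hfin : (∑ i ∈ Finset.Icc 1 (M+1), (c i : ℝ) * lam1 ^ (M+1-i)) * (r/lam1) ^ M
        = lam1 * r ^ M := by
      rw [← hlamR, pow_succ', mul_assoc, ← mul_pow, hmul]
    have hlt : lam1 * r ^ M < r * r ^ M :=
      mul_lt_mul_of_pos_right hgt (pow_pos hrpos M)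
    have hpow : r ^ (M+1) = r * r ^ M := pow_succ' r M
    linarith [habs, hsum, hfin.le]
  rcases lt_or_eq_of_le hrle with h | heq
  · exact h
  exfalso
  -- Split off the last term.
  set T : ℂ := ∑ i ∈ Finset.Icc 1 M, (c i : ℂ) * z ^ (M+1-i) with hT
  have hsplitC : ∑ i ∈ Finset.Icc 1 (M+1), (c i : ℂ) * z ^ (M+1-i) = T + (c (M+1) : ℂ) := by
    rw [Finset.sum_Icc_succ_top (by omega : 1 ≤ M + 1)]
    simp
    rfl
  have hzT : z ^ (M+1) = T + (c (M+1) : ℂ) := by rw [hz, hsplitC]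
  have hsplitR : lam1 ^ (M+1) = (∑ i ∈ Finset.Icc 1 M, (c i : ℝ) * lam1 ^ (M+1-i)) + (c (M+1) : ℝ) := by
    rw [hlamR, Finset.sum_Icc_succ_top (by omega : 1 ≤ M + 1)]
    simp
  have hTabs : ‖T‖ ≤ ∑ i ∈ Finset.Icc 1 M, (c i : ℝ) * lam1 ^ (M+1-i) := by
    calc ‖T‖ ≤ ∑ i ∈ Finset.Icc 1 M, ‖(c i : ℂ) * z ^ (M+1-i)‖ :=
          norm_sum_le _ _
      _ = ∑ i ∈ Finset.Icc 1 M, (c i : ℝ) * lam1 ^ (M+1-i) := by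
          refine Finset.sum_congr rfl fun i _ => ?_
          rw [norm_mul, norm_pow, Complex.norm_natCast, ← hr, heq]
  have habszz : ‖z ^ (M+1)‖ = lam1 ^ (M+1) := by rw [habsz, heq]
  have hcM : (0:ℝ) < (c (M+1) : ℝ) := by exact_mod_cast hcL
  have htri : ‖T + (c (M+1) : ℂ)‖ ≤ ‖T‖ + (c (M+1) : ℝ) := by
    calc ‖T + (c (M+1) : ℂ)‖ ≤ ‖T‖ + ‖(c (M+1) : ℂ)‖ :=
          norm_add_le _ _
      _ = ‖T‖ + (c (M+1) : ℝ) := by rw [Complex.norm_natCast]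
  have heq1 : ‖T‖ + (c (M+1) : ℝ) = lam1 ^ (M+1) := by
    have h1 : lam1 ^ (M+1) ≤ ‖T‖ + (c (M+1) : ℝ) := by
      rw [← habszz, hzT]; exact htri
    linarith [hTabs, hsplitR.ge]
  have htri_eq : ‖T + (c (M+1) : ℂ)‖ = ‖T‖ + (c (M+1) : ℝ) := by
    rw [heq1, ← habszz, hzT]
  -- Deduce T.re = |T|
  have hre : T.re = ‖T‖ := by
    have e1 : (‖T + (c (M+1) : ℂ)‖)^2 = (T.re + (c (M+1) : ℝ))^2 + T.im^2 := by
      rw [Complex.sq_norm, Complex.normSq_apply]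
      simp
      ring
    have e2 : (‖T‖)^2 = T.re^2 + T.im^2 := by
      rw [Complex.sq_norm, Complex.normSq_apply]; ring
    have e3 : T.re ≤ ‖T‖ := Complex.re_le_norm T
    have e4 : (‖T‖ + (c (M+1):ℝ))^2 = (T.re + (c (M+1):ℝ))^2 + T.im^2 := by
      rw [← htri_eq, e1]
    nlinarith [e2, e3, e4, hcM, sq_nonneg T.im]
  -- z^(M+1) is the positive real lam1^(M+1)
  have hreZ : (z ^ (M+1)).re = lam1 ^ (M+1) := by
    rw [hzT]
    simp only [Complex.add_re, Complex.natCast_re]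
    rw [hre]
    exact heq1
  have hzL : z ^ (M+1) = ((lam1 ^ (M+1) : ℝ) : ℂ) := by
    have h := re_eq_abs_imp (w := z ^ (M+1)) (by rw [hreZ, habszz])
    rw [h, hreZ]
  -- Sum of real parts
  have hre_sum : ∑ i ∈ Finset.Icc 1 (M+1), (c i : ℝ) * (z ^ (M+1-i)).re = lam1 ^ (M+1) := by
    have h1 : (z ^ (M+1)).re = lam1 ^ (M+1) := hreZ
    rw [← h1, hz, Complex.re_sum]
    refine Finset.sum_congr rfl fun i _ => ?_
    simp [Complex.mul_re]
  have hle_term : ∀ i ∈ Finset.Icc 1 (M+1),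
      (c i : ℝ) * (z ^ (M+1-i)).re ≤ (c i : ℝ) * lam1 ^ (M+1-i) := by
    intro i _
    refine mul_le_mul_of_nonneg_left ?_ (Nat.cast_nonneg _)
    calc (z ^ (M+1-i)).re ≤ ‖z ^ (M+1-i)‖ := Complex.re_le_norm _
      _ = lam1 ^ (M+1-i) := by rw [habsz, heq]
  have heach := (Finset.sum_eq_sum_iff_of_le hle_term).1 (by rw [hre_sum, ← hlamR])
  have h1mem : (1:ℕ) ∈ Finset.Icc 1 (M+1) := by simp
  have hM1 := heach 1 h1mem
  simp only [Nat.add_sub_cancel] at hM1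
  have hc1' : (0:ℝ) < (c 1 : ℝ) := by exact_mod_cast hc1
  have hreM : (z ^ M).re = lam1 ^ M := mul_left_cancel₀ hc1'.ne' hM1
  have hzM : z ^ M = ((lam1 ^ M : ℝ) : ℂ) := by
    have habsM : ‖z ^ M‖ = lam1 ^ M := by rw [habsz, heq]
    have h := re_eq_abs_imp (w := z ^ M) (by rw [hreM, habsM])
    rw [h, hreM]
  have hfin : z * (lam1:ℂ) ^ M = (lam1:ℂ) * (lam1:ℂ) ^ M := by
    have h1 : z * z ^ M = z ^ (M+1) := (pow_succ' z M).symm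
    have h2 : z ^ M = (lam1:ℂ) ^ M := by rw [hzM]; push_cast; ring
    calc z * (lam1:ℂ) ^ M = z * z ^ M := by rw [h2]
      _ = z ^ (M+1) := h1
      _ = ((lam1 ^ (M+1) : ℝ) : ℂ) := hzL
      _ = (lam1:ℂ) * (lam1:ℂ) ^ M := by push_cast; ring
  have hMne : ((lam1:ℂ)) ^ M ≠ 0 := pow_ne_zero _ (by exact_mod_cast hpos.ne')
  exact hne (mul_right_cancel₀ hMne hfin)
end

section
/- Let {G_n} be a positive linear recurrence sequence of length L ≥ 2, let λ_1 be the unique positive root of its characteristic polynomial x^L − (c_1 x^{L−1} + ⋯ + c_L), and let λ_2 be a complex root of second-largest absolute value. Then there exist constants a_1 > 0 and C > 0 such that |G_n − a_1 λ_1^n| ≤ C·n^{L−2}·|λ_2|^n for all n ≥ 1; in particular G_n/λ_1^n → a_1 as n → ∞. -/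
open Polynomial

noncomputable def sft : Module.End ℂ (ℕ → ℂ) where
  toFun H n := H (n+1)
  map_add' _ _ := rfl
  map_smul' _ _ := rfl

noncomputable def phi (q : Polynomial ℂ) : (ℕ → ℂ) →ₗ[ℂ] (ℕ → ℂ) :=
  Polynomial.aeval sft q

lemma phi_mul (p q : Polynomial ℂ) (H : ℕ → ℂ) : phi (p * q) H = phi p (phi q H) := by
  simp only [phi, map_mul]; rfl

lemma phi_X (H : ℕ → ℂ) (n : ℕ) : phi X H n = H (n + 1) := by
  rw [phi, aeval_X]; rfl

lemma phi_C (a : ℂ) (H : ℕ → ℂ) (n : ℕ) : phi (C a) H n = a * H n := by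
  rw [phi, aeval_C]
  rw [Module.algebraMap_end_apply]; rfl

lemma phi_X_pow (k : ℕ) (H : ℕ → ℂ) (n : ℕ) : phi (X ^ k) H n = H (n + k) := by
  induction k generalizing H n with
  | zero => simp [phi]
  | succ k ih =>
    have h : (X : Polynomial ℂ) ^ (k+1) = X ^ k * X := by ring
    rw [h, phi_mul, ih, phi_X]
    exact congrArg H (by omega)

lemma phi_monomial (a : ℂ) (k : ℕ) (H : ℕ → ℂ) (n : ℕ) :
    phi (monomial k a) H n = a * H (n + k) := by
  have h : (monomial k a : Polynomial ℂ) = C a * X ^ k := by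
    rw [C_mul_X_pow_eq_monomial]
  rw [h, phi_mul, phi_C, phi_X_pow]

lemma phi_add (p q : Polynomial ℂ) (H : ℕ → ℂ) : phi (p + q) H = phi p H + phi q H := by
  simp only [phi, map_add]; rfl

lemma phi_sub (p q : Polynomial ℂ) (H : ℕ → ℂ) : phi (p - q) H = phi p H - phi q H := by
  simp only [phi, map_sub]; rfl

lemma phi_geom (q : Polynomial ℂ) (z : ℂ) (n : ℕ) :
    phi q (fun m => z ^ m) n = q.eval z * z ^ n := by
  induction q using Polynomial.induction_on' with
  | add p q hp hq =>
    rw [phi_add]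
    show phi p _ n + phi q _ n = _
    rw [hp, hq, eval_add]; ring
  | monomial k a => rw [phi_monomial]; simp [eval_monomial]; ring

lemma phi_X_sub_C (μ : ℂ) (H : ℕ → ℂ) (n : ℕ) :
    phi (X - C μ) H n = H (n + 1) - μ * H n := by
  rw [phi_sub]
  show phi X H n - phi (C μ) H n = _
  rw [phi_X, phi_C]

lemma phi_fun_sub (q : Polynomial ℂ) (H K : ℕ → ℂ) : phi q (H - K) = phi q H - phi q K :=
  map_sub (phi q) H K

lemma phi_fun_smul (q : Polynomial ℂ) (a : ℂ) (H : ℕ → ℂ) : phi q (a • H) = a • phi q H :=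
  map_smul (phi q) a H

lemma decay (r : ℝ) (hr : 0 < r) :
    ∀ d : ℕ, ∀ q : Polynomial ℂ, q.Monic → q.natDegree = d + 1 →
    (∀ z : ℂ, q.IsRoot z → ‖z‖ ≤ r) →
    ∀ H : ℕ → ℂ, ∀ N : ℕ, (∀ n, N ≤ n → phi q H n = 0) →
    ∃ C : ℝ, 0 < C ∧ ∀ n : ℕ, 1 ≤ n → ‖H n‖ ≤ C * (n:ℝ) ^ d * r ^ n := by
  intro d
  induction d with
  | zero =>
    intro q hm hdeg hroots H N hrec
    have hq : q = X + C (q.coeff 0) := hm.eq_X_add_C hdeg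
    set μ : ℂ := -q.coeff 0 with hμ
    have hμr : ‖μ‖ ≤ r := by
      apply hroots
      rw [IsRoot, hq]; simp [hμ]
    have hstep : ∀ n, N ≤ n → H (n+1) = μ * H n := by
      intro n hn
      have h0 := hrec n hn
      rw [hq] at h0
      have h1 : phi (X + C (q.coeff 0)) H n = H (n+1) + q.coeff 0 * H n := by
        have h2 := congrFun (phi_add X (C (q.coeff 0)) H) n
        rw [h2]
        show phi X H n + phi (C (q.coeff 0)) H n = _
        rw [phi_X, phi_C]
      rw [h1] at h0
      rw [hμ]; linear_combination h0
    have hgeo : ∀ k : ℕ, ‖H (N + k)‖ ≤ ‖H N‖ * r ^ k := by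
      intro k
      induction k with
      | zero => simp
      | succ k ih =>
        have h3 : H (N + (k+1)) = μ * H (N + k) := by
          rw [show N + (k+1) = N + k + 1 by omega]
          exact hstep (N + k) (Nat.le_add_right N k)
        rw [h3, norm_mul]
        calc ‖μ‖ * ‖H (N+k)‖ ≤ r * (‖H N‖ * r ^ k) := by
              apply mul_le_mul hμr ih (norm_nonneg _) (le_trans (norm_nonneg _) hμr)
          _ = ‖H N‖ * r ^ (k+1) := by ring
    set CC : ℝ := 1 + ∑ j ∈ Finset.range (N+1), ‖H j‖ / r ^ j with hCC
    have hterm : ∀ j, j ∈ Finset.range (N+1) → ‖H j‖ / r ^ j ≤ CC - 1 := by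
      intro j hj
      rw [hCC]; simp only [add_sub_cancel_left]
      exact Finset.single_le_sum (f := fun j => ‖H j‖ / r ^ j) (fun i _ => by positivity) hj
    have hCCpos : 0 < CC := by
      rw [hCC]
      have h4 : (0:ℝ) ≤ ∑ j ∈ Finset.range (N+1), ‖H j‖ / r ^ j :=
        Finset.sum_nonneg (fun i _ => by positivity)
      linarith
    refine ⟨CC, hCCpos, ?_⟩
    intro n hn
    rw [pow_zero, mul_one]
    rcases le_or_gt n N with h | h
    · have h5 := hterm n (Finset.mem_range.mpr (by omega))
      have hrn : (0:ℝ) < r ^ n := pow_pos hr n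
      rw [div_le_iff₀ hrn] at h5
      nlinarith
    · have hNn : N + (n - N) = n := by omega
      have h1 := hgeo (n - N)
      rw [hNn] at h1
      have h2 := hterm N (Finset.mem_range.mpr (by omega))
      have hrN : (0:ℝ) < r ^ N := pow_pos hr N
      rw [div_le_iff₀ hrN] at h2
      have h3 : ‖H N‖ * r ^ (n - N) ≤ (CC - 1) * r ^ N * r ^ (n-N) :=
        mul_le_mul_of_nonneg_right h2 (le_of_lt (pow_pos hr _))
      have h4 : r ^ N * r ^ (n - N) = r ^ n := by
        rw [← pow_add, show N + (n - N) = n by omega]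
      have hrn : (0:ℝ) < r ^ n := pow_pos hr n
      nlinarith
  | succ d ih =>
    intro q hm hdeg hroots H N hrec
    have hdegpos : 0 < q.degree := natDegree_pos_iff_degree_pos.mp (by omega)
    obtain ⟨μ, hμroot⟩ := Complex.exists_root hdegpos
    have hdvd : (X - C μ) ∣ q := dvd_iff_isRoot.mpr hμroot
    obtain ⟨q', hq'⟩ := hdvd
    have hmq' : q'.Monic := (monic_X_sub_C μ).of_mul_monic_left (hq' ▸ hm)
    have hq'ne : q' ≠ 0 := hmq'.ne_zero
    have hdeg' : q'.natDegree = d + 1 := by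
      have h5 := natDegree_mul (X_sub_C_ne_zero μ) hq'ne
      rw [← hq', natDegree_X_sub_C] at h5
      omega
    have hroots' : ∀ z, q'.IsRoot z → ‖z‖ ≤ r := by
      intro z hz
      apply hroots
      rw [IsRoot, hq', eval_mul]
      rw [IsRoot] at hz
      rw [hz, mul_zero]
    set K : ℕ → ℂ := fun n => H (n+1) - μ * H n with hK
    have hKrec : ∀ n, N ≤ n → phi q' K n = 0 := by
      intro n hn
      have h1 : phi (X - C μ) H = K := by
        funext m; rw [phi_X_sub_C]
      have h2 : phi q' K = phi q H := by
        rw [← h1, ← phi_mul, mul_comm, ← hq']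
      rw [h2]; exact hrec n hn
    obtain ⟨C2, hC2pos, hC2⟩ := ih q' hmq' hdeg' hroots' K N hKrec
    have hμr : ‖μ‖ ≤ r := hroots μ hμroot
    set C3 : ℝ := ‖H 1‖ / r + C2 / r + 1 with hC3
    have hC3pos : 0 < C3 := by positivity
    have hC3r : C2 ≤ C3 * r := by
      rw [hC3]
      have h6 : (‖H 1‖ / r + C2 / r + 1) * r
          = ‖H 1‖ + C2 + r := by field_simp
      rw [h6]
      nlinarith [norm_nonneg (H 1)]
    refine ⟨C3, hC3pos, ?_⟩
    intro n hn
    induction n, hn using Nat.le_induction with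
    | base =>
      push_cast
      rw [one_pow, mul_one, pow_one]
      have h6 : C3 * r = ‖H 1‖ + C2 + r := by
        rw [hC3]; field_simp
      linarith [norm_nonneg (H 1), hC2pos]
    | succ n hn1 ihn =>
      have hHn1 : H (n+1) = K n + μ * H n := by rw [hK]; ring
      have habs : ‖H (n+1)‖ ≤ ‖K n‖ + ‖μ‖ * ‖H n‖ := by
        rw [hHn1]
        calc ‖K n + μ * H n‖ ≤ ‖K n‖ + ‖μ * H n‖ :=
              norm_add_le _ _
          _ = ‖K n‖ + ‖μ‖ * ‖H n‖ := by rw [norm_mul]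
      have hKb := hC2 n hn1
      have hn1R : (1:ℝ) ≤ (n:ℝ) := by exact_mod_cast hn1
      have hnp : (0:ℝ) ≤ (n:ℝ) := by linarith
      have hrn : (0:ℝ) < r ^ n := pow_pos hr n
      have hHb : ‖H n‖ ≤ C3 * (n:ℝ)^(d+1) * r ^ n := ihn
      have hmono : ‖μ‖ * ‖H n‖ ≤ r * (C3 * (n:ℝ)^(d+1) * r ^ n) :=
        mul_le_mul hμr hHb (norm_nonneg _) (le_of_lt hr)
      have goal1 : ‖H (n+1)‖ ≤ C2 * (n:ℝ)^d * r^n + r * (C3 * (n:ℝ)^(d+1) * r^n) :=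
        le_trans habs (add_le_add hKb hmono)
      have hcast : ((n+1 : ℕ):ℝ) = (n:ℝ) + 1 := by push_cast; ring
      rw [hcast]
      calc ‖H (n+1)‖ ≤ C2 * (n:ℝ)^d * r^n + r * (C3 * (n:ℝ)^(d+1) * r^n) := goal1
        _ ≤ C3 * ((n:ℝ)+1)^(d+1) * r^(n+1) := by
            have h8 : (n:ℝ)^d * ((n:ℝ)+1) ≤ ((n:ℝ)+1)^(d+1) := by
              rw [pow_succ]
              exact mul_le_mul_of_nonneg_right (pow_le_pow_left₀ hnp (by linarith) d) (by linarith)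
            have h7 : (n:ℝ)^(d+1) + (n:ℝ)^d ≤ ((n:ℝ)+1)^(d+1) := by
              have hps : (n:ℝ)^(d+1) = (n:ℝ)^d * (n:ℝ) := pow_succ _ _
              calc (n:ℝ)^(d+1) + (n:ℝ)^d = (n:ℝ)^d * ((n:ℝ)+1) := by rw [hps]; ring
                _ ≤ ((n:ℝ)+1)^(d+1) := h8
            have hp1 : (0:ℝ) ≤ (n:ℝ)^d := by positivity
            have k1 : C2 * (n:ℝ)^d ≤ C3 * r * (n:ℝ)^d := mul_le_mul_of_nonneg_right hC3r hp1
            have k2 : C3 * r * ((n:ℝ)^(d+1) + (n:ℝ)^d) ≤ C3 * r * (((n:ℝ)+1))^(d+1) :=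
              mul_le_mul_of_nonneg_left h7 (by positivity)
            have key : C2 * (n:ℝ)^d + C3 * r * (n:ℝ)^(d+1) ≤ C3 * r * (((n:ℝ)+1))^(d+1) := by
              nlinarith
            have key2 := mul_le_mul_of_nonneg_right key (le_of_lt hrn)
            rw [pow_succ r n]
            nlinarith [key2]


lemma phi_sum {ι : Type*} (s : Finset ι) (f : ι → Polynomial ℂ) (H : ℕ → ℂ) (n : ℕ) :
    phi (∑ i ∈ s, f i) H n = ∑ i ∈ s, phi (f i) H n := by
  have h : (Polynomial.aeval sft) (∑ i ∈ s, f i)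
      = ∑ i ∈ s, (Polynomial.aeval sft) (f i) := map_sum _ _ _
  rw [phi, h, LinearMap.sum_apply, Finset.sum_apply]
  rfl

lemma phi_charPoly (L : ℕ) (c : ℕ → ℕ) (H : ℕ → ℂ) (n : ℕ) :
    phi (charPolyC L c) H n
      = H (n + L) - ∑ i ∈ Finset.Icc 1 L, (c i : ℂ) * H (n + (L - i)) := by
  rw [charPolyC, phi_sub, Pi.sub_apply, phi_X_pow, phi_sum]
  congr 1
  apply Finset.sum_congr rfl
  intro i _
  rw [phi_mul, phi_C, phi_X_pow]

/-- **Generalized Binet's Formula.** Let `{G_n}` be a positive linear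
recurrence sequence of length `L ≥ 2`, `λ₁ > 1` the unique positive root of its
characteristic polynomial (which strictly dominates all other complex roots in absolute
value), and `λ₂` a complex root of second-largest absolute value. Then there are constants
`a₁ > 0` and `C > 0` with `|G_n − a₁ λ₁ⁿ| ≤ C · n^{L−2} · |λ₂|ⁿ` for all `n ≥ 1`;
in particular `G_n / λ₁ⁿ → a₁` as `n → ∞`. -/
theorem generalized_binet (L : ℕ) (hL : 2 ≤ L) (c : ℕ → ℕ)
    (hc1 : 0 < c 1) (hcL : 0 < c L)
    (G : ℕ → ℕ) (hG1 : G 1 = 1)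
    (hGsmall : ∀ n, 1 ≤ n → n < L →
      G (n + 1) = (∑ i ∈ Finset.Icc 1 n, c i * G (n + 1 - i)) + 1)
    (hGrec : ∀ n, L ≤ n →
      G (n + 1) = ∑ i ∈ Finset.Icc 1 L, c i * G (n + 1 - i))
    (lam1 : ℝ) (hlam1 : 1 < lam1)
    (hroot : (charPolyC L c).eval (lam1 : ℂ) = 0)
    (hdom : ∀ z : ℂ, (charPolyC L c).eval z = 0 → z ≠ (lam1 : ℂ) →
      ‖z‖ < lam1)
    (lam2 : ℂ) (hlam2root : (charPolyC L c).eval lam2 = 0)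
    (hlam2ne : lam2 ≠ (lam1 : ℂ))
    (hsecond : ∀ z : ℂ, (charPolyC L c).eval z = 0 → z ≠ (lam1 : ℂ) →
      ‖z‖ ≤ ‖lam2‖) :
    ∃ a1 C : ℝ, 0 < a1 ∧ 0 < C ∧
      (∀ n : ℕ, 1 ≤ n →
        |(G n : ℝ) - a1 * lam1 ^ n| ≤ C * (n : ℝ) ^ (L - 2) * ‖lam2‖ ^ n) ∧
      Filter.Tendsto (fun n => (G n : ℝ) / lam1 ^ n) Filter.atTop (nhds a1) := by
  have hlam1pos : (0:ℝ) < lam1 := by linarith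
  have hlam1ne : (lam1 : ℂ) ≠ 0 := by
    simp only [ne_eq, Complex.ofReal_eq_zero]; linarith
  -- the characteristic polynomial is monic of degree L
  have hSdeg' : (∑ i ∈ Finset.Icc 1 L, C (c i : ℂ) * X ^ (L - i)).degree
      ≤ ((L - 1 : ℕ) : WithBot ℕ) := by
    apply le_trans (Polynomial.degree_sum_le _ _)
    apply Finset.sup_le
    intro i hi
    refine le_trans (degree_C_mul_X_pow_le _ _) ?_
    have hi' := Finset.mem_Icc.mp hi
    exact_mod_cast (by omega : L - i ≤ L - 1)
  have hSdeg : (∑ i ∈ Finset.Icc 1 L, C (c i : ℂ) * X ^ (L - i)).degree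
      < (L : WithBot ℕ) := by
    apply lt_of_le_of_lt hSdeg'
    exact_mod_cast (by omega : L - 1 < L)
  have hpmonic : (charPolyC L c).Monic := by
    rw [charPolyC]
    exact monic_X_pow_sub (by exact_mod_cast hSdeg)
  have hSnd : (∑ i ∈ Finset.Icc 1 L, C (c i : ℂ) * X ^ (L - i)).natDegree
      < (X ^ L : Polynomial ℂ).natDegree := by
    rw [natDegree_X_pow]
    have h := Polynomial.natDegree_le_iff_degree_le.mpr hSdeg'
    omega
  have hpdeg : (charPolyC L c).natDegree = L := by
    rw [charPolyC, natDegree_sub_eq_left_of_natDegree_lt hSnd, natDegree_X_pow]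
  have hpeval : ∀ z : ℂ, (charPolyC L c).eval z
      = z ^ L - ∑ i ∈ Finset.Icc 1 L, (c i : ℂ) * z ^ (L - i) := by
    intro z
    simp [charPolyC, eval_finset_sum]
  have hlamR : lam1 ^ L = ∑ i ∈ Finset.Icc 1 L, (c i : ℝ) * lam1 ^ (L - i) := by
    have h := hroot
    rw [hpeval] at h
    have h2 : ((lam1 ^ L : ℝ) : ℂ)
        = ((∑ i ∈ Finset.Icc 1 L, (c i : ℝ) * lam1 ^ (L - i) : ℝ) : ℂ) := by
      push_cast
      linear_combination h
    exact_mod_cast h2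
  have hGge1 : ∀ n, 1 ≤ n → 1 ≤ G n := by
    intro n
    induction n using Nat.strong_induction_on with
    | _ n ih =>
      intro hn
      match n, hn with
      | 1, _ => rw [hG1]
      | (m+2), _ =>
        rcases lt_or_ge (m+1) L with h | h
        · rw [hGsmall (m+1) (by omega) h]; omega
        · rw [hGrec (m+1) h]
          have h1 : 1 ∈ Finset.Icc 1 L := Finset.mem_Icc.mpr (by omega)
          have h2 : 1 ≤ G (m+1) := ih (m+1) (by omega) (by omega)
          calc 1 = 1 * 1 := rfl
            _ ≤ c 1 * G (m+1+1-1) := Nat.mul_le_mul hc1 h2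
            _ ≤ ∑ i ∈ Finset.Icc 1 L, c i * G (m+1+1-i) :=
                Finset.single_le_sum (f := fun i => c i * G (m+1+1-i))
                  (fun i _ => Nat.zero_le _) h1
  have hkey : ∀ n, 1 ≤ n → lam1 ^ n ≤ (G n : ℝ) * lam1 ^ L := by
    intro n
    induction n using Nat.strong_induction_on with
    | _ n ih =>
      intro hn
      rcases le_or_gt n L with h | h
      · have h1 : lam1 ^ n ≤ lam1 ^ L := pow_le_pow_right₀ (le_of_lt hlam1) h
        have h2 : (1:ℝ) ≤ (G n : ℝ) := by exact_mod_cast hGge1 n hn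
        nlinarith [pow_pos hlam1pos L]
      · have hrecn : G n = ∑ i ∈ Finset.Icc 1 L, c i * G (n - i) := by
          have h0 := hGrec (n-1) (by omega)
          rw [show n - 1 + 1 = n by omega] at h0
          exact h0
        have hcast : (G n : ℝ) = ∑ i ∈ Finset.Icc 1 L, (c i : ℝ) * (G (n - i) : ℝ) := by
          rw [hrecn]; push_cast; ring
        have hstep : ∀ i ∈ Finset.Icc 1 L, (c i : ℝ) * lam1 ^ (n - i)
            ≤ (c i : ℝ) * (G (n-i) : ℝ) * lam1 ^ L := by
          intro i hi
          have hi' := Finset.mem_Icc.mp hi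
          have h4 := ih (n - i) (by omega) (by omega)
          calc (c i:ℝ) * lam1 ^ (n-i) ≤ (c i:ℝ) * ((G (n-i):ℝ) * lam1 ^ L) :=
                mul_le_mul_of_nonneg_left h4 (Nat.cast_nonneg _)
            _ = (c i:ℝ) * (G (n-i):ℝ) * lam1 ^ L := by ring
        have hsum : ∑ i ∈ Finset.Icc 1 L, (c i:ℝ) * lam1 ^ (n-i)
            ≤ (G n : ℝ) * lam1 ^ L := by
          rw [hcast, Finset.sum_mul]
          exact Finset.sum_le_sum hstep
        have hexp : ∑ i ∈ Finset.Icc 1 L, (c i:ℝ) * lam1 ^ (n-i) = lam1 ^ n := by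
          have h3 : ∀ i ∈ Finset.Icc 1 L, (c i:ℝ) * lam1 ^ (n-i)
              = lam1 ^ (n-L) * ((c i:ℝ) * lam1 ^ (L-i)) := by
            intro i hi
            have hi' := Finset.mem_Icc.mp hi
            rw [show n - i = (n - L) + (L - i) by omega, pow_add]; ring
          rw [Finset.sum_congr rfl h3, ← Finset.mul_sum, ← hlamR, ← pow_add,
            show n - L + L = n by omega]
        rw [← hexp]
        exact hsum
  set g : ℕ → ℂ := fun n => (G n : ℂ) with hgdef
  have hrecg : ∀ n, 1 ≤ n → phi (charPolyC L c) g n = 0 := by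
    intro n hn
    rw [phi_charPoly]
    have h := hGrec (n + L - 1) (by omega)
    rw [show n + L - 1 + 1 = n + L by omega] at h
    have h2 : ∀ i ∈ Finset.Icc 1 L, c i * G (n + L - i) = c i * G (n + (L - i)) := by
      intro i hi
      have hi' := Finset.mem_Icc.mp hi
      rw [show n + L - i = n + (L - i) by omega]
    rw [Finset.sum_congr rfl h2] at h
    show (G (n+L) : ℂ) - ∑ i ∈ Finset.Icc 1 L, (c i : ℂ) * (G (n + (L-i)) : ℂ) = 0
    rw [sub_eq_zero, h]
    push_cast
    ring
  obtain ⟨q, hq⟩ : (X - C (lam1:ℂ)) ∣ charPolyC L c := dvd_iff_isRoot.mpr hroot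
  have hqmonic : q.Monic := (monic_X_sub_C _).of_mul_monic_left (hq ▸ hpmonic)
  have hqne : q ≠ 0 := hqmonic.ne_zero
  have hqdeg : q.natDegree = L - 1 := by
    have h5 := natDegree_mul (X_sub_C_ne_zero (lam1:ℂ)) hqne
    rw [← hq, natDegree_X_sub_C, hpdeg] at h5
    omega
  have hderiv : Polynomial.derivative (charPolyC L c)
      = C (L:ℂ) * X ^ (L-1)
        - ∑ i ∈ Finset.Icc 1 L, C ((c i : ℂ) * ((L-i : ℕ):ℂ)) * X ^ (L - i - 1) := by
    rw [charPolyC, derivative_sub, derivative_X_pow, derivative_sum]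
    congr 1
    apply Finset.sum_congr rfl
    intro i _
    rw [derivative_C_mul, derivative_X_pow, C_mul]
    ring
  set DR : ℝ := L * lam1 ^ (L-1)
      - ∑ i ∈ Finset.Icc 1 L, (c i : ℝ) * ((L-i : ℕ):ℝ) * lam1 ^ (L - i - 1) with hDR
  have hDRpos : 0 < DR := by
    have h1 : (L:ℝ) * lam1^(L-1) * lam1 = (L:ℝ) * lam1 ^ L := by
      rw [mul_assoc, ← pow_succ, show L - 1 + 1 = L by omega]
    have hmul : DR * lam1 = ∑ i ∈ Finset.Icc 1 L, (c i : ℝ) * (i:ℝ) * lam1 ^ (L - i) := by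
      rw [hDR, sub_mul, Finset.sum_mul]
      have h2 : ∀ i ∈ Finset.Icc 1 L, (c i : ℝ) * ((L-i:ℕ):ℝ) * lam1 ^ (L-i-1) * lam1
          = (c i : ℝ) * ((L-i:ℕ):ℝ) * lam1 ^ (L-i) := by
        intro i hi
        have hi' := Finset.mem_Icc.mp hi
        by_cases hiL : i = L
        · subst hiL
          simp [Nat.sub_self]
        · rw [mul_assoc, ← pow_succ, show L-i-1+1 = L-i by omega]
      rw [Finset.sum_congr rfl h2, h1]
      have h3 : (L:ℝ) * lam1 ^ L = ∑ i ∈ Finset.Icc 1 L, (L:ℝ) * ((c i:ℝ) * lam1 ^ (L-i)) := by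
        rw [← Finset.mul_sum, ← hlamR]
      rw [h3, ← Finset.sum_sub_distrib]
      apply Finset.sum_congr rfl
      intro i hi
      have hi' := Finset.mem_Icc.mp hi
      have h4 : ((L - i : ℕ):ℝ) = (L:ℝ) - (i:ℝ) := by
        rw [Nat.cast_sub hi'.2]
      rw [h4]
      ring
    have h1m : 1 ∈ Finset.Icc 1 L := Finset.mem_Icc.mpr (by omega)
    have hge : (c 1:ℝ) * ((1:ℕ):ℝ) * lam1 ^ (L-1) ≤ DR * lam1 := by
      rw [hmul]
      exact Finset.single_le_sum (f := fun i => (c i:ℝ) * (i:ℝ) * lam1 ^ (L-i))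
        (fun i _ => by positivity) h1m
    have hc1R : (1:ℝ) ≤ (c 1 : ℝ) := by exact_mod_cast hc1
    have hpw : (0:ℝ) < lam1 ^ (L-1) := pow_pos hlam1pos (L-1)
    have hDRlam : 0 < DR * lam1 := by
      apply lt_of_lt_of_le _ hge
      push_cast
      nlinarith
    by_contra hcon
    push_neg at hcon
    nlinarith
  have hqlam : q.eval (lam1:ℂ) ≠ 0 := by
    have hd : Polynomial.derivative (charPolyC L c)
        = q + (X - C (lam1:ℂ)) * Polynomial.derivative q := by
      rw [hq, derivative_mul, derivative_sub, derivative_X, derivative_C, sub_zero, one_mul]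
    have he : (Polynomial.derivative (charPolyC L c)).eval (lam1:ℂ) = q.eval (lam1:ℂ) := by
      rw [hd]
      simp
    have he2 : (Polynomial.derivative (charPolyC L c)).eval (lam1:ℂ) = ((DR:ℝ) : ℂ) := by
      rw [hderiv]
      simp only [eval_sub, eval_mul, eval_C, eval_pow, eval_X, eval_finset_sum]
      rw [hDR]
      push_cast
      ring
    rw [← he, he2]
    exact Complex.ofReal_ne_zero.mpr (ne_of_gt hDRpos)
  have hlam2ne0 : lam2 ≠ 0 := by
    intro h0
    rw [h0, hpeval] at hlam2root
    rw [zero_pow (by omega : L ≠ 0)] at hlam2root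
    have hsum0 : ∑ i ∈ Finset.Icc 1 L, (c i:ℂ) * (0:ℂ)^(L-i) = (c L : ℂ) := by
      rw [Finset.sum_eq_single_of_mem L (Finset.mem_Icc.mpr (by omega))]
      · rw [Nat.sub_self, pow_zero, mul_one]
      · intro i hi hne
        have hi' := Finset.mem_Icc.mp hi
        rw [zero_pow (by omega : L - i ≠ 0), mul_zero]
    rw [hsum0] at hlam2root
    have hcl : (c L : ℂ) ≠ 0 := Nat.cast_ne_zero.mpr (by omega)
    exact hcl (by linear_combination -hlam2root)
  have hr2pos : 0 < ‖lam2‖ := norm_pos_iff.mpr hlam2ne0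
  have hr2lt : ‖lam2‖ < lam1 := hdom lam2 hlam2root hlam2ne
  have hqroots : ∀ z : ℂ, q.IsRoot z → ‖z‖ ≤ ‖lam2‖ := by
    intro z hz
    rw [IsRoot] at hz
    have hzp : (charPolyC L c).eval z = 0 := by
      rw [hq, eval_mul, hz, mul_zero]
    by_cases hzlam : z = (lam1:ℂ)
    · exact absurd (hzlam ▸ hz) hqlam
    · exact hsecond z hzp hzlam
  set W : ℕ → ℂ := phi q g with hW
  have hWstep : ∀ n, 1 ≤ n → W (n+1) = (lam1:ℂ) * W n := by
    intro n hn
    have h0 : phi (X - C (lam1:ℂ)) W n = 0 := by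
      rw [hW, ← phi_mul, ← hq]
      exact hrecg n hn
    rw [phi_X_sub_C] at h0
    linear_combination h0
  have hWn : ∀ n, 1 ≤ n → W n = (lam1:ℂ)^(n-1) * W 1 := by
    intro n hn
    induction n, hn using Nat.le_induction with
    | base => simp
    | succ n hn ihn =>
      rw [hWstep n hn, ihn, show n + 1 - 1 = n by omega,
        show (lam1:ℂ)^n = (lam1:ℂ)^(n-1) * (lam1:ℂ) from by
          rw [← pow_succ, show n-1+1 = n by omega]]
      ring
  set aC : ℂ := W 1 / ((lam1:ℂ) * q.eval (lam1:ℂ)) with haC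
  have haW : aC * ((lam1:ℂ) * q.eval (lam1:ℂ)) = W 1 :=
    div_mul_cancel₀ _ (mul_ne_zero hlam1ne hqlam)
  set E : ℕ → ℂ := fun n => g n - aC * (lam1:ℂ)^n with hE
  have hErec : ∀ n, 1 ≤ n → phi q E n = 0 := by
    intro n hn
    have h1 : E = g - aC • (fun m => (lam1:ℂ)^m) := by
      funext m
      simp [hE, smul_eq_mul]
    rw [h1, map_sub, map_smul (phi q) aC]
    show phi q g n - (aC • phi q (fun m => (lam1:ℂ)^m)) n = 0
    rw [Pi.smul_apply, phi_geom, smul_eq_mul, ← hW, hWn n hn, ← haW,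
      show (lam1:ℂ)^n = (lam1:ℂ)^(n-1) * (lam1:ℂ) from by
        rw [← pow_succ, show n-1+1 = n by omega]]
    ring
  obtain ⟨CB, hCBpos, hCB⟩ := decay (‖lam2‖) hr2pos (L-2) q hqmonic
    (by rw [hqdeg]; omega) hqroots E 1 hErec
  have hbound : ∀ n, 1 ≤ n → |(G n : ℝ) - aC.re * lam1 ^ n|
      ≤ CB * (n:ℝ)^(L-2) * ‖lam2‖ ^ n := by
    intro n hn
    have h1 : ((G n : ℝ) - aC.re * lam1 ^ n) = (E n).re := by
      rw [hE]
      show _ = ((G n : ℂ) - aC * (lam1:ℂ)^n).re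
      rw [← Complex.ofReal_pow, Complex.sub_re, Complex.mul_re, Complex.ofReal_re,
        Complex.ofReal_im, Complex.natCast_re]
      ring
    rw [h1]
    calc |(E n).re| ≤ ‖E n‖ := Complex.abs_re_le_norm _
      _ ≤ CB * (n:ℝ)^(L-2) * ‖lam2‖ ^ n := hCB n hn
  have hratio : ‖lam2‖ / lam1 < 1 := by
    rw [div_lt_one hlam1pos]
    exact hr2lt
  have htend0 : Filter.Tendsto
      (fun n : ℕ => CB * ((n:ℝ)^(L-2) * (‖lam2‖ / lam1)^n))
      Filter.atTop (nhds 0) := by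
    have h := (tendsto_pow_const_mul_const_pow_of_lt_one (L-2)
      (le_of_lt (div_pos hr2pos hlam1pos)) hratio).const_mul CB
    simpa using h
  have habs2 : ∀ n : ℕ, 1 ≤ n → |(G n:ℝ)/lam1^n - aC.re|
      ≤ CB * ((n:ℝ)^(L-2) * (‖lam2‖ / lam1)^n) := by
    intro n hn
    have hlp : (0:ℝ) < lam1 ^ n := pow_pos hlam1pos n
    have h1 : (G n:ℝ)/lam1^n - aC.re = ((G n:ℝ) - aC.re * lam1^n)/lam1^n := by
      field_simp
    rw [h1, abs_div, abs_of_pos hlp]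
    calc |(G n:ℝ) - aC.re*lam1^n| / lam1^n
        ≤ (CB * (n:ℝ)^(L-2) * ‖lam2‖^n)/lam1^n :=
          (div_le_div_iff_of_pos_right hlp).mpr (hbound n hn)
      _ = CB * ((n:ℝ)^(L-2) * (‖lam2‖ / lam1)^n) := by
          rw [div_pow]
          ring
  have hdiff : Filter.Tendsto (fun n : ℕ => (G n : ℝ) / lam1 ^ n - aC.re)
      Filter.atTop (nhds 0) := by
    apply tendsto_of_tendsto_of_tendsto_of_le_of_le' (g := fun n : ℕ =>
        -(CB * ((n:ℝ)^(L-2) * (‖lam2‖ / lam1)^n)))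
      (by simpa using htend0.neg) htend0
    · filter_upwards [Filter.eventually_ge_atTop 1] with n hn
      have := habs2 n hn
      have := abs_le.mp this
      linarith [this.1]
    · filter_upwards [Filter.eventually_ge_atTop 1] with n hn
      have := abs_le.mp (habs2 n hn)
      linarith [this.2]
  have htendsto : Filter.Tendsto (fun n => (G n : ℝ) / lam1 ^ n)
      Filter.atTop (nhds aC.re) := by
    have h := hdiff.add_const aC.re
    simpa using h
  have hare : (1:ℝ)/lam1^L ≤ aC.re := by
    apply ge_of_tendsto htendsto
    filter_upwards [Filter.eventually_ge_atTop 1] with n hn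
    have h1 := hkey n hn
    have hlp : (0:ℝ) < lam1 ^ n := pow_pos hlam1pos n
    have hlL : (0:ℝ) < lam1 ^ L := pow_pos hlam1pos L
    rw [div_le_div_iff₀ hlL hlp]
    linarith
  exact ⟨aC.re, CB, lt_of_lt_of_le (div_pos one_pos (pow_pos hlam1pos L)) hare,
    hCBpos, hbound, htendsto⟩
end

section
/- Let {K_n} be a Kangaroo recurrence with ℓ hops of length g. If S is the index set of a legal decomposition of a positive integer and i, i′ ∈ S with i < i′, then i′ − i ≥ g; that is, no legal decomposition has a gap of length less than g between summands. -/
/-- The coefficients of a Kangaroo recurrence with `ℓ` hops of length `g`: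
`c i = 1` for `i = 1, g+1, 2g+1, …, ℓg+1` and `c i = 0` otherwise. -/
def kanC (g ℓ : ℕ) (i : ℕ) : ℕ :=
  if 1 ≤ i ∧ i ≤ ℓ * g + 1 ∧ i % g = 1 % g then 1 else 0

/-- Legality of a coefficient sequence `a_1, …, a_m` (encoded as a list) with respect to a
positive linear recurrence with coefficients `c_1, …, c_L`:
either `m < L` and `a_i = c_i` for all `i`, or the list is
`c_1, …, c_{s-1}, a_s, 0, …, 0` (with `1 ≤ s ≤ L`, `a_s < c_s`, `t ≥ 0` zeros)
followed by a legal (possibly empty) sequence. -/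
inductive IsLegal (L : ℕ) (c : ℕ → ℕ) : List ℕ → Prop
  | short (m : ℕ) (h : m < L) :
      IsLegal L c ((List.range m).map fun i => c (i + 1))
  | long (s t : ℕ) (a : ℕ) (rest : List ℕ)
      (hs1 : 1 ≤ s) (hsL : s ≤ L) (ha : a < c s)
      (hrest : IsLegal L c rest) :
      IsLegal L c
        (((List.range (s - 1)).map fun i => c (i + 1)) ++ a :: (List.replicate t 0 ++ rest))

/-- The indicator list `a_1, …, a_m` of a set `S` of indices, where `a_j = 1` iff
`m + 1 - j ∈ S` (so the list entry `a_1` corresponds to the largest index `m`). -/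
def indList (m : ℕ) (S : Finset ℕ) : List ℕ :=
  (List.range m).map fun j => if m - j ∈ S then 1 else 0

/-- A finite set `S` of indices is legal if all its elements are `≥ 1` and, when `S` is
nonempty, the indicator coefficient list (of length the maximum of `S`) is legal. -/
def IsLegalSet (L : ℕ) (c : ℕ → ℕ) (S : Finset ℕ) : Prop :=
  (∀ i ∈ S, 1 ≤ i) ∧ (S.Nonempty → IsLegal L c (indList (S.sup id) S))

lemma getD_rangeMap (f : ℕ → ℕ) (m j : ℕ) :
    (((List.range m).map f).getD j 0) = if j < m then f j else 0 := by
  split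
  · rename_i h
    rw [List.getD_eq_getElem _ _ (by simpa)]
    simp
  · rw [List.getD_eq_default]
    simpa using by omega

lemma getD_long (c : ℕ → ℕ) (s t a : ℕ) (rest : List ℕ) (j : ℕ) :
    ((((List.range (s - 1)).map fun i => c (i + 1)) ++ a :: (List.replicate t 0 ++ rest)).getD j 0)
      = if j < s - 1 then c (j + 1)
        else if j = s - 1 then a
        else if j < s - 1 + 1 + t then 0
        else rest.getD (j - (s - 1 + 1 + t)) 0 := by
  by_cases h1 : j < s - 1
  · rw [List.getD_append]
    · simp [getD_rangeMap, h1]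
    · simpa
  · rw [List.getD_append_right]
    · simp only [List.length_map, List.length_range]
      by_cases h2 : j = s - 1
      · simp [h2]
      · have h3 : j - (s-1) = (j - (s-1) - 1) + 1 := by omega
        rw [h3]
        simp only [List.getD_cons_succ]
        by_cases h4 : j < s - 1 + 1 + t
        · rw [List.getD_append]
          · simp [h1, h2, h4]
          · simp; omega
        · rw [List.getD_append_right]
          · simp only [List.length_replicate]
            have : j - (s - 1) - 1 - t = j - (s - 1 + 1 + t) := by omega
            simp [this, h1, h2, h4]
          · simp; omega
    · simp; omega

lemma mod_gap {g x y : ℕ} (h : x % g = y % g) (hxy : x < y) : g ≤ y - x := by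
  have hd : g ∣ y - x := (Nat.modEq_iff_dvd' (le_of_lt hxy)).mp h
  exact Nat.le_of_dvd (by omega) hd

lemma kanC_mod {g ℓ i : ℕ} (h : kanC g ℓ i ≠ 0) : i % g = 1 % g := by
  unfold kanC at h
  split at h
  · tauto
  · tauto

lemma legal_gap (g ℓ : ℕ) {l : List ℕ}
    (h : IsLegal (ℓ * g + 1) (kanC g ℓ) l) :
    ∀ j j', j < j' → l.getD j 0 ≠ 0 → l.getD j' 0 ≠ 0 → g ≤ j' - j := by
  induction h with
  | short m hm =>
    intro j j' hjj hj hj'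
    rw [getD_rangeMap] at hj hj'
    split at hj
    · split at hj'
      · have h1 := kanC_mod hj
        have h2 := kanC_mod hj'
        have := mod_gap (h1.trans h2.symm) (by omega)
        omega
      · exact absurd rfl hj'
    · exact absurd rfl hj
  | long s t a rest hs1 hsL ha hrest IH =>
    have hcs : kanC g ℓ s ≠ 0 := by omega
    have hsmod : s % g = 1 % g := kanC_mod hcs
    have haz : a = 0 := by
      unfold kanC at ha; split at ha <;> omega
    intro j j' hjj hj hj'
    rw [getD_long] at hj hj'
    -- characterize j
    have Hj : (j < s - 1 ∧ (j + 1) % g = 1 % g) ∨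
        (s - 1 + 1 + t ≤ j ∧ rest.getD (j - (s - 1 + 1 + t)) 0 ≠ 0) := by
      split at hj
      · exact Or.inl ⟨by assumption, kanC_mod hj⟩
      · split at hj
        · omega
        · split at hj
          · omega
          · right; constructor
            · omega
            · exact hj
    have Hj' : (j' < s - 1 ∧ (j' + 1) % g = 1 % g) ∨
        (s - 1 + 1 + t ≤ j' ∧ rest.getD (j' - (s - 1 + 1 + t)) 0 ≠ 0) := by
      split at hj'
      · exact Or.inl ⟨by assumption, kanC_mod hj'⟩
      · split at hj'
        · omega
        · split at hj'
          · omega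
          · right; constructor
            · omega
            · exact hj'
    rcases Hj with ⟨hj1, hj2⟩ | ⟨hj1, hj2⟩
    · rcases Hj' with ⟨hj'1, hj'2⟩ | ⟨hj'1, hj'2⟩
      · have := mod_gap (hj2.trans hj'2.symm) (by omega)
        omega
      · -- j in prefix, j' in rest
        have := mod_gap (hj2.trans hsmod.symm) (by omega)
        omega
    · rcases Hj' with ⟨hj'1, hj'2⟩ | ⟨hj'1, hj'2⟩
      · omega
      · have := IH (j - (s - 1 + 1 + t)) (j' - (s - 1 + 1 + t)) (by omega) hj2 hj'2
        omega

/-- For a Kangaroo recurrence with `ℓ` hops of length `g`, if `S` is the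
index set of a legal decomposition (of a positive integer) and `i, i' ∈ S` with `i < i'`,
then `i' - i ≥ g`: no legal decomposition has a gap of length less than `g`. -/
theorem kangaroo_no_short_gaps (g ℓ : ℕ) (hg : 1 ≤ g) (hℓ : 1 ≤ ℓ)
    (S : Finset ℕ) (hS : IsLegalSet (ℓ * g + 1) (kanC g ℓ) S)
    (i i' : ℕ) (hi : i ∈ S) (hi' : i' ∈ S) (hlt : i < i') :
    g ≤ i' - i := by
  obtain ⟨hpos, hleg⟩ := hS
  have hne : S.Nonempty := ⟨i, hi⟩
  set m := S.sup id with hm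
  have hil : i ≤ m := Finset.le_sup (f := id) hi
  have hil' : i' ≤ m := Finset.le_sup (f := id) hi'
  have hi1 : 1 ≤ i := hpos i hi
  have hL := hleg hne
  have key := legal_gap g ℓ hL (m - i') (m - i) (by omega)
  have e1 : (indList m S).getD (m - i') 0 ≠ 0 := by
    rw [indList, getD_rangeMap]
    have : m - (m - i') = i' := by omega
    simp [this, hi', show m - i' < m by omega]
  have e2 : (indList m S).getD (m - i) 0 ≠ 0 := by
    rw [indList, getD_rangeMap]
    have : m - (m - i) = i := by omega
    simp [this, hi, show m - i < m by omega]
  have := key e1 e2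
  omega
end

section
/- Let {K_n} be a Kangaroo recurrence with ℓ hops of length g. For every i ≥ 1, the number of index sets S ⊆ {1, …, i} with i ∈ S such that Σ_{r∈S} K_r is a legal decomposition equals K_{i+1} − K_i; equivalently, the positive integers whose legal decomposition has largest summand K_i are exactly the integers in the interval [K_i, K_{i+1}). -/
open Finset

namespace Kangaroo

lemma kanC_le_one (g ℓ r : ℕ) : kanC g ℓ r ≤ 1 := by
  unfold kanC; split <;> simp

lemma kanC_eq_one_iff {g ℓ : ℕ} (hg : 1 ≤ g) {r : ℕ} :
    kanC g ℓ r = 1 ↔ ∃ j, j ≤ ℓ ∧ r = j * g + 1 := by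
  unfold kanC
  split
  · rename_i h
    obtain ⟨h1, h2, h3⟩ := h
    simp only [true_iff]
    have hdvd : g ∣ r - 1 := (Nat.modEq_iff_dvd' h1).mp h3.symm
    obtain ⟨q, hq⟩ := hdvd
    rw [Nat.mul_comm] at hq
    refine ⟨q, ?_, by omega⟩
    have : q * g ≤ ℓ * g := by omega
    exact Nat.le_of_mul_le_mul_right this hg
  · rename_i h
    refine iff_of_false (by omega) ?_
    rintro ⟨j, hj, rfl⟩
    refine h ⟨by omega, by nlinarith, ?_⟩
    rw [Nat.add_comm]
    exact Nat.add_mul_mod_self_right 1 j g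

lemma kanC_eq_zero {g ℓ r : ℕ} (h : kanC g ℓ r ≠ 1) : kanC g ℓ r = 0 := by
  have := kanC_le_one g ℓ r; omega

lemma kanC_one (g ℓ : ℕ) : kanC g ℓ 1 = 1 := by
  unfold kanC; rw [if_pos]; exact ⟨le_refl 1, by omega, rfl⟩

lemma sum_kanC {g ℓ : ℕ} (hg : 1 ≤ g) (m : ℕ) (f : ℕ → ℕ) :
    ∑ r ∈ Icc 1 m, kanC g ℓ r * f r
      = ∑ j ∈ (range (ℓ+1)).filter (fun j => j * g + 1 ≤ m), f (j * g + 1) := by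
  have himg : (Icc 1 m).filter (fun r => kanC g ℓ r = 1)
      = ((range (ℓ+1)).filter (fun j => j * g + 1 ≤ m)).image (fun j => j * g + 1) := by
    ext r
    simp only [mem_filter, mem_Icc, mem_image, mem_range]
    constructor
    · rintro ⟨⟨h1, h2⟩, hc⟩
      obtain ⟨j, hj, rfl⟩ := (kanC_eq_one_iff hg).mp hc
      exact ⟨j, ⟨by omega, h2⟩, rfl⟩
    · rintro ⟨j, ⟨hj, hjm⟩, rfl⟩
      exact ⟨⟨by omega, hjm⟩, (kanC_eq_one_iff hg).mpr ⟨j, by omega, rfl⟩⟩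
  have hstep : ∑ r ∈ Icc 1 m, kanC g ℓ r * f r
      = ∑ r ∈ (Icc 1 m).filter (fun r => kanC g ℓ r = 1), f r := by
    rw [Finset.sum_filter]
    apply Finset.sum_congr rfl
    intro r _
    by_cases h : kanC g ℓ r = 1
    · simp [h]
    · simp [h, kanC_eq_zero h]
  rw [hstep, himg, Finset.sum_image]
  intro a _ b _ hab
  have : a * g = b * g := by simp only at hab; omega
  exact Nat.eq_of_mul_eq_mul_right hg this

/-- The prefix set `{i, i-g, …, i-(j-1)g}`. -/
def kanP (g i j : ℕ) : Finset ℕ := (range j).image fun j' => i - j' * g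

lemma mem_kanP {g i j x : ℕ} : x ∈ kanP g i j ↔ ∃ j' < j, i - j' * g = x := by
  simp [kanP]

lemma sum_kanP {g i j : ℕ} (hg : 1 ≤ g) (hj : ∀ j' < j, j' * g < i) (K : ℕ → ℕ) :
    ∑ x ∈ kanP g i j, K x = ∑ j' ∈ range j, K (i - j' * g) := by
  rw [kanP, Finset.sum_image]
  intro a ha b hb hab
  simp only [Finset.mem_coe, mem_range] at ha hb
  simp only at hab
  have ha' := hj a ha
  have hb' := hj b hb
  have : a * g = b * g := by omega
  exact Nat.eq_of_mul_eq_mul_right hg this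

lemma card_kanP {g i j : ℕ} (hg : 1 ≤ g) (hj : ∀ j' < j, j' * g < i) :
    (kanP g i j).card = j := by
  rw [kanP, Finset.card_image_of_injOn, Finset.card_range]
  intro a ha b hb hab
  simp only [coe_range, Set.mem_Iio] at ha hb
  simp only at hab
  have ha' := hj a ha
  have hb' := hj b hb
  have : a * g = b * g := by omega
  exact Nat.eq_of_mul_eq_mul_right hg this

section Kfacts

variable {g ℓ : ℕ} {K : ℕ → ℕ}

lemma K_succ_eq (hg : 1 ≤ g)
    (hKsmall : ∀ n, 1 ≤ n → n < ℓ * g + 1 →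
      K (n + 1) = (∑ r ∈ Icc 1 n, kanC g ℓ r * K (n + 1 - r)) + 1)
    (hKrec : ∀ n, ℓ * g + 1 ≤ n →
      K (n + 1) = ∑ r ∈ Icc 1 (ℓ * g + 1), kanC g ℓ r * K (n + 1 - r))
    (i : ℕ) (hi : 1 ≤ i) :
    K (i+1) = (∑ j ∈ (range (ℓ+1)).filter (fun j => j * g + 1 ≤ i), K (i - j * g))
      + (if i ≤ ℓ * g then 1 else 0) := by
  by_cases hcase : i ≤ ℓ * g
  · rw [if_pos hcase, hKsmall i hi (by omega), sum_kanC hg]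
    congr 1
    apply Finset.sum_congr rfl
    intro j hj
    congr 1
    simp only [mem_filter, mem_range] at hj
    omega
  · rw [if_neg hcase, hKrec i (by omega), sum_kanC hg, Nat.add_zero]
    have h1 : (range (ℓ+1)).filter (fun j => j * g + 1 ≤ ℓ * g + 1) = range (ℓ+1) := by
      apply Finset.filter_true_of_mem
      intro j hj
      simp only [mem_range] at hj
      have : j * g ≤ ℓ * g := Nat.mul_le_mul_right g (by omega)
      omega
    have h2 : (range (ℓ+1)).filter (fun j => j * g + 1 ≤ i) = range (ℓ+1) := by
      apply Finset.filter_true_of_mem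
      intro j hj
      simp only [mem_range] at hj
      have : j * g ≤ ℓ * g := Nat.mul_le_mul_right g (by omega)
      omega
    rw [h1, h2]
    apply Finset.sum_congr rfl
    intro j hj
    congr 1
    omega

lemma K_le_succ (hg : 1 ≤ g)
    (hKsmall : ∀ n, 1 ≤ n → n < ℓ * g + 1 →
      K (n + 1) = (∑ r ∈ Icc 1 n, kanC g ℓ r * K (n + 1 - r)) + 1)
    (hKrec : ∀ n, ℓ * g + 1 ≤ n →
      K (n + 1) = ∑ r ∈ Icc 1 (ℓ * g + 1), kanC g ℓ r * K (n + 1 - r))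
    (i : ℕ) (hi : 1 ≤ i) : K i ≤ K (i + 1) := by
  rw [K_succ_eq hg hKsmall hKrec i hi]
  have hmem : 0 ∈ (range (ℓ+1)).filter (fun j => j * g + 1 ≤ i) := by
    simp only [mem_filter, mem_range]
    omega
  have := Finset.single_le_sum (f := fun j => K (i - j * g)) (fun j _ => Nat.zero_le _) hmem
  simp only [Nat.zero_mul, Nat.sub_zero] at this
  omega

lemma K_mono (hg : 1 ≤ g)
    (hKsmall : ∀ n, 1 ≤ n → n < ℓ * g + 1 →
      K (n + 1) = (∑ r ∈ Icc 1 n, kanC g ℓ r * K (n + 1 - r)) + 1)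
    (hKrec : ∀ n, ℓ * g + 1 ≤ n →
      K (n + 1) = ∑ r ∈ Icc 1 (ℓ * g + 1), kanC g ℓ r * K (n + 1 - r))
    {a b : ℕ} (ha : 1 ≤ a) (hab : a ≤ b) : K a ≤ K b := by
  induction b with
  | zero => omega
  | succ n ih =>
    rcases Nat.lt_or_ge a (n+1) with h | h
    · exact le_trans (ih (by omega)) (K_le_succ hg hKsmall hKrec n (by omega))
    · have : a = n + 1 := by omega
      subst this; rfl

lemma K_pos (hg : 1 ≤ g) (hK1 : K 1 = 1)
    (hKsmall : ∀ n, 1 ≤ n → n < ℓ * g + 1 →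
      K (n + 1) = (∑ r ∈ Icc 1 n, kanC g ℓ r * K (n + 1 - r)) + 1)
    (hKrec : ∀ n, ℓ * g + 1 ≤ n →
      K (n + 1) = ∑ r ∈ Icc 1 (ℓ * g + 1), kanC g ℓ r * K (n + 1 - r))
    {n : ℕ} (hn : 1 ≤ n) : 1 ≤ K n := by
  have := K_mono hg hKsmall hKrec (le_refl 1) hn
  omega

end Kfacts
section Lists

variable {L : ℕ} {c : ℕ → ℕ}

lemma isLegal_nil (hL : 1 ≤ L) : IsLegal L c [] := by
  have := IsLegal.short (L := L) (c := c) 0 hL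
  simpa using this

lemma isLegal_replicate_append (hL : 1 ≤ L) (hc1 : 1 ≤ c 1) (k : ℕ) {l : List ℕ}
    (h : IsLegal L c l) : IsLegal L c (List.replicate k 0 ++ l) := by
  cases k with
  | zero => simpa using h
  | succ k =>
    have := IsLegal.long (L := L) (c := c) 1 k 0 l le_rfl hL (by omega) h
    simpa [List.replicate_succ] using this

lemma isLegal_dropZeros (hc1 : c 1 = 1) {l : List ℕ} (h : IsLegal L c l) :
    ∃ k l', l = List.replicate k 0 ++ l' ∧
      (l' = [] ∨ ∃ w, l' = 1 :: w ∧ IsLegal L c l') := by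
  induction h with
  | short m hm =>
    rcases Nat.eq_zero_or_pos m with rfl | hm1
    · exact ⟨0, [], by simp, Or.inl rfl⟩
    · refine ⟨0, _, by simp, Or.inr ⟨?_, ?_, IsLegal.short m hm⟩⟩
      · exact (List.map (fun i => c (i + 1)) (List.map Nat.succ (List.range (m - 1))))
      · obtain ⟨m', rfl⟩ : ∃ m', m = m' + 1 := ⟨m - 1, by omega⟩
        rw [List.range_succ_eq_map, List.map_cons, hc1]
        simp
  | long s t a rest hs1 hsL ha hrest ih =>
    rcases Nat.lt_or_ge s 2 with hs2 | hs2
    · -- s = 1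
      have hs : s = 1 := by omega
      subst hs
      have ha0 : a = 0 := by rw [hc1] at ha; omega
      subst ha0
      obtain ⟨k, l', hl, hl'⟩ := ih
      refine ⟨1 + t + k, l', ?_, hl'⟩
      rw [hl]
      have hrep : List.replicate (1 + t + k) (0:ℕ)
          = 0 :: (List.replicate t 0 ++ List.replicate k 0) := by
        rw [show 1 + t + k = (t + k) + 1 from by omega, List.replicate_succ,
          List.replicate_add]
      rw [hrep]
      simp only [List.nil_append, List.cons_append, List.append_assoc,
        Nat.sub_self, List.range_zero, List.map_nil]
    · refine ⟨0, _, by simp, Or.inr ⟨?_, ?_, IsLegal.long s t a rest hs1 hsL ha hrest⟩⟩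
      · exact (List.map (fun i => c (i + 1)) (List.map Nat.succ (List.range (s - 2))))
          ++ a :: (List.replicate t 0 ++ rest)
      · rw [show s - 1 = (s - 2) + 1 from by omega]
        rw [List.range_succ_eq_map, List.map_cons, hc1]
        simp

lemma indList_length (m : ℕ) (S : Finset ℕ) : (indList m S).length = m := by
  simp [indList]

lemma indList_getElem (m : ℕ) (S : Finset ℕ) (j : ℕ) (hj : j < m) :
    (indList m S)[j]'(by rw [indList_length]; exact hj)
      = if m - j ∈ S then 1 else 0 := by
  simp [indList]

end Lists

section Char

lemma getElem_block_left {f : ℕ → ℕ} {rest : List ℕ} {p z r : ℕ} (hr : r < p)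
    {h : r < (List.map f (List.range p) ++ (List.replicate z 0 ++ rest)).length} :
    (List.map f (List.range p) ++ (List.replicate z 0 ++ rest))[r]'h = f r := by
  rw [List.getElem_append_left (by simpa using hr), List.getElem_map, List.getElem_range]

lemma getElem_block_mid {f : ℕ → ℕ} {rest : List ℕ} {p z r : ℕ} (hr : r < z)
    {h : p + r < (List.map f (List.range p) ++ (List.replicate z 0 ++ rest)).length} :
    (List.map f (List.range p) ++ (List.replicate z 0 ++ rest))[p + r]'h = 0 := by
  rw [List.getElem_append_right (by simp)]
  rw [List.getElem_append_left (by
    simp only [List.length_replicate, List.length_map, List.length_range]; omega)]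
  rw [List.getElem_replicate]

lemma getElem_block_right {f : ℕ → ℕ} {rest : List ℕ} {p z q : ℕ} (hq : q < rest.length)
    {h : p + z + q < (List.map f (List.range p) ++ (List.replicate z 0 ++ rest)).length} :
    (List.map f (List.range p) ++ (List.replicate z 0 ++ rest))[p + z + q]'h
      = rest[q]'hq := by
  rw [List.getElem_append_right (by simp only [List.length_map, List.length_range]; omega)]
  rw [List.getElem_append_right (by
    simp only [List.length_replicate, List.length_map, List.length_range]; omega)]
  simp only [List.length_replicate, List.length_map, List.length_range]
  congr 1
  omega

variable {g ℓ : ℕ}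

/-- The full prefix set. -/
def kanF (g i : ℕ) : Finset ℕ := kanP g i ((i + g - 1) / g)

lemma ceil_lt_iff (hg : 1 ≤ g) (i j' : ℕ) : j' < (i + g - 1) / g ↔ j' * g < i := by
  have h1 : j' + 1 ≤ (i + g - 1) / g ↔ (j' + 1) * g ≤ i + g - 1 :=
    Nat.le_div_iff_mul_le (by omega)
  have h2 : (j' + 1) * g = j' * g + g := by ring
  omega

lemma mem_kanF (hg : 1 ≤ g) {i x : ℕ} :
    x ∈ kanF g i ↔ ∃ j', j' * g < i ∧ i - j' * g = x := by
  rw [kanF, mem_kanP]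
  constructor
  · rintro ⟨j', hj', rfl⟩
    exact ⟨j', (ceil_lt_iff hg i j').mp hj', rfl⟩
  · rintro ⟨j', hj', rfl⟩
    exact ⟨j', (ceil_lt_iff hg i j').mpr hj', rfl⟩

lemma sup_mem {S : Finset ℕ} (h : S.Nonempty) : S.sup id ∈ S := by
  obtain ⟨b, hb, he⟩ := Finset.exists_mem_eq_sup S h id
  rw [he]; exact hb

lemma le_sup_of_mem {S : Finset ℕ} {x : ℕ} (h : x ∈ S) : x ≤ S.sup id :=
  Finset.le_sup (f := id) h

/-- Entry extraction: if `indList i S = prefix ++ replicate z 0 ++ rest` with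
`prefix = map (fun r => c (r+1)) (range p)`, read off membership of `S`. -/
lemma char_fwd (hg : 1 ≤ g) (hℓ : 1 ≤ ℓ) {i : ℕ} {S : Finset ℕ} (hi : 1 ≤ i)
    (hS : S ⊆ Icc 1 i) (hiS : i ∈ S)
    (hleg : IsLegal (ℓ*g+1) (kanC g ℓ) (indList i S)) :
    (i ≤ ℓ * g ∧ S = kanF g i) ∨
    ∃ j, 1 ≤ j ∧ j ≤ ℓ ∧ j * g < i ∧ ∃ S', S' ⊆ Icc 1 (i - j * g - 1) ∧
      IsLegalSet (ℓ*g+1) (kanC g ℓ) S' ∧ S = kanP g i j ∪ S' := by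
  generalize hl : indList i S = l at hleg
  induction hleg with
  | short m hm =>
    left
    have hlen : i = m := by
      have := congrArg List.length hl
      simpa [indList_length] using this
    subst hlen
    refine ⟨by omega, ?_⟩
    have key : ∀ x, 1 ≤ x → x ≤ i → (x ∈ S ↔ kanC g ℓ (i - x + 1) = 1) := by
      intro x hx1 hxi
      have hr : i - x < i := by omega
      have h1 := indList_getElem i S (i - x) hr
      have h2 := List.getElem_of_eq hl (by rw [indList_length]; exact hr)
      rw [indList_getElem i S (i - x) hr] at h2
      rw [List.getElem_map, List.getElem_range] at h2
      have hix : i - (i - x) = x := by omega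
      rw [hix] at h2
      have hc := kanC_le_one g ℓ (i - x + 1)
      constructor
      · intro hmem; rw [if_pos hmem] at h2; omega
      · intro hc1; rw [hc1] at h2
        by_contra hmem; rw [if_neg hmem] at h2; omega
    ext x
    constructor
    · intro hx
      have hx' := hS hx
      simp only [mem_Icc] at hx'
      have := (key x hx'.1 hx'.2).mp hx
      obtain ⟨j', hj', hje⟩ := (kanC_eq_one_iff hg).mp this
      rw [mem_kanF hg]
      exact ⟨j', by omega, by omega⟩
    · intro hx
      rw [mem_kanF hg] at hx
      obtain ⟨j', hj', rfl⟩ := hx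
      refine (key _ (by omega) (by omega)).mpr ?_
      rw [kanC_eq_one_iff hg]
      have hjl : j' ≤ ℓ := by
        by_contra hc
        have : ℓ * g ≤ j' * g := Nat.mul_le_mul_right g (by omega)
        omega
      exact ⟨j', hjl, by omega⟩
  | long s t a rest hs1 hsL ha hrest ih =>
    clear ih
    right
    have hcs : kanC g ℓ s = 1 := by have := kanC_le_one g ℓ s; omega
    have ha0 : a = 0 := by omega
    subst ha0
    obtain ⟨j, hjℓ, hsj⟩ := (kanC_eq_one_iff hg).mp hcs
    subst hsj
    have hl2 : indList i S =
        ((List.range (j * g)).map fun r => kanC g ℓ (r + 1)) ++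
          (List.replicate (t+1) 0 ++ rest) := by
      rw [hl]
      simp only [Nat.add_sub_cancel, List.replicate_succ, List.cons_append,
        List.nil_append, List.append_assoc]
    clear hl
    have hlen : i = j * g + ((t + 1) + rest.length) := by
      have := congrArg List.length hl2
      simpa [indList_length] using this
    -- j ≥ 1
    have hj1 : 1 ≤ j := by
      by_contra hj0
      have hj0' : j = 0 := by omega
      subst hj0'
      have hr : (0:ℕ) < i := by omega
      have h2 := List.getElem_of_eq hl2 (by rw [indList_length]; exact hr)
      rw [indList_getElem i S 0 hr] at h2
      simp only [Nat.zero_mul, List.range_zero, List.map_nil, List.nil_append] at h2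
      rw [List.getElem_append_left (by simp only [List.length_replicate]; omega),
        List.getElem_replicate] at h2
      rw [if_pos (by simpa using hiS)] at h2
      exact one_ne_zero h2
    have hjgi : j * g < i := by omega
    obtain ⟨M, hM⟩ : ∃ M, rest.length = M := ⟨_, rfl⟩
    have hMi : M = i - j * g - 1 - t := by omega
    have entry : ∀ r (hr : r < i), (if i - r ∈ S then 1 else 0) =
        (((List.range (j * g)).map fun r => kanC g ℓ (r + 1)) ++
          (List.replicate (t+1) 0 ++ rest))[r]'(by
            simp only [List.length_append, List.length_map, List.length_range,
              List.length_replicate]; omega) := by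
      intro r hr
      rw [← indList_getElem i S r hr]
      exact List.getElem_of_eq hl2 _
    have zoneA : ∀ x, i - j * g + 1 ≤ x → x ≤ i → (x ∈ S ↔ kanC g ℓ (i - x + 1) = 1) := by
      intro x hx1 hx2
      have hr : i - x < i := by omega
      have h2 := entry (i - x) hr
      rw [getElem_block_left (by omega)] at h2
      have hix : i - (i - x) = x := by omega
      rw [hix] at h2
      have hc := kanC_le_one g ℓ (i - x + 1)
      constructor
      · intro hmem; rw [if_pos hmem] at h2; omega
      · intro hc1; rw [hc1] at h2
        by_contra hmem; rw [if_neg hmem] at h2; omega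
    have zoneB : ∀ x, M + 1 ≤ x → x ≤ i - j * g → x ∉ S := by
      intro x hx1 hx2
      have h2 := entry (j * g + (i - x - j * g)) (by omega)
      rw [getElem_block_mid (by omega)] at h2
      intro hmem
      have hix : i - (j * g + (i - x - j * g)) = x := by omega
      rw [hix, if_pos hmem] at h2
      exact one_ne_zero h2
    classical
    set S' : Finset ℕ := S.filter (fun x => x ≤ M) with hS'_def
    have hS'mem : ∀ x, x ∈ S' ↔ x ∈ S ∧ x ≤ M := by
      intro x; simp [hS'_def]
    have hrestEq : rest = indList M S' := by
      apply List.ext_getElem (by simp [indList_length, hM])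
      intro r h1 h2
      have hrM : r < M := by omega
      rw [indList_getElem M S' r hrM]
      have hidx : j * g + (t + 1) + r < i := by omega
      have h3 := entry (j * g + (t + 1) + r) hidx
      rw [getElem_block_right (hq := by omega)] at h3
      have h4 : rest[r]'h1 = (if i - (j * g + (t + 1) + r) ∈ S then 1 else 0) := h3.symm
      rw [h4]
      apply if_congr _ rfl rfl
      rw [show i - (j * g + (t + 1) + r) = M - r from by omega, hS'mem]
      constructor
      · intro h; exact ⟨h, by omega⟩
      · intro h; exact h.1
    have hreste : ∀ r (hr : r < M), rest[r]'(by omega) = if M - r ∈ S' then 1 else 0 := by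
      intro r hr
      rw [List.getElem_of_eq hrestEq]
      exact indList_getElem M S' r hr
    have hS'legal : IsLegalSet (ℓ*g+1) (kanC g ℓ) S' := by
      constructor
      · intro x hx
        have := hS ((hS'mem x).mp hx).1
        simp only [mem_Icc] at this
        exact this.1
      · intro hne
        have hm'S : S'.sup id ∈ S' := sup_mem hne
        obtain ⟨m', hm'⟩ : ∃ m', S'.sup id = m' := ⟨_, rfl⟩
        rw [hm'] at hm'S ⊢
        have hm'M : m' ≤ M := ((hS'mem m').mp hm'S).2
        have hm'1 : 1 ≤ m' := by
          have := hS ((hS'mem m').mp hm'S).1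
          simp only [mem_Icc] at this
          exact this.1
        have hsup' : ∀ x ∈ S', x ≤ m' := by
          intro x hx
          have := le_sup_of_mem hx
          omega
        obtain ⟨k, l', hkl, hcase⟩ := isLegal_dropZeros (kanC_one g ℓ) hrest
        have hone : rest[M - m']'(by omega) = 1 := by
          rw [hreste (M - m') (by omega)]
          rw [if_pos]
          rw [show M - (M - m') = m' from by omega]
          exact hm'S
        rcases hcase with rfl | ⟨w, hw, hwleg⟩
        · exfalso
          have hlk : k = M := by
            have := congrArg List.length hkl
            simp only [List.length_append, List.length_replicate, List.length_nil] at this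
            omega
          have e5 : rest[M - m']'(by omega) = 0 := by
            rw [List.getElem_of_eq hkl, List.getElem_append_left
              (by simp only [List.length_replicate]; omega), List.getElem_replicate]
          exact zero_ne_one (e5.symm.trans hone)
        · subst hw
          have hklen : k + (w.length + 1) = M := by
            have := congrArg List.length hkl
            simp only [List.length_append, List.length_replicate, List.length_cons] at this
            omega
          have hk1 : k ≤ M - m' := by
            by_contra hk
            have e5 : rest[M - m']'(by omega) = 0 := by
              rw [List.getElem_of_eq hkl, List.getElem_append_left
                (by simp only [List.length_replicate]; omega), List.getElem_replicate]
            exact zero_ne_one (e5.symm.trans hone)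
          have hk2 : M - m' ≤ k := by
            have hrk : rest[k]'(by omega) = 1 := by
              rw [List.getElem_of_eq hkl, List.getElem_append_right
                (by simp only [List.length_replicate]; omega)]
              simp
            have hrk2 := (hreste k (by omega)).symm.trans hrk
            have hmem : M - k ∈ S' := by
              by_contra hmem
              rw [if_neg hmem] at hrk2
              exact zero_ne_one hrk2
            have := hsup' _ hmem
            omega
          have hkeq : k = M - m' := by omega
          have hfin : (1 :: w) = indList m' S' := by
            apply List.ext_getElem (by simp only [List.length_cons, indList_length]; omega)
            intro r h1 h2
            have hrm' : r < m' := by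
              simp only [indList_length] at h2
              exact h2
            rw [indList_getElem m' S' r hrm']
            have hkr : k + r < M := by omega
            have e1 : rest[k + r]'(by omega) = (1 :: w)[r]'h1 := by
              rw [List.getElem_of_eq hkl, List.getElem_append_right
                (by simp only [List.length_replicate]; omega)]
              congr 1
              simp only [List.length_replicate]
              omega
            have e3 : (1 :: w)[r]'h1 = (if M - (k + r) ∈ S' then 1 else 0) :=
              e1.symm.trans (hreste (k + r) hkr)
            rw [e3, show M - (k + r) = m' - r from by omega]
          rw [← hfin]
          exact hwleg
    refine ⟨j, hj1, hjℓ, hjgi, S', ?_, hS'legal, ?_⟩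
    · intro x hx
      rw [hS'mem] at hx
      have := hS hx.1
      simp only [mem_Icc] at this ⊢
      omega
    · ext x
      simp only [Finset.mem_union, mem_kanP, hS'mem]
      constructor
      · intro hx
        have hxb := hS hx
        simp only [mem_Icc] at hxb
        by_cases hxM : x ≤ M
        · exact Or.inr ⟨hx, hxM⟩
        · by_cases hxg : x ≤ i - j * g
          · exact absurd hx (zoneB x (by omega) hxg)
          · left
            have hc1 := (zoneA x (by omega) hxb.2).mp hx
            obtain ⟨j', hj'ℓ, hj'e⟩ := (kanC_eq_one_iff hg).mp hc1
            have hj'g : j' * g = i - x := by omega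
            have hj'j : j' < j := by
              by_contra hc
              have : j * g ≤ j' * g := Nat.mul_le_mul_right g (by omega)
              omega
            exact ⟨j', hj'j, by omega⟩
      · rintro (⟨j', hj'j, rfl⟩ | ⟨hx, _⟩)
        · have hgle : j' * g + g ≤ j * g := by
            have h1 : (j' + 1) * g ≤ j * g := Nat.mul_le_mul_right g (by omega)
            have h2 : (j' + 1) * g = j' * g + g := by ring
            omega
          refine (zoneA _ (by omega) (by omega)).mpr ?_
          rw [show i - (i - j' * g) + 1 = j' * g + 1 from by omega]
          exact (kanC_eq_one_iff hg).mpr ⟨j', by omega, rfl⟩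
        · exact hx

lemma sup_eq_top {i : ℕ} {S : Finset ℕ} (hiS : i ∈ S) (hS : S ⊆ Icc 1 i) :
    S.sup id = i :=
  le_antisymm (Finset.sup_le fun x hx => (mem_Icc.mp (hS hx)).2) (le_sup_of_mem hiS)

lemma char_bwd_full (hg : 1 ≤ g) (hℓ : 1 ≤ ℓ) {i : ℕ} (hi : 1 ≤ i) (hiL : i ≤ ℓ * g) :
    kanF g i ⊆ Icc 1 i ∧ i ∈ kanF g i ∧ IsLegalSet (ℓ*g+1) (kanC g ℓ) (kanF g i) := by
  have hsub : kanF g i ⊆ Icc 1 i := by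
    intro x hx
    rw [mem_kanF hg] at hx
    obtain ⟨j', hj', rfl⟩ := hx
    simp only [mem_Icc]
    omega
  have hmem : i ∈ kanF g i := by
    rw [mem_kanF hg]
    exact ⟨0, by omega, by omega⟩
  refine ⟨hsub, hmem, ?_, ?_⟩
  · intro x hx
    have := hsub hx
    simp only [mem_Icc] at this
    exact this.1
  · intro _
    rw [sup_eq_top hmem hsub]
    have hList : indList i (kanF g i) = (List.range i).map fun r => kanC g ℓ (r + 1) := by
      apply List.ext_getElem (by simp [indList_length])
      intro r h1 h2
      have hri : r < i := by simpa [indList_length] using h1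
      rw [indList_getElem i (kanF g i) r hri]
      rw [List.getElem_map, List.getElem_range]
      by_cases hmem2 : i - r ∈ kanF g i
      · rw [if_pos hmem2]
        rw [mem_kanF hg] at hmem2
        obtain ⟨j', hj', hj'e⟩ := hmem2
        have : j' * g = r := by omega
        symm
        rw [kanC_eq_one_iff hg]
        refine ⟨j', ?_, by omega⟩
        by_contra hc
        have : ℓ * g ≤ j' * g := Nat.mul_le_mul_right g (by omega)
        omega
      · rw [if_neg hmem2]
        by_contra hc
        have hc1 : kanC g ℓ (r + 1) = 1 := by
          have := kanC_le_one g ℓ (r + 1)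
          omega
        obtain ⟨j', hj', hj'e⟩ := (kanC_eq_one_iff hg).mp hc1
        refine hmem2 ((mem_kanF hg).mpr ⟨j', by omega, by omega⟩)
    rw [hList]
    exact IsLegal.short i (by omega)

lemma char_bwd_j (hg : 1 ≤ g) (hℓ : 1 ≤ ℓ) {i j : ℕ} (hi : 1 ≤ i)
    (hj1 : 1 ≤ j) (hjℓ : j ≤ ℓ) (hjgi : j * g < i) {S' : Finset ℕ}
    (hS'sub : S' ⊆ Icc 1 (i - j * g - 1))
    (hS'leg : IsLegalSet (ℓ*g+1) (kanC g ℓ) S') :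
    kanP g i j ∪ S' ⊆ Icc 1 i ∧ i ∈ kanP g i j ∪ S' ∧
      IsLegalSet (ℓ*g+1) (kanC g ℓ) (kanP g i j ∪ S') := by
  have hPel : ∀ x ∈ kanP g i j, i - j * g + g ≤ x ∧ x ≤ i := by
    intro x hx
    rw [mem_kanP] at hx
    obtain ⟨j', hj', rfl⟩ := hx
    have h1 : (j' + 1) * g ≤ j * g := Nat.mul_le_mul_right g (by omega)
    have h2 : (j' + 1) * g = j' * g + g := by ring
    omega
  have hsub : kanP g i j ∪ S' ⊆ Icc 1 i := by
    intro x hx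
    rw [Finset.mem_union] at hx
    rcases hx with hx | hx
    · have := hPel x hx
      simp only [mem_Icc]
      omega
    · have := hS'sub hx
      simp only [mem_Icc] at this ⊢
      omega
  have hmem : i ∈ kanP g i j ∪ S' := by
    rw [Finset.mem_union, mem_kanP]
    exact Or.inl ⟨0, by omega, by omega⟩
  have hS'el : ∀ x ∈ S', 1 ≤ x ∧ x ≤ i - j * g - 1 := by
    intro x hx
    have := hS'sub hx
    simpa [mem_Icc] using this
  refine ⟨hsub, hmem, ?_, ?_⟩
  · intro x hx
    have := hsub hx
    simp only [mem_Icc] at this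
    exact this.1
  · intro _
    rw [sup_eq_top hmem hsub]
    obtain ⟨m', hm'⟩ : ∃ m', S'.sup id = m' := ⟨_, rfl⟩
    have hm'b : m' ≤ i - j * g - 1 := by
      rw [← hm']
      apply Finset.sup_le
      intro x hx
      exact (hS'el x hx).2
    have hrest : IsLegal (ℓ*g+1) (kanC g ℓ) (indList m' S') := by
      rcases Finset.eq_empty_or_nonempty S' with rfl | hne
      · have : m' = 0 := by simp [← hm']
        subst this
        have : indList 0 (∅ : Finset ℕ) = [] := by simp [indList]
        rw [this]
        exact isLegal_nil (by omega)
      · rw [← hm']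
        exact hS'leg.2 hne
    have hm'mem : ∀ x, x ∈ S' → x ≤ m' := by
      intro x hx
      rw [← hm']
      exact le_sup_of_mem hx
    have hm'in : S'.Nonempty → m' ∈ S' := by
      intro hne
      rw [← hm']
      exact sup_mem hne
    obtain ⟨t, ht⟩ : ∃ t, i - j * g - 1 - m' = t := ⟨_, rfl⟩
    have hList : indList i (kanP g i j ∪ S') =
        ((List.range (j * g)).map fun r => kanC g ℓ (r + 1)) ++
          (List.replicate (t + 1) 0 ++ indList m' S') := by
      have hm'0 : S'.Nonempty ∨ m' = 0 := by
        rcases Finset.eq_empty_or_nonempty S' with rfl | hne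
        · right; simp [← hm']
        · left; exact hne
      have hlen2 : j * g + (t + 1) + m' = i := by omega
      apply List.ext_getElem (by
        simp only [indList_length, List.length_append, List.length_map,
          List.length_range, List.length_replicate]
        omega)
      intro r h1 h2
      have hri : r < i := by simpa [indList_length] using h1
      rw [indList_getElem i _ r hri]
      by_cases hA : r < j * g
      · rw [getElem_block_left hA]
        by_cases hmem2 : i - r ∈ kanP g i j ∪ S'
        · rw [if_pos hmem2]
          rw [Finset.mem_union] at hmem2
          rcases hmem2 with hx | hx
          · rw [mem_kanP] at hx
            obtain ⟨j', hj', hj'e⟩ := hx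
            have hj'r : j' * g = r := by
              have h1' : (j' + 1) * g ≤ j * g := Nat.mul_le_mul_right g (by omega)
              have h2' : (j' + 1) * g = j' * g + g := by ring
              omega
            symm
            rw [kanC_eq_one_iff hg]
            exact ⟨j', by omega, by omega⟩
          · exfalso
            have := hS'el _ hx
            omega
        · rw [if_neg hmem2]
          by_contra hc
          have hc1 : kanC g ℓ (r + 1) = 1 := by
            have := kanC_le_one g ℓ (r + 1)
            omega
          obtain ⟨j', hj', hj'e⟩ := (kanC_eq_one_iff hg).mp hc1
          have hj'r : j' * g = r := by omega
          have hj'j : j' < j := by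
            by_contra hcc
            have : j * g ≤ j' * g := Nat.mul_le_mul_right g (by omega)
            omega
          exact hmem2 (Finset.mem_union_left _ (mem_kanP.mpr ⟨j', hj'j, by omega⟩))
      · by_cases hB : r < j * g + (t + 1)
        · have e : (((List.range (j * g)).map fun r => kanC g ℓ (r + 1)) ++
              (List.replicate (t + 1) 0 ++ indList m' S'))[r]'h2
              = (((List.range (j * g)).map fun r => kanC g ℓ (r + 1)) ++
              (List.replicate (t + 1) 0 ++ indList m' S'))[j * g + (r - j * g)]'(by
                simp only [List.length_append, List.length_map, List.length_range,
                  List.length_replicate, indList_length] at h2 ⊢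
                omega) := by
            congr 1
            omega
          rw [e, getElem_block_mid (by omega)]
          rw [if_neg]
          intro hmem2
          rw [Finset.mem_union] at hmem2
          rcases hmem2 with hx | hx
          · have := hPel _ hx
            omega
          · have h3 := hS'el _ hx
            have h4 := hm'mem _ hx
            omega
        · have hq : r - j * g - (t + 1) < (indList m' S').length := by
            simp only [indList_length]
            omega
          have e : (((List.range (j * g)).map fun r => kanC g ℓ (r + 1)) ++
              (List.replicate (t + 1) 0 ++ indList m' S'))[r]'h2
              = (((List.range (j * g)).map fun r => kanC g ℓ (r + 1)) ++
              (List.replicate (t + 1) 0 ++ indList m' S'))[j * g + (t + 1) + (r - j * g - (t + 1))]'(by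
                simp only [List.length_append, List.length_map, List.length_range,
                  List.length_replicate, indList_length] at h2 ⊢
                omega) := by
            congr 1
            omega
          rw [e, getElem_block_right (hq := hq)]
          rw [indList_getElem m' S' _ (by simpa [indList_length] using hq)]
          have hir : i - r = m' - (r - j * g - (t + 1)) := by omega
          rw [hir]
          apply if_congr _ rfl rfl
          rw [Finset.mem_union]
          constructor
          · rintro (hx | hx)
            · exfalso
              have := hPel _ hx
              omega
            · exact hx
          · exact fun hx => Or.inr hx
    rw [hList]
    have hfinal := IsLegal.long (L := ℓ*g+1) (c := kanC g ℓ) (j * g + 1) t 0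
      (indList m' S') (by omega)
      (by have : j * g ≤ ℓ * g := Nat.mul_le_mul_right g hjℓ; omega)
      (by rw [(kanC_eq_one_iff hg).mpr ⟨j, hjℓ, rfl⟩]; omega)
      hrest
    have hshape : (((List.range (j * g + 1 - 1)).map fun r => kanC g ℓ (r + 1)) ++
        (0 : ℕ) :: (List.replicate t 0 ++ indList m' S'))
        = (((List.range (j * g)).map fun r => kanC g ℓ (r + 1)) ++
          (List.replicate (t + 1) 0 ++ indList m' S')) := by
      simp only [Nat.add_sub_cancel, List.replicate_succ, List.cons_append,
        List.nil_append, List.append_assoc]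
    rw [← hshape]
    exact hfinal

end Char

section Counting

variable {g ℓ : ℕ}

open Classical in
/-- Legal sets with top element `i`. -/
noncomputable def LTF (g ℓ i : ℕ) : Finset (Finset ℕ) :=
  ((Finset.Icc 1 i).powerset).filter
    (fun S => i ∈ S ∧ IsLegalSet (ℓ*g+1) (kanC g ℓ) S)

open Classical in
/-- All legal sets contained in `{1, …, M}` (including `∅`). -/
noncomputable def ALLF (g ℓ M : ℕ) : Finset (Finset ℕ) :=
  ((Finset.Icc 1 M).powerset).filter (fun S => IsLegalSet (ℓ*g+1) (kanC g ℓ) S)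

lemma mem_LTF {i : ℕ} {S : Finset ℕ} :
    S ∈ LTF g ℓ i ↔ S ⊆ Icc 1 i ∧ i ∈ S ∧ IsLegalSet (ℓ*g+1) (kanC g ℓ) S := by
  simp [LTF, and_assoc]

lemma mem_ALLF {M : ℕ} {S : Finset ℕ} :
    S ∈ ALLF g ℓ M ↔ S ⊆ Icc 1 M ∧ IsLegalSet (ℓ*g+1) (kanC g ℓ) S := by
  simp [ALLF]

lemma isLegalSet_empty : IsLegalSet (ℓ*g+1) (kanC g ℓ) (∅ : Finset ℕ) := by
  constructor
  · intro x hx; simp at hx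
  · intro h; simp at h

lemma LTF_sub_ALLF {i : ℕ} {S : Finset ℕ} (h : S ∈ LTF g ℓ i) : S ∈ ALLF g ℓ i := by
  rw [mem_LTF] at h
  rw [mem_ALLF]
  exact ⟨h.1, h.2.2⟩

lemma ALLF_eq (M : ℕ) :
    ALLF g ℓ M = insert ∅ ((Icc 1 M).biUnion (fun i' => LTF g ℓ i')) := by
  ext S
  rw [mem_ALLF, Finset.mem_insert, Finset.mem_biUnion]
  constructor
  · rintro ⟨hsub, hleg⟩
    rcases Finset.eq_empty_or_nonempty S with rfl | hne
    · exact Or.inl rfl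
    · right
      refine ⟨S.sup id, ?_, ?_⟩
      · have h1 : S.sup id ∈ S := sup_mem hne
        have := hsub h1
        simp only [mem_Icc] at this ⊢
        omega
      · rw [mem_LTF]
        refine ⟨?_, sup_mem hne, hleg⟩
        intro x hx
        simp only [mem_Icc]
        exact ⟨hleg.1 x hx, le_sup_of_mem hx⟩
  · rintro (rfl | ⟨i', hi', hS⟩)
    · exact ⟨by simp, isLegalSet_empty⟩
    · rw [mem_LTF] at hS
      simp only [mem_Icc] at hi'
      refine ⟨?_, hS.2.2⟩
      intro x hx
      have := hS.1 hx
      simp only [mem_Icc] at this ⊢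
      omega

lemma LTF_card_sup {i i' : ℕ} {S : Finset ℕ} (h : S ∈ LTF g ℓ i) : S.sup id = i := by
  rw [mem_LTF] at h
  exact sup_eq_top h.2.1 h.1

lemma ALLF_card (M : ℕ) :
    (ALLF g ℓ M).card = 1 + ∑ i' ∈ Icc 1 M, (LTF g ℓ i').card := by
  rw [ALLF_eq]
  have hnot : (∅ : Finset ℕ) ∉ (Icc 1 M).biUnion (fun i' => LTF g ℓ i') := by
    rw [Finset.mem_biUnion]
    rintro ⟨i', hi', hmem⟩
    rw [mem_LTF] at hmem
    exact absurd hmem.2.1 (by simp)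
  have hdisj : ∀ x ∈ Icc 1 M, ∀ y ∈ Icc 1 M, x ≠ y →
      Disjoint (LTF g ℓ x) (LTF g ℓ y) := by
    intro x hx y hy hxy
    rw [Finset.disjoint_left]
    intro S hSx hSy
    have h1 : S.sup id = x := LTF_card_sup (i' := 0) hSx
    have h2 : S.sup id = y := LTF_card_sup (i' := 0) hSy
    exact hxy (h1 ▸ h2 ▸ rfl)
  rw [Finset.card_insert_of_notMem hnot, Finset.card_biUnion hdisj]
  omega

lemma kanP_notmem_self (hg : 1 ≤ g) {i j : ℕ} (hj1 : 1 ≤ j) (hjgi : j * g < i)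
    {S' : Finset ℕ} (hS' : S' ⊆ Icc 1 (i - j * g - 1)) :
    i - j * g ∉ kanP g i j ∪ S' := by
  rw [Finset.mem_union, mem_kanP]
  rintro (⟨j', hj'j, hj'e⟩ | hmem)
  · have h1 : (j' + 1) * g ≤ j * g := Nat.mul_le_mul_right g (by omega)
    have h2 : (j' + 1) * g = j' * g + g := by ring
    omega
  · have := hS' hmem
    simp only [mem_Icc] at this
    omega

lemma kanP_mem_lt (hg : 1 ≤ g) {i j j' : ℕ} (hjj' : j < j') (hjgi : j * g < i) :
    i - j * g ∈ kanP g i j' := mem_kanP.mpr ⟨j, hjj', rfl⟩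

lemma LTF_decomp (hg : 1 ≤ g) (hℓ : 1 ≤ ℓ) {i : ℕ} (hi : 1 ≤ i) :
    LTF g ℓ i = (if i ≤ ℓ * g then {kanF g i} else ∅) ∪
      ((Icc 1 ℓ).filter (fun j => j * g < i)).biUnion
        (fun j => (ALLF g ℓ (i - j * g - 1)).image (fun S' => kanP g i j ∪ S')) := by
  ext S
  rw [mem_LTF, Finset.mem_union, Finset.mem_biUnion]
  constructor
  · rintro ⟨hsub, hiS, hleg⟩
    have hfwd := char_fwd hg hℓ hi hsub hiS (by
      rw [← sup_eq_top hiS hsub]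
      exact hleg.2 ⟨i, hiS⟩)
    rcases hfwd with ⟨hiL, rfl⟩ | ⟨j, hj1, hjℓ, hjgi, S', hS'sub, hS'leg, rfl⟩
    · left
      rw [if_pos hiL]
      exact Finset.mem_singleton_self _
    · right
      refine ⟨j, ?_, ?_⟩
      · simp only [Finset.mem_filter, mem_Icc]
        exact ⟨⟨hj1, hjℓ⟩, hjgi⟩
      · rw [Finset.mem_image]
        exact ⟨S', mem_ALLF.mpr ⟨hS'sub, hS'leg⟩, rfl⟩
  · rintro (hmem | ⟨j, hj, hmem⟩)
    · by_cases hiL : i ≤ ℓ * g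
      · rw [if_pos hiL, Finset.mem_singleton] at hmem
        subst hmem
        exact char_bwd_full hg hℓ hi hiL
      · rw [if_neg hiL] at hmem
        simp at hmem
    · simp only [Finset.mem_filter, mem_Icc] at hj
      rw [Finset.mem_image] at hmem
      obtain ⟨S', hS', rfl⟩ := hmem
      rw [mem_ALLF] at hS'
      exact char_bwd_j hg hℓ hi hj.1.1 hj.1.2 hj.2 hS'.1 hS'.2

lemma LTF_card (hg : 1 ≤ g) (hℓ : 1 ≤ ℓ) {i : ℕ} (hi : 1 ≤ i) :
    (LTF g ℓ i).card = (if i ≤ ℓ * g then 1 else 0) +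
      ∑ j ∈ (Icc 1 ℓ).filter (fun j => j * g < i), (ALLF g ℓ (i - j * g - 1)).card := by
  rw [LTF_decomp hg hℓ hi]
  rw [Finset.card_union_of_disjoint]
  · congr 1
    · split <;> simp
    · rw [Finset.card_biUnion]
      · apply Finset.sum_congr rfl
        intro j hj
        simp only [Finset.mem_filter, mem_Icc] at hj
        apply Finset.card_image_of_injOn
        intro S1 hS1 S2 hS2 he
        rw [Finset.mem_coe, mem_ALLF] at hS1 hS2
        have key : ∀ S' : Finset ℕ, S' ⊆ Icc 1 (i - j * g - 1) →
            ∀ x, x ∈ S' ↔ x ∈ kanP g i j ∪ S' ∧ x ≤ i - j * g - 1 := by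
          intro S' hsub x
          constructor
          · intro hx
            refine ⟨Finset.mem_union_right _ hx, ?_⟩
            have := hsub hx
            simp only [mem_Icc] at this
            omega
          · rintro ⟨hx, hxb⟩
            rw [Finset.mem_union] at hx
            rcases hx with hx | hx
            · exfalso
              rw [mem_kanP] at hx
              obtain ⟨j', hj'j, rfl⟩ := hx
              have h1 : (j' + 1) * g ≤ j * g := Nat.mul_le_mul_right g (by omega)
              have h2 : (j' + 1) * g = j' * g + g := by ring
              omega
            · exact hx
        simp only at he
        ext x
        rw [key S1 hS1.1 x, key S2 hS2.1 x, he]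
      · intro x hx y hy hxy
        simp only [Finset.mem_coe, Finset.mem_filter, mem_Icc] at hx hy
        simp only [Function.onFun]
        rw [Finset.disjoint_left]
        rintro S hSx hSy
        rw [Finset.mem_image] at hSx hSy
        obtain ⟨S1, hS1, he1⟩ := hSx
        obtain ⟨S2, hS2, he2⟩ := hSy
        rw [mem_ALLF] at hS1 hS2
        rcases Nat.lt_or_ge x y with hlt | hge
        · have hin : i - x * g ∈ S := by
            rw [← he2]
            exact Finset.mem_union_left _ (kanP_mem_lt hg hlt hx.2)
          rw [← he1] at hin
          exact kanP_notmem_self hg hx.1.1 hx.2 hS1.1 hin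
        · have hlt : y < x := by omega
          have hin : i - y * g ∈ S := by
            rw [← he1]
            exact Finset.mem_union_left _ (kanP_mem_lt hg hlt hy.2)
          rw [← he2] at hin
          exact kanP_notmem_self hg hy.1.1 hy.2 hS2.1 hin
  · rw [Finset.disjoint_left]
    intro S hS1 hS2
    by_cases hiL : i ≤ ℓ * g
    · rw [if_pos hiL, Finset.mem_singleton] at hS1
      subst hS1
      rw [Finset.mem_biUnion] at hS2
      obtain ⟨j, hj, hmem⟩ := hS2
      simp only [Finset.mem_filter, mem_Icc] at hj
      rw [Finset.mem_image] at hmem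
      obtain ⟨S', hS', he⟩ := hmem
      rw [mem_ALLF] at hS'
      have hin : i - j * g ∈ kanF g i := by
        rw [mem_kanF hg]
        exact ⟨j, hj.2, rfl⟩
      rw [← he] at hin
      exact kanP_notmem_self hg hj.1.1 hj.2 hS'.1 hin
    · rw [if_neg hiL] at hS1
      simp at hS1

end Counting

lemma exists_window (B : ℕ → ℕ) (N : ℕ) :
    ∀ m, 1 ≤ m → B 1 ≤ N → N < B m →
      ∃ k, 1 ≤ k ∧ k < m ∧ B k ≤ N ∧ N < B (k+1) := by
  intro m
  induction m with
  | zero => omega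
  | succ m ihm =>
    intro _ hB1 hBm
    rcases Nat.eq_zero_or_pos m with rfl | hm1
    · simp only [Nat.zero_add] at hBm
      omega
    · by_cases hc : B m ≤ N
      · exact ⟨m, hm1, by omega, hc, hBm⟩
      · obtain ⟨k, h1, h2, h3, h4⟩ := ihm hm1 hB1 (by omega)
        exact ⟨k, h1, by omega, h3, h4⟩

section Master

variable {g ℓ : ℕ} {K : ℕ → ℕ}

theorem master (hg : 1 ≤ g) (hℓ : 1 ≤ ℓ) (hK1 : K 1 = 1)
    (hKsmall : ∀ n, 1 ≤ n → n < ℓ * g + 1 →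
      K (n + 1) = (∑ r ∈ Finset.Icc 1 n, kanC g ℓ r * K (n + 1 - r)) + 1)
    (hKrec : ∀ n, ℓ * g + 1 ≤ n →
      K (n + 1) = ∑ r ∈ Finset.Icc 1 (ℓ * g + 1), kanC g ℓ r * K (n + 1 - r)) :
    ∀ i, 1 ≤ i → ((LTF g ℓ i).card + K i = K (i+1)) ∧
      (∀ N, (∃ S ∈ LTF g ℓ i, N = ∑ r ∈ S, K r) ↔ (K i ≤ N ∧ N < K (i+1))) := by
  intro i
  induction i using Nat.strong_induction_on with
  | _ i IH =>
  intro hi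
  -- the cumulative count
  have hTcard : ∀ M, M < i → (ALLF g ℓ M).card = K (M+1) := by
    intro M
    induction M with
    | zero =>
      intro _
      rw [ALLF_card]
      simp [hK1]
    | succ M ihM =>
      intro hMi
      rw [ALLF_card, Finset.sum_Icc_succ_top (by omega : 1 ≤ M + 1)]
      have h1 : 1 + ∑ i' ∈ Icc 1 M, (LTF g ℓ i').card = K (M+1) := by
        rw [← ALLF_card]
        exact ihM (by omega)
      have h2 := (IH (M+1) (by omega) (by omega)).1
      omega
  -- the index-set identity
  have hins : (range (ℓ+1)).filter (fun j => j * g + 1 ≤ i)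
      = insert 0 ((Icc 1 ℓ).filter (fun j => j * g < i)) := by
    ext j
    simp only [Finset.mem_filter, Finset.mem_range, Finset.mem_insert, mem_Icc]
    constructor
    · rintro ⟨h1, h2⟩
      rcases Nat.eq_zero_or_pos j with rfl | hj1
      · exact Or.inl rfl
      · exact Or.inr ⟨⟨hj1, by omega⟩, by omega⟩
    · rintro (rfl | ⟨⟨h1, h2⟩, h3⟩)
      · constructor <;> omega
      · constructor <;> omega
  have h0notin : 0 ∉ (Icc 1 ℓ).filter (fun j => j * g < i) := by
    simp
  have hKsucc := K_succ_eq hg hKsmall hKrec i hi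
  rw [hins, Finset.sum_insert h0notin] at hKsucc
  simp only [Nat.zero_mul, Nat.sub_zero] at hKsucc
  -- count statement
  have hcount : (LTF g ℓ i).card + K i = K (i+1) := by
    rw [LTF_card hg hℓ hi]
    have hsum : ∑ j ∈ (Icc 1 ℓ).filter (fun j => j * g < i), (ALLF g ℓ (i - j * g - 1)).card
        = ∑ j ∈ (Icc 1 ℓ).filter (fun j => j * g < i), K (i - j * g) := by
      apply Finset.sum_congr rfl
      intro j hj
      simp only [Finset.mem_filter, mem_Icc] at hj
      have hjg1 : 1 ≤ j * g := by
        have := Nat.mul_le_mul hj.1.1 hg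
        omega
      rw [hTcard (i - j * g - 1) (by omega)]
      congr 1
      omega
    rw [hsum]
    omega
  refine ⟨hcount, ?_⟩
  -- value analysis
  have hceil1 : 1 ≤ (i + g - 1) / g := by
    have := (ceil_lt_iff hg i 0).mpr (by omega)
    omega
  have hm0 : (range (ℓ+1)).filter (fun j => j * g + 1 ≤ i)
      = range (min (ℓ+1) ((i + g - 1) / g)) := by
    ext j
    simp only [Finset.mem_filter, Finset.mem_range, Nat.lt_min]
    rw [ceil_lt_iff hg i j]
    omega
  have hKsucc2 := K_succ_eq hg hKsmall hKrec i hi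
  rw [hm0] at hKsucc2
  obtain ⟨m0, hm0e⟩ : ∃ m0, min (ℓ+1) ((i + g - 1) / g) = m0 := ⟨_, rfl⟩
  rw [hm0e] at hKsucc2
  have hm0a : m0 ≤ ℓ + 1 := by rw [← hm0e]; exact Nat.min_le_left _ _
  have hm0b : m0 ≤ (i + g - 1) / g := by rw [← hm0e]; exact Nat.min_le_right _ _
  have hm01 : 1 ≤ m0 := by omega
  have hB1 : ∑ j' ∈ range 1, K (i - j' * g) = K i := by
    rw [Finset.sum_range_one]
    simp
  have hBmono : ∀ a b : ℕ, a ≤ b →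
      ∑ j' ∈ range a, K (i - j' * g) ≤ ∑ j' ∈ range b, K (i - j' * g) := by
    intro a b hab
    apply Finset.sum_le_sum_of_subset
    exact Finset.range_subset_range.mpr hab
  have hBlow : ∀ k, 1 ≤ k → K i ≤ ∑ j' ∈ range k, K (i - j' * g) := by
    intro k hk
    rw [← hB1]
    exact hBmono 1 k hk
  have hjglt : ∀ j' j : ℕ, j' < j → j * g < i → j' * g < i ∧ j' * g + g ≤ j * g := by
    intro j' j h1 h2
    have ha : (j' + 1) * g ≤ j * g := Nat.mul_le_mul_right g (by omega)
    have hb : (j' + 1) * g = j' * g + g := by ring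
    omega
  have hsum_kanP : ∀ j : ℕ, j * g < i →
      ∑ x ∈ kanP g i j, K x = ∑ j' ∈ range j, K (i - j' * g) := by
    intro j hj
    exact sum_kanP hg (fun j' hj' => (hjglt j' j hj' hj).1) K
  have hdisjPS : ∀ j : ℕ, 1 ≤ j → j * g < i → ∀ S' : Finset ℕ,
      S' ⊆ Icc 1 (i - j * g - 1) → Disjoint (kanP g i j) S' := by
    intro j hj1 hjgi S' hsub
    rw [Finset.disjoint_left]
    intro x hx hx'
    rw [mem_kanP] at hx
    obtain ⟨j', hj'j, rfl⟩ := hx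
    have := (hjglt j' j hj'j hjgi).2
    have := hsub hx'
    simp only [mem_Icc] at this
    omega
  have hkanF_sum : i ≤ ℓ * g → ∑ x ∈ kanF g i, K x = ∑ j' ∈ range m0, K (i - j' * g) := by
    intro hiL
    have hceilm0 : (i + g - 1) / g = m0 := by
      rw [← hm0e]
      have : ¬ (ℓ < (i + g - 1) / g) := by
        rw [ceil_lt_iff hg i ℓ]
        omega
      omega
    rw [kanF, hceilm0]
    refine sum_kanP hg (fun j' hj' => ?_) K
    rw [← hceilm0] at hj'
    exact (ceil_lt_iff hg i j').mp hj'

  intro N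
  constructor
  · -- upper and lower bounds
    rintro ⟨S, hS, rfl⟩
    rw [mem_LTF] at hS
    obtain ⟨hsub, hiS, hleg⟩ := hS
    have hfwd := char_fwd hg hℓ hi hsub hiS (by
      rw [← sup_eq_top hiS hsub]
      exact hleg.2 ⟨i, hiS⟩)
    rcases hfwd with ⟨hiL, rfl⟩ | ⟨j, hj1, hjℓ, hjgi, S', hS'sub, hS'leg, rfl⟩
    · rw [hkanF_sum hiL]
      rw [if_pos hiL] at hKsucc2
      have := hBlow m0 hm01
      omega
    · rw [Finset.sum_union (hdisjPS j hj1 hjgi S' hS'sub)]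
      rw [hsum_kanP j hjgi]
      have hS'lt : ∑ r ∈ S', K r < K (i - j * g) := by
        rcases Finset.eq_empty_or_nonempty S' with rfl | hne
        · simp only [Finset.sum_empty]
          exact K_pos hg hK1 hKsmall hKrec (by omega)
        · obtain ⟨i', hi'⟩ : ∃ i', S'.sup id = i' := ⟨_, rfl⟩
          have hi'S : i' ∈ S' := by rw [← hi']; exact sup_mem hne
          have hi'b : i' ≤ i - j * g - 1 := by
            have := hS'sub hi'S
            simp only [mem_Icc] at this
            omega
          have hi'1 : 1 ≤ i' := hS'leg.1 i' hi'S
          have hmemLTF : S' ∈ LTF g ℓ i' := by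
            rw [mem_LTF]
            refine ⟨?_, hi'S, hS'leg⟩
            intro x hx
            simp only [mem_Icc]
            refine ⟨hS'leg.1 x hx, ?_⟩
            rw [← hi']
            exact le_sup_of_mem hx
          have hval := ((IH i' (by omega) hi'1).2 (∑ r ∈ S', K r)).mp ⟨S', hmemLTF, rfl⟩
          have hmono := K_mono hg hKsmall hKrec (by omega : 1 ≤ i' + 1)
            (by omega : i' + 1 ≤ i - j * g)
          omega
      have hup : ∑ j' ∈ range j, K (i - j' * g) + K (i - j * g)
          ≤ K (i + 1) := by
        have h1 : ∑ j' ∈ range (j+1), K (i - j' * g)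
            = ∑ j' ∈ range j, K (i - j' * g) + K (i - j * g) := Finset.sum_range_succ _ _
        have h2 : j + 1 ≤ m0 := by
          have : j < (i + g - 1) / g := (ceil_lt_iff hg i j).mpr hjgi
          omega
        have h3 := hBmono (j+1) m0 h2
        omega
      have hlow := hBlow j hj1
      omega
  · -- construction
    rintro ⟨hKN, hNK⟩
    by_cases hN : N < ∑ j' ∈ range m0, K (i - j' * g)
    · obtain ⟨k, hk1, hkm, hBk, hBk1⟩ := exists_window
        (fun k => ∑ j' ∈ range k, K (i - j' * g)) N m0 hm01 (by
          show ∑ j' ∈ range 1, K (i - j' * g) ≤ N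
          rw [hB1]; exact hKN) hN
      simp only [Finset.sum_range_succ] at hBk1
      have hkℓ : k ≤ ℓ := by omega
      have hkgi : k * g < i := by
        rw [← ceil_lt_iff hg i k]
        omega
      by_cases hN' : N - (∑ j' ∈ range k, K (i - j' * g)) = 0
      · -- S = kanP only
        obtain ⟨hsub2, hmem2, hleg2⟩ := char_bwd_j hg hℓ hi hk1 hkℓ hkgi
          (Finset.empty_subset _) isLegalSet_empty
        refine ⟨kanP g i k ∪ ∅, mem_LTF.mpr ⟨hsub2, hmem2, hleg2⟩, ?_⟩
        rw [Finset.union_empty, hsum_kanP k hkgi]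
        omega
      · obtain ⟨i', hi'1, hi'lt, hKi', hKi'1⟩ := exists_window K
          (N - ∑ j' ∈ range k, K (i - j' * g)) (i - k * g) (by omega)
          (by rw [hK1]; omega) (by omega)
        have hval := ((IH i' (by omega) hi'1).2
          (N - ∑ j' ∈ range k, K (i - j' * g))).mpr ⟨hKi', hKi'1⟩
        obtain ⟨S', hS'mem, hS'sum⟩ := hval
        rw [mem_LTF] at hS'mem
        have hS'sub2 : S' ⊆ Icc 1 (i - k * g - 1) := by
          intro x hx
          have := hS'mem.1 hx
          simp only [mem_Icc] at this ⊢
          omega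
        obtain ⟨hsub2, hmem2, hleg2⟩ := char_bwd_j hg hℓ hi hk1 hkℓ hkgi
          hS'sub2 hS'mem.2.2
        refine ⟨kanP g i k ∪ S', mem_LTF.mpr ⟨hsub2, hmem2, hleg2⟩, ?_⟩
        rw [Finset.sum_union (hdisjPS k hk1 hkgi S' hS'sub2)]
        rw [hsum_kanP k hkgi]
        omega
    · -- N = B m0, the full set
      have hiL : i ≤ ℓ * g := by
        by_contra hiL
        rw [if_neg hiL] at hKsucc2
        omega
      rw [if_pos hiL] at hKsucc2
      have hNe : N = ∑ j' ∈ range m0, K (i - j' * g) := by omega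
      obtain ⟨hsub2, hmem2, hleg2⟩ := char_bwd_full hg hℓ hi hiL
      refine ⟨kanF g i, mem_LTF.mpr ⟨hsub2, hmem2, hleg2⟩, ?_⟩
      rw [hkanF_sum hiL]
      exact hNe

end Master

end Kangaroo

open Finset Kangaroo

/-- For a Kangaroo recurrence `{K_n}` with `ℓ` hops of length `g`
and any `i ≥ 1`, the number of legal index sets `S ⊆ {1, …, i}` with `i ∈ S`
equals `K_{i+1} - K_i`; equivalently, the positive integers whose legal decomposition
has largest summand `K_i` are exactly the integers in `[K_i, K_{i+1})`. -/
theorem kangaroo_count_with_top (g ℓ : ℕ) (hg : 1 ≤ g) (hℓ : 1 ≤ ℓ)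
    (K : ℕ → ℕ) (hK1 : K 1 = 1)
    (hKsmall : ∀ n, 1 ≤ n → n < ℓ * g + 1 →
      K (n + 1) = (∑ r ∈ Finset.Icc 1 n, kanC g ℓ r * K (n + 1 - r)) + 1)
    (hKrec : ∀ n, ℓ * g + 1 ≤ n →
      K (n + 1) = ∑ r ∈ Finset.Icc 1 (ℓ * g + 1), kanC g ℓ r * K (n + 1 - r))
    (i : ℕ) (hi : 1 ≤ i) :
    ({S : Finset ℕ | S ⊆ Finset.Icc 1 i ∧ i ∈ S ∧
        IsLegalSet (ℓ * g + 1) (kanC g ℓ) S}.ncard : ℤ) = (K (i + 1) : ℤ) - K i ∧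
    {N : ℕ | ∃ S : Finset ℕ, IsLegalSet (ℓ * g + 1) (kanC g ℓ) S ∧ S.Nonempty ∧
        S.sup id = i ∧ N = ∑ r ∈ S, K r} = Set.Ico (K i) (K (i + 1)) := by
  have hmaster := Kangaroo.master hg hℓ hK1 hKsmall hKrec i hi
  constructor
  · have hset : {S : Finset ℕ | S ⊆ Finset.Icc 1 i ∧ i ∈ S ∧
        IsLegalSet (ℓ * g + 1) (kanC g ℓ) S} = ↑(LTF g ℓ i) := by
      ext S
      simp only [Set.mem_setOf_eq, Finset.coe_sort_coe, Finset.mem_coe, mem_LTF]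
    rw [hset, Set.ncard_coe_finset]
    have h := hmaster.1
    omega
  · ext N
    simp only [Set.mem_setOf_eq, Set.mem_Ico]
    constructor
    · rintro ⟨S, hleg, hne, hsup, rfl⟩
      apply (hmaster.2 _).mp
      refine ⟨S, mem_LTF.mpr ⟨?_, ?_, hleg⟩, rfl⟩
      · intro x hx
        simp only [Finset.mem_Icc]
        refine ⟨hleg.1 x hx, ?_⟩
        rw [← hsup]
        exact le_sup_of_mem hx
      · rw [← hsup]
        exact Kangaroo.sup_mem hne
    · intro hN
      obtain ⟨S, hS, rfl⟩ := (hmaster.2 N).mpr hN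
      rw [mem_LTF] at hS
      exact ⟨S, hS.2.2, ⟨i, hS.2.1⟩, sup_eq_top hS.2.1 hS.1, rfl⟩
end

section
/- Let {K_n} be a Kangaroo recurrence with ℓ hops of length g. For every r ≥ 2, the number of index sets S ⊆ {1, …, r} with 1 ∈ S and r ∈ S such that Σ_{p∈S} K_p is a legal decomposition equals K_{r+1} − 2K_r + K_{r−1}. -/
namespace Kang

def pat (c : ℕ → ℕ) (m : ℕ) : List ℕ := (List.range m).map fun i => c (i + 1)

@[simp] lemma pat_length (c : ℕ → ℕ) (m : ℕ) : (pat c m).length = m := by simp [pat]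

lemma pat_getElem (c : ℕ → ℕ) (m i : ℕ) (h : i < m) :
    (pat c m)[i]'(by simpa using h) = c (i + 1) := by simp [pat]

variable {c : ℕ → ℕ} {L : ℕ}

lemma kanC_le_one (g ℓ i : ℕ) : kanC g ℓ i ≤ 1 := by
  unfold kanC; split <;> omega

lemma kanC_one (g ℓ : ℕ) (hg : 1 ≤ g) (hℓ : 1 ≤ ℓ) : kanC g ℓ 1 = 1 := by
  unfold kanC
  simp

lemma legal_entries (hcle : ∀ i, c i ≤ 1) {l : List ℕ} (h : IsLegal L c l) :
    ∀ x ∈ l, x ≤ 1 := by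
  induction h with
  | short m h => intro x hx; simp [List.mem_map] at hx; obtain ⟨i, _, rfl⟩ := hx; exact hcle _
  | long s t a rest hs1 hsL ha hrest ih =>
      intro x hx
      simp [List.mem_append, List.mem_map, List.mem_replicate] at hx
      rcases hx with (⟨i, _, rfl⟩ | rfl | ⟨_, rfl⟩ | hx)
      · exact hcle _
      · have := hcle s; omega
      · omega
      · exact ih x hx

lemma legal_nil (hL : 1 ≤ L) : IsLegal L c [] := by
  have := IsLegal.short (L := L) (c := c) 0 hL
  simpa using this

lemma legal_zero_cons (hc1 : c 1 = 1) (hL : 1 ≤ L) {l : List ℕ} (h : IsLegal L c l) :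
    IsLegal L c (0 :: l) := by
  have := IsLegal.long (L := L) (c := c) 1 0 0 l le_rfl hL (by omega) h
  simpa using this

lemma legal_replicate (hc1 : c 1 = 1) (hL : 1 ≤ L) {l : List ℕ} (h : IsLegal L c l) (t : ℕ) :
    IsLegal L c (List.replicate t 0 ++ l) := by
  induction t with
  | zero => simpa using h
  | succ n ih => simpa [List.replicate_succ] using legal_zero_cons hc1 hL ih

/-- Inversion: a legal list is a short pattern or `pat (s-1) ++ 0 :: l'` with `l'` legal. -/
lemma legal_cases (hcle : ∀ i, c i ≤ 1) (hc1 : c 1 = 1) (hL : 1 ≤ L) {l : List ℕ}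
    (h : IsLegal L c l) :
    (∃ m, m < L ∧ l = pat c m) ∨
    (∃ s l', 1 ≤ s ∧ s ≤ L ∧ c s = 1 ∧ IsLegal L c l' ∧ l = pat c (s - 1) ++ 0 :: l') := by
  cases h with
  | short m h => exact Or.inl ⟨m, h, rfl⟩
  | long s t a rest hs1 hsL ha hrest =>
      right
      have hcs : c s = 1 := by have := hcle s; omega
      have ha0 : a = 0 := by omega
      exact ⟨s, List.replicate t 0 ++ rest, hs1, hsL, hcs,
        legal_replicate hc1 hL hrest t, by rw [ha0]; rfl⟩

lemma legal_of_zero_cons (hcle : ∀ i, c i ≤ 1) (hc1 : c 1 = 1) (hL : 1 ≤ L) {l : List ℕ}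
    (h : IsLegal L c (0 :: l)) : IsLegal L c l := by
  rcases legal_cases hcle hc1 hL h with ⟨m, hm, he⟩ | ⟨s, l', hs1, hsL, hcs, hl', he⟩
  · cases m with
    | zero => simp [pat] at he
    | succ n =>
        exfalso
        have : (0 : ℕ) = c 1 := by
          have := congrArg (fun x => x.headI) he
          simpa [pat, List.range_succ_eq_map] using this
        omega
  · rcases Nat.eq_or_lt_of_le hs1 with h1 | h2
    · have : l = l' := by
        rw [← h1] at he; simpa [pat] using he
      rwa [this]
    · exfalso
      have hs2 : 2 ≤ s := h2
      have : (0 : ℕ) = c 1 := by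
        have := congrArg (fun x => x.headI) he
        have hne : s - 1 ≠ 0 := by omega
        simp [pat] at this
        rcases Nat.exists_eq_add_of_lt (show 0 < s - 1 by omega) with ⟨k, hk⟩
        rw [hk] at this
        simpa [List.range_succ_eq_map] using this
      omega


lemma pat_getElem? (c : ℕ → ℕ) {i m : ℕ} (h : i < m) :
    (pat c m)[i]? = some (c (i + 1)) := by simp [pat, h]

lemma long_getElem? (c : ℕ → ℕ) {s : ℕ} (l' : List ℕ) :
    (pat c (s - 1) ++ 0 :: l')[s - 1]? = some 0 := by
  rw [List.getElem?_append_right (by simp)]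
  simp

lemma getLast?_long {s : ℕ} {l' : List ℕ} (h : l' ≠ []) (a : ℕ) :
    (pat c (s - 1) ++ a :: l').getLast? = l'.getLast? := by
  rw [List.getLast?_append]
  cases l' with
  | nil => simp at h
  | cons b u => simp [List.getLast?_cons_cons]; cases hg : (u).getLast? <;> simp [List.getLast?_eq_getElem?] <;> simp [hg] at *


/-- the universe of 0/1 lists of a given length -/
def allBin : ℕ → Finset (List ℕ)
  | 0 => {[]}
  | (m+1) => (allBin m).biUnion fun l => {0 :: l, 1 :: l}

lemma mem_allBin {m : ℕ} {l : List ℕ} :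
    l ∈ allBin m ↔ l.length = m ∧ ∀ x ∈ l, x ≤ 1 := by
  induction m generalizing l with
  | zero => cases l <;> simp [allBin]
  | succ n ih =>
      cases l with
      | nil => simp [allBin, ih]
      | cons a t =>
          simp only [allBin, Finset.mem_biUnion, Finset.mem_insert, Finset.mem_singleton]
          constructor
          · rintro ⟨u, hu, (h | h)⟩ <;>
            · cases h
              obtain ⟨h1, h2⟩ := ih.mp hu
              refine ⟨by simp [h1], ?_⟩
              intro x hx
              rcases List.mem_cons.mp hx with rfl | hx
              · omega
              · exact h2 x hx
          · rintro ⟨h1, h2⟩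
            refine ⟨t, ih.mpr ⟨by simpa using h1, fun x hx => h2 x (List.mem_cons_of_mem _ hx)⟩, ?_⟩
            have := h2 a List.mem_cons_self
            interval_cases a
            · exact Or.inl rfl
            · exact Or.inr rfl

/-- legal 0/1 lists of length `m` ending in `1` -/
noncomputable def LEs (c : ℕ → ℕ) (L m : ℕ) : Finset (List ℕ) :=
  @Finset.filter _ (fun l => IsLegal L c l ∧ l.getLast? = some 1) (Classical.decPred _)
    (allBin m)

lemma mem_LEs {m : ℕ} {l : List ℕ} :
    l ∈ LEs c L m ↔ l.length = m ∧ (∀ x ∈ l, x ≤ 1) ∧ IsLegal L c l ∧ l.getLast? = some 1 := by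
  simp [LEs, Finset.mem_filter, mem_allBin, and_assoc]

noncomputable def Ecnt (c : ℕ → ℕ) (L m : ℕ) : ℕ := (LEs c L m).card

lemma Ecnt_zero : Ecnt c L 0 = 0 := by
  rw [Ecnt, Finset.card_eq_zero]
  ext l
  simp only [mem_LEs, Finset.notMem_empty, iff_false, not_and]
  intro h
  rw [List.eq_nil_of_length_eq_zero h]
  simp


lemma LEs_nonempty_elem {m : ℕ} {l : List ℕ} (h : l ∈ LEs c L m) : l ≠ [] := by
  intro hnil
  rw [hnil] at h
  simp [mem_LEs] at h

/-- Structure of legal lists of length `m` ending in a one. -/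
lemma LEs_eq (hcle : ∀ i, c i ≤ 1) (hc0 : c 0 = 0) (hc1 : c 1 = 1) (hL : 1 ≤ L) (m : ℕ) :
    LEs c L m =
      (if m < L ∧ c m = 1 then ({pat c m} : Finset (List ℕ)) else ∅) ∪
      ((Finset.Icc 1 L).filter (fun s => c s = 1)).biUnion
        (fun s => (LEs c L (m - s)).image (fun l' => pat c (s - 1) ++ 0 :: l')) := by
  classical
  ext l
  simp only [Finset.mem_union, Finset.mem_biUnion, Finset.mem_image, Finset.mem_filter,
    Finset.mem_Icc]
  constructor
  · intro hl
    obtain ⟨hlen, hle, hleg, hlast⟩ := mem_LEs.mp hl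
    rcases legal_cases hcle hc1 hL hleg with ⟨m', hm', rfl⟩ | ⟨s, l', hs1, hsL, hcs, hl', rfl⟩
    · have hmm : m' = m := by simpa using hlen
      subst hmm
      left
      have hcm : c m' = 1 := by
        have hm0 : 1 ≤ m' := by
          rcases Nat.eq_zero_or_pos m' with h0 | h1
          · subst h0; simp [pat] at hlast
          · exact h1
        rw [List.getLast?_eq_getElem?, pat_length, pat_getElem? c (show m' - 1 < m' by omega)]
          at hlast
        have : m' - 1 + 1 = m' := by omega
        rw [this] at hlast
        exact Option.some_injective _ hlast
      rw [if_pos ⟨hm', hcm⟩]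
      simp
    · right
      have hl'ne : l' ≠ [] := by
        intro hnil
        subst hnil
        rw [List.getLast?_append] at hlast
        simp at hlast
      have hlast' : l'.getLast? = some 1 := by
        rwa [getLast?_long hl'ne 0] at hlast
      have hlen' : l'.length = m - s := by
        simp [pat] at hlen
        omega
      refine ⟨s, ⟨⟨hs1, hsL⟩, hcs⟩, l', mem_LEs.mpr ⟨hlen', ?_, hl', hlast'⟩, rfl⟩
      intro x hx
      exact hle x (by simp [hx])
  · rintro (hl | ⟨s, ⟨⟨hs1, hsL⟩, hcs⟩, l', hl', rfl⟩)
    · split_ifs at hl with hc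
      · obtain ⟨hmL, hcm⟩ := hc
        rw [Finset.mem_singleton] at hl
        subst hl
        have hm0 : 1 ≤ m := by
          rcases Nat.eq_zero_or_pos m with h0 | h1
          · exfalso; rw [h0] at hcm; rw [hc0] at hcm; omega
          · exact h1
        refine mem_LEs.mpr ⟨by simp, ?_, IsLegal.short m hmL, ?_⟩
        · intro x hx
          simp [pat, List.mem_map] at hx
          obtain ⟨i, _, rfl⟩ := hx
          exact hcle _
        · rw [List.getLast?_eq_getElem?, pat_length, pat_getElem? c (show m - 1 < m by omega)]
          have : m - 1 + 1 = m := by omega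
          rw [this, hcm]
      · simp at hl
    · obtain ⟨hlen', hle', hleg', hlast'⟩ := mem_LEs.mp hl'
      have hl'ne : l' ≠ [] := by intro hnil; rw [hnil] at hlast'; simp at hlast'
      have hpos : 1 ≤ m - s := by
        rw [← hlen']
        exact List.length_pos_iff.mpr hl'ne
      have hsm : s ≤ m := by omega
      have hleg : IsLegal L c (pat c (s - 1) ++ 0 :: l') := by
        have := IsLegal.long (L := L) (c := c) s 0 0 l' hs1 hsL (by omega) hleg'
        simpa [pat] using this
      refine mem_LEs.mpr ⟨?_, ?_, hleg, ?_⟩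
      · simp [hlen']; omega
      · intro x hx
        simp [pat, List.mem_map] at hx
        rcases hx with ⟨i, _, rfl⟩ | rfl | hx
        · exact hcle _
        · omega
        · exact hle' x hx
      · rw [getLast?_long hl'ne 0]
        exact hlast'


lemma long_ne {s s' : ℕ} (hs1 : 1 ≤ s) (hss' : s < s') (hcs : c s = 1) (l₁ l₂ : List ℕ) :
    pat c (s - 1) ++ 0 :: l₁ ≠ pat c (s' - 1) ++ 0 :: l₂ := by
  intro h
  have h1 := long_getElem? (s := s) c l₁
  rw [h, List.getElem?_append_left (by simp; omega),
    pat_getElem? c (show s - 1 < s' - 1 by omega)] at h1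
  have h2 : s - 1 + 1 = s := by omega
  rw [h2, hcs] at h1
  simp at h1

lemma short_ne {s m : ℕ} (hs1 : 1 ≤ s) (hcs : c s = 1) {l' : List ℕ} (hne : l' ≠ [])
    (hlen : ((pat c (s - 1)) ++ 0 :: l').length = m) :
    pat c m ≠ pat c (s - 1) ++ 0 :: l' := by
  intro h
  have hl1 : 1 ≤ l'.length := List.length_pos_iff.mpr hne
  have hsm : s - 1 < m := by simp at hlen; omega
  have h1 := long_getElem? (s := s) c l'
  rw [← h, pat_getElem? c hsm] at h1
  have h2 : s - 1 + 1 = s := by omega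
  rw [h2, hcs] at h1
  simp at h1

lemma Ecnt_rec (hcle : ∀ i, c i ≤ 1) (hc0 : c 0 = 0) (hc1 : c 1 = 1) (hL : 1 ≤ L) (m : ℕ) :
    Ecnt c L m = (if m < L then c m else 0) +
      ∑ s ∈ Finset.Icc 1 L, c s * Ecnt c L (m - s) := by
  classical
  rw [Ecnt, LEs_eq hcle hc0 hc1 hL m]
  have habs : ∀ s, s ∈ (Finset.Icc 1 L).filter (fun s => c s = 1) →
      ∀ x ∈ (LEs c L (m - s)).image (fun l' => pat c (s - 1) ++ 0 :: l'),
      ∃ l', l' ∈ LEs c L (m - s) ∧ l' ≠ [] ∧ x = pat c (s - 1) ++ 0 :: l' := by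
    intro s hs x hx
    obtain ⟨l', hl', rfl⟩ := Finset.mem_image.mp hx
    exact ⟨l', hl', LEs_nonempty_elem hl', rfl⟩
  have hdisj : Disjoint (if m < L ∧ c m = 1 then ({pat c m} : Finset (List ℕ)) else ∅)
      (((Finset.Icc 1 L).filter (fun s => c s = 1)).biUnion
        (fun s => (LEs c L (m - s)).image (fun l' => pat c (s - 1) ++ 0 :: l'))) := by
    rw [Finset.disjoint_left]
    intro x hx1 hx2
    split_ifs at hx1 with hcond
    · rw [Finset.mem_singleton] at hx1
      obtain ⟨s, hs, hxs⟩ := Finset.mem_biUnion.mp hx2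
      obtain ⟨l', hl', hne, hform⟩ := habs s hs x hxs
      obtain ⟨hsIcc, hcs⟩ := Finset.mem_filter.mp hs
      rw [Finset.mem_Icc] at hsIcc
      have hlen : ((pat c (s - 1)) ++ 0 :: l').length = m := by
        rw [← hform, hx1]; simp
      exact short_ne hsIcc.1 hcs hne hlen (hx1 ▸ hform)
    · simp at hx1
  rw [Finset.card_union_of_disjoint hdisj, Finset.card_biUnion]
  · congr 1
    · have hm := hcle m
      by_cases h1 : m < L
      · by_cases h2 : c m = 1
        · rw [if_pos ⟨h1, h2⟩, if_pos h1]; simp [h2]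
        · rw [if_neg (by tauto), if_pos h1]; simp; omega
      · rw [if_neg (by tauto), if_neg h1]; simp
    · rw [Finset.sum_filter]
      apply Finset.sum_congr rfl
      intro s hs
      have hcs := hcle s
      have hinj : Function.Injective (fun l' : List ℕ => pat c (s - 1) ++ 0 :: l') := by
        intro a b h
        simpa using h
      rcases Nat.le_one_iff_eq_zero_or_eq_one.mp hcs with hx | hx
      · simp [hx]
      · simp [hx, Finset.card_image_of_injective _ hinj, Ecnt]
  · intro s hs s' hs' hss
    obtain ⟨hsm, hcs⟩ := Finset.mem_filter.mp hs
    obtain ⟨hsm', hcs'⟩ := Finset.mem_filter.mp hs'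
    rw [Finset.mem_Icc] at hsm hsm'
    rw [Function.onFun, Finset.disjoint_left]
    intro x hx1 hx2
    obtain ⟨l₁, hl₁, hne₁, hf₁⟩ := habs s (Finset.mem_filter.mpr ⟨by rw [Finset.mem_Icc]; omega, hcs⟩) x hx1
    obtain ⟨l₂, hl₂, hne₂, hf₂⟩ := habs s' (Finset.mem_filter.mpr ⟨by rw [Finset.mem_Icc]; omega, hcs'⟩) x hx2
    rcases Nat.lt_or_ge s s' with h | h
    · exact long_ne hsm.1 h hcs l₁ l₂ (hf₁ ▸ hf₂ ▸ rfl)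
    · have h' : s' < s := by omega
      exact long_ne hsm'.1 h' hcs' l₂ l₁ (hf₂ ▸ hf₁ ▸ rfl)


section K

lemma kanC_zero (g ℓ : ℕ) : kanC g ℓ 0 = 0 := by
  unfold kanC
  rw [if_neg (fun h => absurd h.1 (by omega))]

lemma kanC_top (g ℓ : ℕ) : kanC g ℓ (ℓ * g + 1) = 1 := by
  unfold kanC
  rw [if_pos]
  exact ⟨by omega, le_rfl, by rw [Nat.mul_comm, Nat.mul_add_mod]⟩

lemma L_ge_two (g ℓ : ℕ) (hg : 1 ≤ g) (hℓ : 1 ≤ ℓ) : 2 ≤ ℓ * g + 1 := by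
  have := Nat.mul_le_mul hℓ hg
  omega

lemma EK (g ℓ : ℕ) (hg : 1 ≤ g) (hℓ : 1 ≤ ℓ) (K : ℕ → ℕ) (hK1 : K 1 = 1)
    (hKsmall : ∀ n, 1 ≤ n → n < ℓ * g + 1 →
      K (n + 1) = (∑ p ∈ Finset.Icc 1 n, kanC g ℓ p * K (n + 1 - p)) + 1)
    (hKrec : ∀ n, ℓ * g + 1 ≤ n →
      K (n + 1) = ∑ p ∈ Finset.Icc 1 (ℓ * g + 1), kanC g ℓ p * K (n + 1 - p)) :
    ∀ m, 1 ≤ m →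
    (Ecnt (kanC g ℓ) (ℓ * g + 1) m : ℤ) = (K (m + 1) : ℤ) - K m := by
  set c := kanC g ℓ with hc
  set L := ℓ * g + 1 with hLdef
  have hcle : ∀ i, c i ≤ 1 := kanC_le_one g ℓ
  have hc0 : c 0 = 0 := kanC_zero g ℓ
  have hc1 : c 1 = 1 := kanC_one g ℓ hg hℓ
  have hcL : c L = 1 := kanC_top g ℓ
  have hL2 : 2 ≤ L := L_ge_two g ℓ hg hℓ
  have hL : 1 ≤ L := by omega
  intro m
  induction m using Nat.strong_induction_on with
  | _ m ih =>
  intro hm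
  have htrunc : (∑ s ∈ Finset.Icc 1 L, (c s : ℤ) * (Ecnt c L (m - s) : ℤ))
      = ∑ s ∈ Finset.Icc 1 (min (m - 1) L), (c s : ℤ) * (Ecnt c L (m - s) : ℤ) := by
    have hss : Finset.Icc 1 (min (m - 1) L) ⊆ Finset.Icc 1 L :=
      Finset.Icc_subset_Icc_right (min_le_right _ _)
    refine (Finset.sum_subset hss ?_).symm
    intro s hs hs'
    rw [Finset.mem_Icc] at hs
    rw [Finset.mem_Icc] at hs'
    have hms : m - s = 0 := by omega
    rw [hms, Ecnt_zero]
    simp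
  have hrecZ : (Ecnt c L m : ℤ) = (if m < L then (c m : ℤ) else 0)
      + ∑ s ∈ Finset.Icc 1 (min (m - 1) L), (c s : ℤ) * (Ecnt c L (m - s) : ℤ) := by
    rw [← htrunc, Ecnt_rec hcle hc0 hc1 hL m]
    push_cast
    split_ifs <;> simp
  rcases Nat.lt_or_ge m 2 with hm1 | hm2
  · -- m = 1
    have hm' : m = 1 := by omega
    subst hm'
    have h2 : K 2 = 2 := by
      have := hKsmall 1 le_rfl (by omega)
      simpa [hc1, hK1] using this
    rw [hrecZ]
    have hmin : min (1 - 1) L = 0 := by omega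
    rw [hmin]
    rw [if_pos (show 1 < L by omega)]
    simp [hc1, h2, hK1]
  · -- m ≥ 2
    obtain ⟨m', rfl⟩ : ∃ m', m = m' + 1 := ⟨m - 1, by omega⟩
    have hm'1 : 1 ≤ m' := by omega
    have hIH : ∀ s ∈ Finset.Icc 1 (min (m' + 1 - 1) L),
        (c s : ℤ) * (Ecnt c L (m' + 1 - s) : ℤ)
          = (c s : ℤ) * ((K (m' + 1 + 1 - s) : ℤ) - (K (m' + 1 - s) : ℤ)) := by
      intro s hs
      rw [Finset.mem_Icc] at hs
      have hs2 : s ≤ min m' L := by omega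
      have h1 : 1 ≤ m' + 1 - s := by omega
      have h2 : m' + 1 - s < m' + 1 := by omega
      rw [ih (m' + 1 - s) h2 h1]
      have he : m' + 1 - s + 1 = m' + 1 + 1 - s := by omega
      rw [he]
    rw [Finset.sum_congr rfl hIH] at hrecZ
    have hsub : ∑ s ∈ Finset.Icc 1 (min (m' + 1 - 1) L),
        (c s : ℤ) * ((K (m' + 1 + 1 - s) : ℤ) - (K (m' + 1 - s) : ℤ))
      = (∑ s ∈ Finset.Icc 1 (min (m' + 1 - 1) L), (c s : ℤ) * (K (m' + 1 + 1 - s) : ℤ))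
        - ∑ s ∈ Finset.Icc 1 (min (m' + 1 - 1) L), (c s : ℤ) * (K (m' + 1 - s) : ℤ) := by
      rw [← Finset.sum_sub_distrib]
      exact Finset.sum_congr rfl (fun s _ => by ring)
    rw [hsub] at hrecZ
    rcases Nat.lt_or_ge (m' + 1) L with hmL | hmL
    · -- 2 ≤ m < L
      have hmin : min (m' + 1 - 1) L = m' := by omega
      rw [hmin] at hrecZ
      have hKa : (K (m' + 1 + 1) : ℤ)
          = (∑ p ∈ Finset.Icc 1 m', (c p : ℤ) * (K (m' + 1 + 1 - p) : ℤ)) + (c (m' + 1) : ℤ) + 1 := by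
        have h := hKsmall (m' + 1) (by omega) hmL
        have h' : (K (m' + 1 + 1) : ℤ)
            = (∑ p ∈ Finset.Icc 1 (m' + 1), (c p : ℤ) * (K (m' + 1 + 1 - p) : ℤ)) + 1 := by
          rw [h]; push_cast; ring
        rw [h', Finset.sum_Icc_succ_top (by omega : 1 ≤ m' + 1)]
        rw [show m' + 1 + 1 - (m' + 1) = 1 from by omega, hK1]
        push_cast; ring
      have hKb : (K (m' + 1) : ℤ)
          = (∑ p ∈ Finset.Icc 1 m', (c p : ℤ) * (K (m' + 1 - p) : ℤ)) + 1 := by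
        have h := hKsmall m' hm'1 (by omega)
        rw [h]; push_cast; ring
      rw [hrecZ, if_pos hmL, hKa, hKb]
      ring
    · rcases Nat.lt_or_ge m' L with hmL2 | hmL2
      · -- m = L
        have hLm : m' + 1 = L := by omega
        have hmin : min (m' + 1 - 1) L = m' := by omega
        rw [hmin] at hrecZ
        have hKa : (K (m' + 1 + 1) : ℤ)
            = (∑ p ∈ Finset.Icc 1 m', (c p : ℤ) * (K (m' + 1 + 1 - p) : ℤ)) + 1 := by
          have h := hKrec (m' + 1) (by omega)
          have h' : (K (m' + 1 + 1) : ℤ)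
              = ∑ p ∈ Finset.Icc 1 (m' + 1), (c p : ℤ) * (K (m' + 1 + 1 - p) : ℤ) := by
            rw [← hLm] at h
            rw [h]; push_cast; ring
          rw [h', Finset.sum_Icc_succ_top (by omega : 1 ≤ m' + 1)]
          rw [show m' + 1 + 1 - (m' + 1) = 1 from by omega, hK1, hLm, hcL]
          push_cast; ring
        have hKb : (K (m' + 1) : ℤ)
            = (∑ p ∈ Finset.Icc 1 m', (c p : ℤ) * (K (m' + 1 - p) : ℤ)) + 1 := by
          have h := hKsmall m' hm'1 (by omega)
          rw [h]; push_cast; ring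
        rw [hrecZ, if_neg (by omega), hKa, hKb]
        ring
      · -- m > L
        have hmin : min (m' + 1 - 1) L = L := by omega
        rw [hmin] at hrecZ
        have hKa : (K (m' + 1 + 1) : ℤ)
            = ∑ p ∈ Finset.Icc 1 L, (c p : ℤ) * (K (m' + 1 + 1 - p) : ℤ) := by
          have h := hKrec (m' + 1) (by omega)
          rw [h]; push_cast; ring
        have hKb : (K (m' + 1) : ℤ)
            = ∑ p ∈ Finset.Icc 1 L, (c p : ℤ) * (K (m' + 1 - p) : ℤ) := by
          have h := hKrec m' (by omega)
          rw [h]; push_cast; ring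
        rw [hrecZ, if_neg (by omega), hKa, hKb]
        ring

end K

variable {c : ℕ → ℕ} {L : ℕ}

lemma getLast?_cons {x : ℕ} {l : List ℕ} (h : l ≠ []) :
    (x :: l).getLast? = l.getLast? := by
  have := getLast?_long (c := fun _ => 0) (s := 1) h x
  simpa [pat] using this

/-- legal 0/1 lists of length `m` starting and ending with `1` -/
noncomputable def Bs (c : ℕ → ℕ) (L m : ℕ) : Finset (List ℕ) :=
  @Finset.filter _ (fun l => l.head? = some 1) (Classical.decPred _) (LEs c L m)

lemma Ecnt_split (hcle : ∀ i, c i ≤ 1) (hc1 : c 1 = 1) (hL : 1 ≤ L) {r : ℕ} (hr : 2 ≤ r) :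
    Ecnt c L r = (Bs c L r).card + Ecnt c L (r - 1) := by
  classical
  have hsplit := Finset.card_filter_add_card_filter_not
    (s := LEs c L r) (fun l => l.head? = some 1)
  have himg : (LEs c L r).filter (fun l => ¬ l.head? = some 1)
      = (LEs c L (r - 1)).image (fun l' => 0 :: l') := by
    ext l
    simp only [Finset.mem_filter, Finset.mem_image]
    constructor
    · rintro ⟨hl, hhead⟩
      obtain ⟨hlen, hle, hleg, hlast⟩ := mem_LEs.mp hl
      cases l with
      | nil => simp at hlast
      | cons x t =>
          have hx : x = 0 := by
            have h1 := hle x (by simp)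
            have : x ≠ 1 := fun hx1 => hhead (by simp [hx1])
            omega
          subst hx
          have htne : t ≠ [] := by
            intro h0; subst h0; simp at hlast
          refine ⟨t, mem_LEs.mpr ⟨by simp at hlen; omega, fun y hy => hle y (by simp [hy]),
            legal_of_zero_cons hcle hc1 hL hleg, ?_⟩, rfl⟩
          rwa [getLast?_cons htne] at hlast
    · rintro ⟨l', hl', rfl⟩
      obtain ⟨hlen, hle, hleg, hlast⟩ := mem_LEs.mp hl'
      have hl'ne : l' ≠ [] := by intro h0; subst h0; simp at hlast
      refine ⟨mem_LEs.mpr ⟨by simp [hlen]; omega, ?_, legal_zero_cons hc1 hL hleg, ?_⟩, ?_⟩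
      · intro x hx
        rcases List.mem_cons.mp hx with rfl | hx
        · omega
        · exact hle x hx
      · rwa [getLast?_cons hl'ne]
      · simp
  have hcard : ((LEs c L r).filter (fun l => ¬ l.head? = some 1)).card = Ecnt c L (r - 1) := by
    rw [himg, Finset.card_image_of_injective _ (fun a b h => by simpa using h)]
    rfl
  have hbs : (LEs c L r).filter (fun l => l.head? = some 1) = Bs c L r := by
    ext l
    simp [Bs, Finset.mem_filter]
  rw [Ecnt, ← hsplit, hcard, hbs]

lemma indList_getElem? {m j : ℕ} (S : Finset ℕ) (h : j < m) :
    (indList m S)[j]? = some (if m - j ∈ S then 1 else 0) := by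
  simp [indList, h]

@[simp] lemma indList_length (m : ℕ) (S : Finset ℕ) : (indList m S).length = m := by
  simp [indList]

/-- the target sets are in bijection with `Bs` via `indList r`. -/
lemma setcount (hcle : ∀ i, c i ≤ 1) {r : ℕ} (hr : 1 ≤ r) :
    ({S : Finset ℕ | S ⊆ Finset.Icc 1 r ∧ 1 ∈ S ∧ r ∈ S ∧ IsLegalSet L c S}).ncard
      = (Bs c L r).card := by
  classical
  have hsup : ∀ S : Finset ℕ, S ⊆ Finset.Icc 1 r → r ∈ S → S.sup id = r := by
    intro S hsub hrS
    refine le_antisymm (Finset.sup_le fun i hi => ?_) (Finset.le_sup (f := id) hrS)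
    exact (Finset.mem_Icc.mp (hsub hi)).2
  have himg : (indList r) '' {S : Finset ℕ | S ⊆ Finset.Icc 1 r ∧ 1 ∈ S ∧ r ∈ S ∧
      IsLegalSet L c S} = ↑(Bs c L r) := by
    ext l
    simp only [Set.mem_image, Set.mem_setOf_eq, Finset.coe_filter, Bs, Finset.mem_coe,
      Finset.mem_filter, Set.mem_setOf_eq]
    constructor
    · rintro ⟨S, ⟨hsub, h1, hrS, hls⟩, rfl⟩
      have hs := hsup S hsub hrS
      refine ⟨mem_LEs.mpr ⟨indList_length r S, ?_, ?_, ?_⟩, ?_⟩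
      · intro x hx
        simp only [indList, List.mem_map] at hx
        obtain ⟨j, _, rfl⟩ := hx
        split <;> omega
      · have := hls.2 ⟨1, h1⟩
        rwa [hs] at this
      · rw [List.getLast?_eq_getElem?, indList_length, indList_getElem? S (by omega : r - 1 < r)]
        rw [show r - (r - 1) = 1 from by omega, if_pos h1]
      · have : (indList r S).head? = (indList r S)[0]? := by
          cases h : indList r S with
          | nil => simp
          | cons a t => simp
        rw [this, indList_getElem? S (by omega : 0 < r), Nat.sub_zero, if_pos hrS]
    · rintro ⟨hl, hhead⟩
      obtain ⟨hlen, hle, hleg, hlast⟩ := mem_LEs.mp hl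
      set S : Finset ℕ :=
        ((Finset.range r).filter (fun j => l[j]? = some 1)).image (fun j => r - j) with hS
      have hmem : ∀ i, i ∈ S ↔ ∃ j, j < r ∧ l[j]? = some 1 ∧ r - j = i := by
        intro i
        simp only [hS, Finset.mem_image, Finset.mem_filter, Finset.mem_range]
        constructor
        · rintro ⟨j, ⟨hj, hlj⟩, he⟩; exact ⟨j, hj, hlj, he⟩
        · rintro ⟨j, hj, hlj, he⟩; exact ⟨j, ⟨hj, hlj⟩, he⟩
      have hmem' : ∀ j, j < r → (r - j ∈ S ↔ l[j]? = some 1) := by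
        intro j hj
        rw [hmem]
        constructor
        · rintro ⟨j', hj', hlj', he⟩
          have : j' = j := by omega
          rwa [← this]
        · intro h
          exact ⟨j, hj, h, rfl⟩
      have h1S : (1 : ℕ) ∈ S := by
        rw [hmem]
        refine ⟨r - 1, by omega, ?_, by omega⟩
        rw [List.getLast?_eq_getElem?, hlen] at hlast
        exact hlast
      have hrS : r ∈ S := by
        rw [hmem]
        refine ⟨0, by omega, ?_, by omega⟩
        have hh : l.head? = l[0]? := by cases l <;> simp
        rwa [hh] at hhead
      have hsub : S ⊆ Finset.Icc 1 r := by
        intro i hi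
        rw [hmem] at hi
        obtain ⟨j, hj, -, he⟩ := hi
        rw [Finset.mem_Icc]
        omega
      have hind : indList r S = l := by
        apply List.ext_getElem?
        intro j
        by_cases hj : j < r
        · rw [indList_getElem? S hj]
          have hj' : j < l.length := by omega
          rw [List.getElem?_eq_getElem hj']
          have hx := hle _ (List.getElem_mem hj')
          by_cases h1 : l[j] = 1
          · rw [if_pos ((hmem' j hj).mpr (by rw [List.getElem?_eq_getElem hj', h1])), h1]
          · have h0 : l[j] = 0 := by omega
            rw [if_neg, h0]
            intro hmm
            have hmm2 := (hmem' j hj).mp hmm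
            rw [List.getElem?_eq_getElem hj', h0] at hmm2
            simp at hmm2
        · rw [List.getElem?_eq_none (by simp; omega), List.getElem?_eq_none (by omega)]
      refine ⟨S, ⟨hsub, h1S, hrS, ?_⟩, hind⟩
      refine ⟨fun i hi => (Finset.mem_Icc.mp (hsub hi)).1, fun _ => ?_⟩
      rw [hsup S hsub hrS, hind]
      exact hleg
  have hinj : Set.InjOn (indList r) {S : Finset ℕ | S ⊆ Finset.Icc 1 r ∧ 1 ∈ S ∧ r ∈ S ∧
      IsLegalSet L c S} := by
    intro S₁ h₁ S₂ h₂ he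
    apply Finset.ext
    intro i
    by_cases hi : i ∈ Finset.Icc 1 r
    · rw [Finset.mem_Icc] at hi
      have hj : r - i < r := by omega
      have e1 := indList_getElem? (m := r) S₁ hj
      have e2 := indList_getElem? (m := r) S₂ hj
      rw [he, e2] at e1
      have hri : r - (r - i) = i := by omega
      rw [hri] at e1
      by_cases m1 : i ∈ S₁ <;> by_cases m2 : i ∈ S₂ <;> simp [m1, m2] at e1 ⊢
    · constructor
      · intro hmm; exact absurd (h₁.1 hmm) hi
      · intro hmm; exact absurd (h₂.1 hmm) hi
  calc ({S : Finset ℕ | S ⊆ Finset.Icc 1 r ∧ 1 ∈ S ∧ r ∈ S ∧ IsLegalSet L c S}).ncard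
      = ((indList r) '' {S : Finset ℕ | S ⊆ Finset.Icc 1 r ∧ 1 ∈ S ∧ r ∈ S ∧
          IsLegalSet L c S}).ncard := (Set.ncard_image_of_injOn hinj).symm
    _ = (↑(Bs c L r) : Set (List ℕ)).ncard := by rw [himg]
    _ = (Bs c L r).card := Set.ncard_coe_finset _

end Kang

/-- For a Kangaroo recurrence `{K_n}` with `ℓ` hops of length `g`
and any `r ≥ 2`, the number of legal index sets `S ⊆ {1, …, r}` containing both `1`
and `r` equals `K_{r+1} - 2K_r + K_{r-1}`. -/
theorem kangaroo_count_both_ends (g ℓ : ℕ) (hg : 1 ≤ g) (hℓ : 1 ≤ ℓ)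
    (K : ℕ → ℕ) (hK1 : K 1 = 1)
    (hKsmall : ∀ n, 1 ≤ n → n < ℓ * g + 1 →
      K (n + 1) = (∑ p ∈ Finset.Icc 1 n, kanC g ℓ p * K (n + 1 - p)) + 1)
    (hKrec : ∀ n, ℓ * g + 1 ≤ n →
      K (n + 1) = ∑ p ∈ Finset.Icc 1 (ℓ * g + 1), kanC g ℓ p * K (n + 1 - p))
    (r : ℕ) (hr : 2 ≤ r) :
    ({S : Finset ℕ | S ⊆ Finset.Icc 1 r ∧ 1 ∈ S ∧ r ∈ S ∧
        IsLegalSet (ℓ * g + 1) (kanC g ℓ) S}.ncard : ℤ)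
      = (K (r + 1) : ℤ) - 2 * K r + K (r - 1) := by
  have hcle : ∀ i, kanC g ℓ i ≤ 1 := Kang.kanC_le_one g ℓ
  have hc1 : kanC g ℓ 1 = 1 := Kang.kanC_one g ℓ hg hℓ
  have hL2 : 2 ≤ ℓ * g + 1 := Kang.L_ge_two g ℓ hg hℓ
  have hL : 1 ≤ ℓ * g + 1 := by omega
  rw [Kang.setcount hcle (by omega : 1 ≤ r)]
  have hsplit := Kang.Ecnt_split hcle hc1 hL hr
  have e1 := Kang.EK g ℓ hg hℓ K hK1 hKsmall hKrec r (by omega)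
  have e2 := Kang.EK g ℓ hg hℓ K hK1 hKsmall hKrec (r - 1) (by omega)
  rw [show r - 1 + 1 = r from by omega] at e2
  have hsplitZ : ((Kang.Bs (kanC g ℓ) (ℓ * g + 1) r).card : ℤ)
      = (Kang.Ecnt (kanC g ℓ) (ℓ * g + 1) r : ℤ)
        - (Kang.Ecnt (kanC g ℓ) (ℓ * g + 1) (r - 1) : ℤ) := by
    rw [hsplit]
    push_cast
    ring
  rw [hsplitZ, e1, e2]
  ring
end

section
/- Let {K_n} be a Kangaroo recurrence with ℓ hops of length g. No legal decomposition contains all of the ℓ+1 summands K_i, K_{i+g}, K_{i+2g}, …, K_{i+ℓg} for any i ≥ 1; that is, a legal decomposition can contain at most ℓ−1 consecutive gaps of length exactly g. -/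
lemma kanC_ne_zero {g ℓ p : ℕ} (h : kanC g ℓ p ≠ 0) :
    1 ≤ p ∧ p ≤ ℓ * g + 1 ∧ p % g = 1 % g := by
  unfold kanC at h; split at h
  · assumption
  · simp at h

lemma key (g ℓ : ℕ) (hg : 1 ≤ g) (l : List ℕ)
    (h : IsLegal (ℓ * g + 1) (kanC g ℓ) l) :
    ∀ j, 1 ≤ j → ¬ (∀ m ≤ ℓ, l.getD (j + m * g - 1) 0 ≠ 0) := by
  induction h with
  | short m hm =>
    intro j hj hall
    refine hall ℓ le_rfl ?_
    apply List.getD_eq_default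
    have : ((List.range m).map fun i => kanC g ℓ (i + 1)).length = m := by simp
    omega
  | long s t a rest hs1 hsL ha hrest ih =>
    intro j hj hall
    set pre := (List.range (s - 1)).map fun i => kanC g ℓ (i + 1) with hpre
    have hprelen : pre.length = s - 1 := by simp [hpre]
    have hcs := kanC_ne_zero (Nat.ne_zero_of_lt ha)
    have ha0 : a = 0 := by
      have : kanC g ℓ s ≤ 1 := by unfold kanC; split <;> simp
      omega
    have hentry : ∀ n, n < s + t →
        (pre ++ a :: (List.replicate t 0 ++ rest)).getD n 0 ≠ 0 →
        n + 1 < s ∧ kanC g ℓ (n + 1) ≠ 0 := by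
      intro n hn hne
      rcases lt_or_ge n (s - 1) with h1 | h1
      · rw [List.getD_append _ _ _ _ (by omega), hpre,
          List.getD_eq_getElem _ _ (by simp; omega)] at hne
        simp at hne
        exact ⟨by omega, hne⟩
      · exfalso
        rw [List.getD_append_right _ _ _ _ (by omega), hprelen] at hne
        rcases Nat.eq_or_lt_of_le h1 with h2 | h2
        · rw [← h2, Nat.sub_self, List.getD_cons_zero] at hne
          exact hne ha0
        · obtain ⟨k, hk⟩ : ∃ k, n - (s - 1) = k + 1 := ⟨n - (s-1) - 1, by omega⟩
          rw [hk, List.getD_cons_succ] at hne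
          rw [List.getD_append _ _ _ _ (by simp; omega)] at hne
          simp [List.getD] at hne
    rcases le_or_gt j (s + t) with hle | hlt
    · -- some positions land in the block; derive contradiction
      obtain ⟨k, hkle, hkg', hktop⟩ :
          ∃ k, k ≤ ℓ ∧ k * g ≤ s + t - j ∧ (k = ℓ ∨ s + t - j < k * g + g) := by
        rcases le_or_gt ℓ ((s + t - j) / g) with hcase | hcase
        · refine ⟨ℓ, le_rfl, ?_, Or.inl rfl⟩
          have h1 : ℓ * g ≤ ((s + t - j) / g) * g := Nat.mul_le_mul_right g hcase
          have h2 := Nat.div_add_mod (s + t - j) g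
          have h3 : ((s + t - j) / g) * g = g * ((s + t - j) / g) := Nat.mul_comm _ _
          omega
        · refine ⟨(s + t - j) / g, le_of_lt hcase, ?_, Or.inr ?_⟩ <;>
          · have h2 := Nat.div_add_mod (s + t - j) g
            have h4 : (s + t - j) % g < g := Nat.mod_lt _ (by omega)
            have h3 : ((s + t - j) / g) * g = g * ((s + t - j) / g) := Nat.mul_comm _ _
            omega
      have hkg : j + k * g ≤ s + t := by omega
      have hne := hall k hkle
      have hpos : j + k * g - 1 < s + t := by omega
      obtain ⟨hlt', hkan⟩ := hentry _ hpos hne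
      have heq : j + k * g - 1 + 1 = j + k * g := by omega
      rw [heq] at hlt' hkan
      obtain ⟨_, hple, hpmod⟩ := kanC_ne_zero hkan
      have hdvd : g ∣ s - (j + k * g) :=
        (Nat.modEq_iff_dvd' (le_of_lt hlt')).mp (hpmod.trans hcs.2.2.symm)
      have hsge : j + k * g + g ≤ s := by
        obtain ⟨q, hq⟩ := hdvd
        have hq1 : 1 ≤ q := by
          rcases Nat.eq_zero_or_pos q with h0 | h0
          · subst h0; simp at hq; omega
          · exact h0
        have h2 : g * 1 ≤ g * q := Nat.mul_le_mul_left g hq1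
        omega
      rcases hktop with hkl | hkl
      · subst hkl; omega
      · omega
    · -- all positions land in rest
      refine ih (j - (s + t)) (by omega) ?_
      intro m hm
      have hne := hall m hm
      rw [List.getD_append_right _ _ _ _ (by omega), hprelen] at hne
      obtain ⟨k, hk⟩ : ∃ k, j + m * g - 1 - (s - 1) = k + 1 :=
        ⟨j + m * g - 1 - (s - 1) - 1, by omega⟩
      rw [hk, List.getD_cons_succ,
        List.getD_append_right _ _ _ _ (by simp; omega)] at hne
      simp only [List.length_replicate] at hne
      have : k - t = j - (s + t) + m * g - 1 := by omega
      rwa [this] at hne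

/-- For a Kangaroo recurrence with `ℓ` hops of length `g`, no legal
index set contains all of the `ℓ+1` indices `i, i+g, i+2g, …, i+ℓg` for any `i ≥ 1`;
that is, a legal decomposition has at most `ℓ-1` consecutive gaps of length exactly `g`. -/
theorem kangaroo_no_full_run (g ℓ : ℕ) (hg : 1 ≤ g) (hℓ : 1 ≤ ℓ)
    (K : ℕ → ℕ) (hK1 : K 1 = 1)
    (hKsmall : ∀ n, 1 ≤ n → n < ℓ * g + 1 →
      K (n + 1) = (∑ p ∈ Finset.Icc 1 n, kanC g ℓ p * K (n + 1 - p)) + 1)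
    (hKrec : ∀ n, ℓ * g + 1 ≤ n →
      K (n + 1) = ∑ p ∈ Finset.Icc 1 (ℓ * g + 1), kanC g ℓ p * K (n + 1 - p))
    (S : Finset ℕ) (hS : IsLegalSet (ℓ * g + 1) (kanC g ℓ) S)
    (i : ℕ) (hi : 1 ≤ i) :
    ¬ (∀ m ≤ ℓ, i + m * g ∈ S) := by
  intro hall
  obtain ⟨hpos, hleg⟩ := hS
  have hiS : i ∈ S := by have := hall 0 (by omega); simpa using this
  have hne : S.Nonempty := ⟨i, hiS⟩
  set M := S.sup id with hM
  have hmem : ∀ x ∈ S, x ≤ M := fun x hx => Finset.le_sup (f := id) hx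
  have hMge : i + ℓ * g ≤ M := hmem _ (hall ℓ le_rfl)
  have hℓg : 1 * g ≤ ℓ * g := Nat.mul_le_mul_right g hℓ
  refine key g ℓ hg (indList M S) (hleg hne) (M + 1 - (i + ℓ * g)) (by omega) ?_
  intro m hm
  have hmg : m * g ≤ ℓ * g := Nat.mul_le_mul_right g hm
  have hmem' : i + (ℓ - m) * g ∈ S := hall (ℓ - m) (by omega)
  have hsub : (ℓ - m) * g = ℓ * g - m * g := Nat.sub_mul ℓ m g
  have hn : (M + 1 - (i + ℓ * g)) + m * g - 1 = M - (i + (ℓ - m) * g) := by omega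
  rw [hn, indList, List.getD_eq_getElem _ _ (by simp; omega)]
  simp only [List.getElem_map, List.getElem_range]
  have h2 : M - (M - (i + (ℓ - m) * g)) = i + (ℓ - m) * g := by omega
  rw [h2, if_pos hmem']
  simp
end

section
/- Let {K_n} be a Kangaroo recurrence with ℓ hops of length g. For every s ≥ 1, the number of index sets S ⊆ {1, …, s} that are legal (where the empty set is legal, and a nonempty S is legal if it is the index set of the legal decomposition of Σ_{i∈S} K_i) equals K_{s+1}. -/
section Helpers

variable {g ℓ : ℕ}

lemma kanC_le_one (p : ℕ) : kanC g ℓ p ≤ 1 := by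
  unfold kanC; split <;> simp

lemma kanC_eq_one_iff {p : ℕ} :
    kanC g ℓ p = 1 ↔ (1 ≤ p ∧ p ≤ ℓ * g + 1 ∧ p % g = 1 % g) := by
  unfold kanC; split <;> simp_all

lemma mod_succ_iff (hg : 1 ≤ g) {j : ℕ} : (j + 1) % g = 1 % g ↔ g ∣ j := by
  constructor
  · intro h
    have h2 : (1 : ℕ) ≡ j + 1 [MOD g] := h.symm
    have := (Nat.modEq_iff_dvd' (by omega)).mp h2
    simpa using this
  · rintro ⟨m, rfl⟩
    rw [Nat.mul_add_mod]

lemma kanC_chain (hg : 1 ≤ g) {k : ℕ} (hk : k ≤ ℓ) : kanC g ℓ (k * g + 1) = 1 := by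
  rw [kanC_eq_one_iff]
  refine ⟨by omega, by have := Nat.mul_le_mul_right g hk; omega, (mod_succ_iff hg).mpr ⟨k, mul_comm _ _⟩⟩

lemma kanC_one (hg : 1 ≤ g) (hℓ : 1 ≤ ℓ) : kanC g ℓ 1 = 1 := by
  have := kanC_chain (ℓ := ℓ) hg (k := 0) (by omega); simpa using this

/-- characterize `kanC (j+1) = 1` when `j + 1 ≤ ℓ*g+1` is known -/
lemma kanC_succ_eq_one_iff (hg : 1 ≤ g) {j : ℕ} (hj : j + 1 ≤ ℓ * g + 1) :
    kanC g ℓ (j + 1) = 1 ↔ g ∣ j := by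
  rw [kanC_eq_one_iff, mod_succ_iff hg]
  simp only [le_add_iff_nonneg_left, zero_le, true_and, hj]

@[simp] lemma length_indList (n : ℕ) (S : Finset ℕ) : (indList n S).length = n := by
  simp [indList]

@[simp] lemma indList_zero (S : Finset ℕ) : indList 0 S = [] := by simp [indList]

lemma indList_succ (m : ℕ) (S : Finset ℕ) :
    indList (m + 1) S = (if m + 1 ∈ S then 1 else 0) :: indList m S := by
  unfold indList
  rw [List.range_succ_eq_map, List.map_cons, List.map_map]
  simp only [Nat.sub_zero]
  congr 1
  apply List.map_congr_left
  intro a _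
  simp [Nat.succ_sub_succ]

lemma indList_split {m n : ℕ} (h : m ≤ n) (S : Finset ℕ) :
    indList n S =
      ((List.range (n - m)).map fun j => if n - j ∈ S then 1 else 0) ++ indList m S := by
  unfold indList
  conv_lhs => rw [show n = (n - m) + m by omega, List.range_add, List.map_append]
  congr 1
  · apply List.map_congr_left; intro a ha
    simp only [List.mem_range] at ha
    congr 2
    omega
  · rw [List.map_map]
    apply List.map_congr_left
    intro a ha
    simp only [List.mem_range] at ha
    simp only [Function.comp_apply]
    congr 2
    omega

end Helpers

section Legal

variable {g ℓ : ℕ}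

lemma isLegal_nil (hg : 1 ≤ g) (hℓ : 1 ≤ ℓ) : IsLegal (ℓ * g + 1) (kanC g ℓ) [] := by
  have := IsLegal.short (L := ℓ * g + 1) (c := kanC g ℓ) 0 (by omega)
  simpa using this

lemma isLegal_replicate_append (hg : 1 ≤ g) (hℓ : 1 ≤ ℓ) {l : List ℕ}
    (h : IsLegal (ℓ * g + 1) (kanC g ℓ) l) (u : ℕ) :
    IsLegal (ℓ * g + 1) (kanC g ℓ) (List.replicate u 0 ++ l) := by
  cases u with
  | zero => simpa using h
  | succ u =>
    have := IsLegal.long (L := ℓ * g + 1) (c := kanC g ℓ) 1 u 0 l le_rfl (by omega)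
      (by rw [kanC_one hg hℓ]; omega) h
    simpa [List.replicate_succ] using this

lemma isLegal_of_cons_zero (hg : 1 ≤ g) (hℓ : 1 ≤ ℓ) {l : List ℕ}
    (h : IsLegal (ℓ * g + 1) (kanC g ℓ) (0 :: l)) : IsLegal (ℓ * g + 1) (kanC g ℓ) l := by
  have hc1 : kanC g ℓ 1 = 1 := kanC_one hg hℓ
  generalize heq0 : (0 :: l : List ℕ) = l0 at h
  cases h with
  | short m hm =>
    have heq := heq0
    exfalso
    cases m with
    | zero => simp at heq
    | succ m =>
      rw [List.range_succ_eq_map, List.map_cons] at heq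
      have : 0 = kanC g ℓ 1 := by
        have := congrArg (fun x => x.headI) heq
        simpa using this
      omega
  | long s t a rest hs1 hsL ha hrest =>
    have heq := heq0
    rcases Nat.eq_or_lt_of_le hs1 with hs | hs
    · -- s = 1
      subst hs
      simp only [Nat.sub_self, List.range_zero, List.map_nil, List.nil_append,
        List.cons.injEq] at heq
      rcases heq with ⟨_, heq2⟩
      rw [heq2]
      exact isLegal_replicate_append hg hℓ hrest t
    · exfalso
      have hs2 : 1 ≤ s - 1 := by omega
      obtain ⟨m, hm⟩ : ∃ m, s - 1 = m + 1 := ⟨s - 2, by omega⟩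
      rw [hm, List.range_succ_eq_map, List.map_cons, List.cons_append] at heq
      have : 0 = kanC g ℓ 1 := by
        have := congrArg (fun x => x.headI) heq
        simpa using this
      omega

lemma isLegal_of_replicate_append (hg : 1 ≤ g) (hℓ : 1 ≤ ℓ) {l : List ℕ} (u : ℕ)
    (h : IsLegal (ℓ * g + 1) (kanC g ℓ) (List.replicate u 0 ++ l)) :
    IsLegal (ℓ * g + 1) (kanC g ℓ) l := by
  induction u with
  | zero => simpa using h
  | succ u ih =>
    apply ih
    apply isLegal_of_cons_zero hg hℓ
    simpa [List.replicate_succ] using h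

lemma isLegal_block (hg : 1 ≤ g) (hℓ : 1 ≤ ℓ) {k : ℕ} (hk : k ≤ ℓ) (t : ℕ) {rest : List ℕ}
    (h : IsLegal (ℓ * g + 1) (kanC g ℓ) rest) :
    IsLegal (ℓ * g + 1) (kanC g ℓ)
      (((List.range (k * g)).map fun i => kanC g ℓ (i + 1)) ++
        0 :: (List.replicate t 0 ++ rest)) := by
  have := IsLegal.long (L := ℓ * g + 1) (c := kanC g ℓ) (k * g + 1) t 0 rest (by omega)
    (by have := Nat.mul_le_mul_right g hk; omega)
    (by rw [kanC_chain hg hk]; omega) h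
  simpa using this

end Legal

section GSdef

def chainB (g b k : ℕ) : Finset ℕ := (Finset.range k).image fun j => b + j * g

inductive GS (g ℓ : ℕ) : Finset ℕ → Prop
  | empty : GS g ℓ ∅
  | cons (b k : ℕ) (S : Finset ℕ) (hb : 1 ≤ b) (hk : 1 ≤ k) (hkl : k ≤ ℓ)
      (hlt : ∀ x ∈ S, x + g < b) (hS : GS g ℓ S) : GS g ℓ (chainB g b k ∪ S)

variable {g ℓ : ℕ}

lemma kanC_succ_eq_zero_of_not_dvd (hg : 1 ≤ g) {j : ℕ} (hd : ¬ g ∣ j) :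
    kanC g ℓ (j + 1) = 0 := by
  unfold kanC
  rw [if_neg]
  rintro ⟨-, -, hmod⟩
  exact hd ((mod_succ_iff hg).mp hmod)

lemma mem_chainB {b k x : ℕ} : x ∈ chainB g b k ↔ ∃ m, m < k ∧ x = b + m * g := by
  simp [chainB, eq_comm]

lemma not_mem_chainB_of_lt {b k x : ℕ} (hx : x < b) : x ∉ chainB g b k := fun hc => by
  rcases mem_chainB.mp hc with ⟨m, _, he⟩; omega

lemma GS_pos {S : Finset ℕ} (h : GS g ℓ S) : ∀ x ∈ S, 1 ≤ x := by
  induction h with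
  | empty => simp
  | cons b k S hb hk hkl hlt hS ih =>
    intro x hx
    rcases Finset.mem_union.mp hx with hc | hs
    · rcases mem_chainB.mp hc with ⟨m, _, rfl⟩; omega
    · exact ih x hs

lemma kmul_eq {k : ℕ} (hk : 1 ≤ k) : (k - 1) * g + g = k * g := by
  obtain ⟨k', rfl⟩ : ∃ k', k = k' + 1 := ⟨k - 1, by omega⟩
  simp [Nat.succ_sub_one, Nat.succ_mul]

lemma mem_chain_iff_dvd (hg : 1 ≤ g) {b k j : ℕ} (hk : 1 ≤ k)
    (hjk : j < k * g) (hjn : j < b + (k - 1) * g) :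
    (b + (k - 1) * g - j ∈ chainB g b k) ↔ g ∣ j := by
  have hkg : (k - 1) * g + g = k * g := kmul_eq hk
  constructor
  · intro hmem
    rcases mem_chainB.mp hmem with ⟨m, hm, he⟩
    have hsub : (k - 1 - m) * g = (k - 1) * g - m * g := Nat.sub_mul _ _ _
    have hmle : m * g ≤ (k - 1) * g := Nat.mul_le_mul_right g (by omega)
    have hcm : g * (k - 1 - m) = (k - 1 - m) * g := mul_comm _ _
    exact ⟨k - 1 - m, by omega⟩
  · rintro ⟨m, rfl⟩
    have hm : m < k := by
      have : g * m < g * k := by rw [mul_comm g k]; exact hjk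
      exact Nat.lt_of_mul_lt_mul_left this
    refine mem_chainB.mpr ⟨k - 1 - m, by omega, ?_⟩
    have hsub : (k - 1 - m) * g = (k - 1) * g - m * g := Nat.sub_mul _ _ _
    have hmle : m * g ≤ (k - 1) * g := Nat.mul_le_mul_right g (by omega)
    have hcm : g * m = m * g := mul_comm _ _
    omega

lemma sup_chain_union (hg : 1 ≤ g) {b k : ℕ} (hk : 1 ≤ k) {S : Finset ℕ}
    (hlt : ∀ x ∈ S, x + g < b) :
    (chainB g b k ∪ S).sup id = b + (k - 1) * g := by
  apply le_antisymm
  · apply Finset.sup_le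
    intro x hx
    rcases Finset.mem_union.mp hx with hc | hs
    · rcases mem_chainB.mp hc with ⟨m, hm, rfl⟩
      have : m * g ≤ (k - 1) * g := Nat.mul_le_mul_right g (by omega)
      simp only [id]; omega
    · have := hlt x hs; simp only [id]; omega
  · have hm : b + (k - 1) * g ∈ chainB g b k ∪ S :=
      Finset.mem_union_left _ (mem_chainB.mpr ⟨k - 1, by omega, rfl⟩)
    exact Finset.le_sup (f := id) hm

lemma partA (hg : 1 ≤ g) (hℓ : 1 ≤ ℓ) {S : Finset ℕ} (h : GS g ℓ S) :
    IsLegalSet (ℓ * g + 1) (kanC g ℓ) S := by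
  induction h with
  | empty =>
    exact ⟨by simp, fun h => absurd rfl (Finset.nonempty_iff_ne_empty.mp h)⟩
  | cons b k S hb hk hkl hlt hS ih =>
    refine ⟨?_, fun _ => ?_⟩
    · intro x hx
      rcases Finset.mem_union.mp hx with hc | hs
      · rcases mem_chainB.mp hc with ⟨m, _, rfl⟩; omega
      · exact ih.1 x hs
    · rw [sup_chain_union hg hk hlt]
      have hkg : (k - 1) * g + g = k * g := kmul_eq hk
      have hkgl : (k - 1) * g ≤ (ℓ - 1) * g := Nat.mul_le_mul_right g (by omega)
      have hlg : (ℓ - 1) * g + g = ℓ * g := kmul_eq hℓ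
      by_cases hbg : b ≤ g
      · -- small b : S = ∅, use short
        have hSe : S = ∅ := Finset.eq_empty_of_forall_notMem fun x hx => by
          have h1 := hlt x hx; have h2 := ih.1 x hx; omega
        rw [hSe, Finset.union_empty]
        have hnL : b + (k - 1) * g < ℓ * g + 1 := by omega
        have hlist : indList (b + (k - 1) * g) (chainB g b k) =
            (List.range (b + (k - 1) * g)).map fun i => kanC g ℓ (i + 1) := by
          unfold indList
          apply List.map_congr_left
          intro j hj
          rw [List.mem_range] at hj
          have hiff : (b + (k - 1) * g - j ∈ chainB g b k) ↔ g ∣ j :=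
            mem_chain_iff_dvd hg hk (by omega) hj
          by_cases hd : g ∣ j
          · rw [if_pos (hiff.mpr hd), eq_comm, kanC_succ_eq_one_iff hg (by omega)]
            exact hd
          · rw [if_neg (fun hmem => hd (hiff.mp hmem)), eq_comm,
              kanC_succ_eq_zero_of_not_dvd hg hd]
        rw [hlist]
        exact IsLegal.short _ hnL
      · -- big b
        have hbg' : g + 1 ≤ b := by omega
        set M' := S.sup id with hM'
        have hM'lt : M' + g < b := by
          rcases S.eq_empty_or_nonempty with hSe | hSne
          · rw [hM', hSe]; simpa using hbg'
          · obtain ⟨x, hx, he⟩ := Finset.exists_mem_eq_sup S hSne id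
            rw [hM', he]; exact hlt x hx
        have hrest : IsLegal (ℓ * g + 1) (kanC g ℓ) (indList M' S) := by
          rcases S.eq_empty_or_nonempty with hSe | hSne
          · rw [hM', hSe]; simpa using isLegal_nil hg hℓ
          · exact ih.2 hSne
        set t := b - g - 1 - M' with ht
        have hsplit := indList_split (m := M') (n := b + (k - 1) * g) (by omega)
          (chainB g b k ∪ S)
        have h1 : indList M' (chainB g b k ∪ S) = indList M' S := by
          unfold indList
          apply List.map_congr_left
          intro j hj
          rw [List.mem_range] at hj
          have hnc : M' - j ∉ chainB g b k := not_mem_chainB_of_lt (by omega)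
          simp [Finset.mem_union, hnc]
        have h2 : ((List.range (b + (k - 1) * g - M')).map
              fun j => if b + (k - 1) * g - j ∈ chainB g b k ∪ S then 1 else 0)
            = (((List.range (k * g)).map fun i => kanC g ℓ (i + 1)) ++
                0 :: List.replicate t 0) := by
          have hnM : b + (k - 1) * g - M' = k * g + (t + 1) := by omega
          rw [hnM, List.range_add, List.map_append]
          congr 1
          · apply List.map_congr_left
            intro j hj
            rw [List.mem_range] at hj
            have hns : b + (k - 1) * g - j ∉ S := fun hmem => by
              have := hlt _ hmem; omega
            have hiff : (b + (k - 1) * g - j ∈ chainB g b k) ↔ g ∣ j :=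
              mem_chain_iff_dvd hg hk hj (by omega)
            by_cases hd : g ∣ j
            · rw [if_pos (Finset.mem_union_left _ (hiff.mpr hd)), eq_comm,
                kanC_succ_eq_one_iff hg (by omega)]
              exact hd
            · rw [if_neg, eq_comm, kanC_succ_eq_zero_of_not_dvd hg hd]
              intro hmem
              rcases Finset.mem_union.mp hmem with hc | hs
              · exact hd (hiff.mp hc)
              · exact hns hs
          · rw [show (0 :: List.replicate t 0 : List ℕ) = List.replicate (t + 1) 0 from rfl]
            rw [List.map_map, List.eq_replicate_iff]
            constructor
            · simp
            · intro y hy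
              rcases List.mem_map.mp hy with ⟨j, hj, rfl⟩
              rw [List.mem_range] at hj
              simp only [Function.comp_apply]
              rw [if_neg]
              intro hmem
              rcases Finset.mem_union.mp hmem with hc | hs
              · exact not_mem_chainB_of_lt (by omega) hc
              · have := hlt _ hs
                have h2 := Finset.le_sup (f := id) hs
                simp only [id] at h2
                omega
        rw [hsplit, h1, h2, List.append_assoc, List.cons_append]
        exact isLegal_block hg hℓ hkl t hrest

end GSdef

section PartB

variable {g ℓ : ℕ}

lemma repl_pre : ∀ (t m : ℕ) (S : Finset ℕ) (rest : List ℕ),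
    List.replicate t 0 ++ rest = indList m S →
    rest = indList (m - t) S ∧ ∀ x, m - t < x → x ≤ m → x ∉ S := by
  intro t
  induction t with
  | zero =>
    intro m S rest h
    refine ⟨by simpa using h, fun x h1 h2 _ => by omega⟩
  | succ t ih =>
    intro m S rest h
    have hlen : t + 1 + rest.length = m := by
      have h' := congrArg List.length h; simpa using h'
    obtain ⟨m', rfl⟩ : ∃ m', m = m' + 1 := ⟨m - 1, by omega⟩
    rw [indList_succ, List.replicate_succ, List.cons_append] at h
    injection h with h0 h1
    have hm : m' + 1 ∉ S := by
      intro hc; rw [if_pos hc] at h0; omega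
    obtain ⟨h2, h3⟩ := ih m' S rest h1
    constructor
    · rw [h2]; congr 1; omega
    · intro x hx1 hx2
      rcases eq_or_lt_of_le hx2 with he | hlt
      · exact he ▸ hm
      · exact h3 x (by omega) (by omega)

lemma partB (hg : 1 ≤ g) (hℓ : 1 ≤ ℓ) :
    ∀ n (S : Finset ℕ), S.sup id = n → (∀ x ∈ S, 1 ≤ x) → S.Nonempty →
      IsLegal (ℓ * g + 1) (kanC g ℓ) (indList n S) → GS g ℓ S := by
  intro n
  induction n using Nat.strong_induction_on with
  | _ n IH =>
  intro S hsup hpos hne hleg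
  have hnS : n ∈ S := by
    obtain ⟨x, hx, he⟩ := Finset.exists_mem_eq_sup S hne id
    have : n = x := by rw [← hsup, he]; rfl
    exact this ▸ hx
  have hbound : ∀ x ∈ S, x ≤ n := fun x hx => hsup ▸ Finset.le_sup (f := id) hx
  have hn1 : 1 ≤ n := hpos n hnS
  generalize hl0 : indList n S = l0 at hleg
  cases hleg with
  | short m hm =>
    have hlen : n = m := by
      have h' := congrArg List.length hl0; simpa using h'
    subst hlen
    unfold indList at hl0
    have hpw : ∀ j < n, (if n - j ∈ S then 1 else 0) = kanC g ℓ (j + 1) :=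
      fun j hj => List.map_inj_left.mp hl0 j (List.mem_range.mpr hj)
    set D := (n - 1) / g with hD
    have hmodlt : (n - 1) % g < g := Nat.mod_lt _ (by omega)
    have hEq : n - 1 = D * g + (n - 1) % g := by
      rw [hD]; exact (Nat.div_add_mod' _ _).symm
    have hDl : D + 1 ≤ ℓ := by
      by_contra hc
      have h1 : ℓ * g ≤ D * g := Nat.mul_le_mul_right g (by omega)
      omega
    set b := n - D * g with hb
    have hSchain : S = chainB g b (D + 1) := by
      ext x
      constructor
      · intro hx
        have hx1 := hpos x hx; have hx2 := hbound x hx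
        have hj : n - x < n := by omega
        have hpj := hpw (n - x) hj
        rw [show n - (n - x) = x by omega, if_pos hx] at hpj
        have hdvd : g ∣ (n - x) := by
          rw [eq_comm, kanC_succ_eq_one_iff hg (by omega)] at hpj; exact hpj
        obtain ⟨m, hm2⟩ := hdvd
        have hcm : g * m = m * g := mul_comm _ _
        have hmD : m ≤ D := by
          rw [hD]
          refine (Nat.le_div_iff_mul_le (by omega)).mpr ?_
          omega
        refine mem_chainB.mpr ⟨D - m, by omega, ?_⟩
        have hsub : (D - m) * g = D * g - m * g := Nat.sub_mul _ _ _
        have hmle : m * g ≤ D * g := Nat.mul_le_mul_right g hmD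
        omega
      · intro hx
        rcases mem_chainB.mp hx with ⟨m, hmlt, rfl⟩
        have hmD : m ≤ D := by omega
        have hsub : (D - m) * g = D * g - m * g := Nat.sub_mul _ _ _
        have hmle : m * g ≤ D * g := Nat.mul_le_mul_right g hmD
        have hj : (D - m) * g < n := by omega
        have hpj := hpw ((D - m) * g) hj
        rw [(kanC_succ_eq_one_iff hg (by omega)).mpr ⟨D - m, mul_comm _ _⟩] at hpj
        have hmem : n - (D - m) * g ∈ S := by
          by_contra hc; rw [if_neg hc] at hpj; omega
        rwa [show n - (D - m) * g = b + m * g from by omega] at hmem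
    rw [hSchain, show chainB g b (D + 1) = chainB g b (D + 1) ∪ ∅ by simp]
    exact GS.cons b (D + 1) ∅ (by omega) (Nat.le_add_left 1 D) hDl (by simp) GS.empty
  | long s t a rest hs1 hsL ha hrest =>
    have hka : kanC g ℓ s ≤ 1 := kanC_le_one s
    have ha0 : a = 0 := by omega
    have hks : kanC g ℓ s = 1 := by omega
    rw [kanC_eq_one_iff] at hks
    obtain ⟨k, hk⟩ : ∃ k, s - 1 = k * g := by
      obtain ⟨s', rfl⟩ : ∃ s', s = s' + 1 := ⟨s - 1, by omega⟩
      obtain ⟨m, hm⟩ := (mod_succ_iff hg).mp hks.2.2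
      exact ⟨m, by simpa [mul_comm] using hm⟩
    have hkl : k ≤ ℓ := by
      by_contra hc
      push_neg at hc
      have h1 : (ℓ + 1) * g ≤ k * g := Nat.mul_le_mul_right g (by omega)
      have h3 : (ℓ + 1) * g = ℓ * g + g := Nat.succ_mul _ _
      omega
    have hlen : (s - 1) + 1 + t + rest.length = n := by
      have h' := congrArg List.length hl0; simp at h'; omega
    set r := rest.length with hr
    set m1 := n - (s - 1) with hm1
    have hsplit := indList_split (m := m1) (n := n) (by omega) S
    rw [hsplit] at hl0
    have hl : (n - m1) = s - 1 := by omega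
    rw [hl] at hl0
    have hpre1 : ((List.range (s - 1)).map fun j => if n - j ∈ S then 1 else 0) =
        ((List.range (s - 1)).map fun i => kanC g ℓ (i + 1)) :=
      (List.append_inj hl0 (by simp)).1
    have hpre2 : indList m1 S = a :: (List.replicate t 0 ++ rest) :=
      (List.append_inj hl0 (by simp)).2
    have hpw : ∀ j < s - 1, (if n - j ∈ S then 1 else 0) = kanC g ℓ (j + 1) :=
      fun j hj => List.map_inj_left.mp hpre1 j (List.mem_range.mpr hj)
    obtain ⟨m1', hm1'⟩ : ∃ m1', m1 = m1' + 1 := ⟨m1 - 1, by omega⟩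
    rw [hm1', indList_succ] at hpre2
    injection hpre2 with hp0 hp1
    have hm1S : m1' + 1 ∉ S := by
      intro hc; rw [if_pos hc] at hp0; omega
    obtain ⟨hrest_eq, hzeros⟩ := repl_pre t m1' S rest hp1.symm
    have hk1 : 1 ≤ k := by
      by_contra hc
      have hk0 : k = 0 := by omega
      have : m1' + 1 = n := by
        rw [hk0] at hk; omega
      exact hm1S (this ▸ hnS)
    set m2 := m1' - t with hm2g
    set S2 := S.filter (fun x => x ≤ m2) with hS2
    have hS2sub : S2 ⊆ S := Finset.filter_subset _ _
    set b := m1' + 1 + g with hbd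
    have hkgeq : (k - 1) * g + g = k * g := kmul_eq hk1
    have hbn : b + (k - 1) * g = n := by omega
    have hSdecomp : S = chainB g b k ∪ S2 := by
      ext x
      constructor
      · intro hx
        have hx1 := hpos x hx; have hx2 := hbound x hx
        rcases lt_trichotomy x (m1' + 1) with hlt1 | heq1 | hgt1
        · rcases le_or_gt x m2 with hle2 | hgt2
          · exact Finset.mem_union_right _ (Finset.mem_filter.mpr ⟨hx, hle2⟩)
          · exact absurd hx (hzeros x hgt2 (by omega))
        · exact absurd hx (heq1 ▸ hm1S)
        · apply Finset.mem_union_left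
          have hj : n - x < s - 1 := by omega
          have hpj := hpw (n - x) hj
          rw [show n - (n - x) = x by omega, if_pos hx] at hpj
          have hdvd : g ∣ (n - x) := by
            rw [eq_comm, kanC_succ_eq_one_iff hg (by omega)] at hpj; exact hpj
          have hc2 := (mem_chain_iff_dvd hg hk1 (b := b) (j := n - x) (by omega) (by omega)).mpr hdvd
          rw [hbn] at hc2
          rwa [show n - (n - x) = x from by omega] at hc2
      · intro hx
        rcases Finset.mem_union.mp hx with hc | hs2
        · rcases mem_chainB.mp hc with ⟨m, hmlt, rfl⟩
          have hsub : (k - 1 - m) * g = (k - 1) * g - m * g := Nat.sub_mul _ _ _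
          have hmle : m * g ≤ (k - 1) * g := Nat.mul_le_mul_right g (by omega)
          have hj : (k - 1 - m) * g < s - 1 := by omega
          have hpj := hpw ((k - 1 - m) * g) hj
          rw [(kanC_succ_eq_one_iff hg (by omega)).mpr ⟨k - 1 - m, mul_comm _ _⟩] at hpj
          have hmem : n - (k - 1 - m) * g ∈ S := by
            by_contra hcc; rw [if_neg hcc] at hpj; omega
          rwa [show n - (k - 1 - m) * g = b + m * g from by omega] at hmem
        · exact hS2sub hs2
    have hltS2 : ∀ x ∈ S2, x + g < b := fun x hx => by
      have := (Finset.mem_filter.mp hx).2; omega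
    rw [hSdecomp]
    rcases S2.eq_empty_or_nonempty with hS2e | hS2ne
    · rw [hS2e]
      exact GS.cons b k ∅ (by omega) hk1 hkl (by simp) GS.empty
    · refine GS.cons b k S2 (by omega) hk1 hkl hltS2 ?_
      set M2 := S2.sup id with hM2
      have hM2m : M2 ≤ m2 := Finset.sup_le fun x hx => (Finset.mem_filter.mp hx).2
      have hM2n : M2 < n := by omega
      refine IH M2 hM2n S2 rfl (fun x hx => hpos x (hS2sub hx)) hS2ne ?_
      have hleg2 : IsLegal (ℓ * g + 1) (kanC g ℓ) (indList m2 S) := by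
        rw [show m2 = m1' - t from rfl, ← hrest_eq]; exact hrest
      have e1 : indList m2 S = List.replicate (m2 - M2) 0 ++ indList M2 S := by
        rw [indList_split (m := M2) (n := m2) hM2m S]
        congr 1
        rw [List.eq_replicate_iff]
        refine ⟨by simp, ?_⟩
        intro y hy
        rcases List.mem_map.mp hy with ⟨j, hj, rfl⟩
        rw [List.mem_range] at hj
        rw [if_neg]
        intro hmem
        have h1 : m2 - j ∈ S2 := Finset.mem_filter.mpr ⟨hmem, by omega⟩
        have h2 := Finset.le_sup (f := id) h1
        simp only [id] at h2
        omega
      have e2 : indList M2 S = indList M2 S2 := by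
        unfold indList
        apply List.map_congr_left
        intro j hj
        rw [List.mem_range] at hj
        have hiff : (M2 - j ∈ S) ↔ (M2 - j ∈ S2) :=
          ⟨fun h => Finset.mem_filter.mpr ⟨h, by omega⟩, fun h => hS2sub h⟩
        simp [hiff]
      rw [e1, e2] at hleg2
      exact isLegal_of_replicate_append hg hℓ _ hleg2

end PartB

section Counting

variable {g ℓ : ℕ}

noncomputable def legalF (g ℓ n : ℕ) : Finset (Finset ℕ) :=
  @Finset.filter _ (fun S => GS g ℓ S) (Classical.decPred _) (Finset.Icc 1 n).powerset

lemma mem_legalF {n : ℕ} {S : Finset ℕ} :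
    S ∈ legalF g ℓ n ↔ S ⊆ Finset.Icc 1 n ∧ GS g ℓ S := by
  simp [legalF, Finset.mem_filter, Finset.mem_powerset]

lemma legalF_zero : legalF g ℓ 0 = {∅} := by
  ext S
  rw [mem_legalF, Finset.mem_singleton]
  constructor
  · rintro ⟨hsub, -⟩
    rw [Finset.eq_empty_iff_forall_notMem]
    intro x hx
    have := hsub hx
    rw [Finset.mem_Icc] at this
    omega
  · rintro rfl
    exact ⟨by simp, GS.empty⟩

lemma card_legalF_zero : (legalF g ℓ 0).card = 1 := by rw [legalF_zero]; simp

lemma distinct_k (hg : 1 ≤ g) {n k1 k2 : ℕ} (h1 : 1 ≤ k1) (h2 : k1 < k2)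
    (hk2d : (k2 - 1) * g ≤ n - 1) (hn : 1 ≤ n)
    {S1 S2 : Finset ℕ} (hS1 : ∀ x ∈ S1, 1 ≤ x ∧ x ≤ n - (k1 * g + 1)) :
    chainB g (n - (k1 - 1) * g) k1 ∪ S1 ≠ chainB g (n - (k2 - 1) * g) k2 ∪ S2 := by
  intro he
  have hk1g : (k1 - 1) * g + g = k1 * g := kmul_eq h1
  have hk2g : (k2 - 1) * g + g = k2 * g := kmul_eq (by omega)
  have hk12 : k1 * g ≤ (k2 - 1) * g := Nat.mul_le_mul_right g (by omega)
  have hsub : (k2 - 1 - k1) * g = (k2 - 1) * g - k1 * g := Nat.sub_mul _ _ _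
  have hxin : n - k1 * g ∈ chainB g (n - (k2 - 1) * g) k2 :=
    mem_chainB.mpr ⟨k2 - 1 - k1, by omega, by omega⟩
  have hxnot : n - k1 * g ∉ chainB g (n - (k1 - 1) * g) k1 ∪ S1 := by
    intro hc
    rcases Finset.mem_union.mp hc with hc | hs
    · rcases mem_chainB.mp hc with ⟨m, hm, heq⟩
      have : m * g ≤ (k1 - 1) * g := Nat.mul_le_mul_right g (by omega)
      omega
    · have := hS1 _ hs; omega
  rw [he] at hxnot
  exact hxnot (Finset.mem_union_left _ hxin)

lemma legalF_card_succ (hg : 1 ≤ g) (hℓ : 1 ≤ ℓ) (n : ℕ) (hn : 1 ≤ n) :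
    (legalF g ℓ n).card = (legalF g ℓ (n - 1)).card +
      ∑ k ∈ Finset.Icc 1 (min ℓ ((n - 1) / g + 1)),
        (legalF g ℓ (n - (k * g + 1))).card := by
  classical
  set Kn := min ℓ ((n - 1) / g + 1) with hKn
  -- elements of Icc 1 Kn have chains fitting
  have hKd : ∀ k, k ≤ Kn → (k - 1) * g ≤ n - 1 := by
    intro k hk
    have h3 : k ≤ (n - 1) / g + 1 := le_trans hk (min_le_right _ _)
    have h4 : k - 1 ≤ (n - 1) / g := Nat.sub_le_iff_le_add.mpr h3
    exact (Nat.le_div_iff_mul_le (show 0 < g by omega)).mp h4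
  have h1 : (legalF g ℓ n).filter (fun S => n ∉ S) = legalF g ℓ (n - 1) := by
    ext S
    rw [Finset.mem_filter, mem_legalF, mem_legalF]
    constructor
    · rintro ⟨⟨hsub, hgs⟩, hnmem⟩
      refine ⟨?_, hgs⟩
      intro x hx
      have h2 := hsub hx
      rw [Finset.mem_Icc] at h2 ⊢
      have : x ≠ n := fun he => hnmem (he ▸ hx)
      omega
    · rintro ⟨hsub, hgs⟩
      have hsub2 : ∀ x ∈ S, 1 ≤ x ∧ x ≤ n - 1 := fun x hx => by
        have := hsub hx; rwa [Finset.mem_Icc] at this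
      refine ⟨⟨fun x hx => ?_, hgs⟩, fun hc => ?_⟩
      · have := hsub2 x hx; rw [Finset.mem_Icc]; omega
      · have := hsub2 n hc; omega
  have h2 : (legalF g ℓ n).filter (fun S => n ∈ S) =
      (Finset.Icc 1 Kn).biUnion (fun k =>
        (legalF g ℓ (n - (k * g + 1))).image
          (fun S' => chainB g (n - (k - 1) * g) k ∪ S')) := by
    ext S
    constructor
    · intro hS
      rw [Finset.mem_filter, mem_legalF] at hS
      obtain ⟨⟨hsub, hgs⟩, hnmem⟩ := hS
      cases hgs with
      | empty => simp at hnmem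
      | cons b k S0 hb hk hkl hlt hS0 =>
        have hkgeq : (k - 1) * g + g = k * g := kmul_eq hk
        have htop : b + (k - 1) * g ∈ chainB g b k ∪ S0 :=
          Finset.mem_union_left _ (mem_chainB.mpr ⟨k - 1, by omega, rfl⟩)
        have h3 : b + (k - 1) * g ≤ n := by
          have := hsub htop; rw [Finset.mem_Icc] at this; exact this.2
        have h4 : n ≤ b + (k - 1) * g := by
          rcases Finset.mem_union.mp hnmem with hc | hs0
          · rcases mem_chainB.mp hc with ⟨m, hm, he⟩
            have : m * g ≤ (k - 1) * g := Nat.mul_le_mul_right g (by omega)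
            omega
          · have := hlt _ hs0; omega
        rw [Finset.mem_biUnion]
        refine ⟨k, ?_, ?_⟩
        · rw [Finset.mem_Icc, hKn]
          refine ⟨hk, le_min hkl ?_⟩
          have : k - 1 ≤ (n - 1) / g := by
            refine (Nat.le_div_iff_mul_le (show 0 < g by omega)).mpr ?_
            omega
          omega
        · rw [Finset.mem_image]
          refine ⟨S0, ?_, by rw [show n - (k - 1) * g = b by omega]⟩
          rw [mem_legalF]
          refine ⟨fun x hx => ?_, hS0⟩
          rw [Finset.mem_Icc]
          have h5 := hlt x hx
          have h6 := GS_pos hS0 x hx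
          omega
    · intro hS
      rw [Finset.mem_biUnion] at hS
      obtain ⟨k, hkmem, hSim⟩ := hS
      rw [Finset.mem_Icc] at hkmem
      obtain ⟨hk1, hk2⟩ := hkmem
      rw [Finset.mem_image] at hSim
      obtain ⟨S0, hS0mem, rfl⟩ := hSim
      rw [mem_legalF] at hS0mem
      obtain ⟨hS0sub, hS0gs⟩ := hS0mem
      have hkl : k ≤ ℓ := le_trans hk2 (min_le_left _ _)
      have hkg1 : (k - 1) * g ≤ n - 1 := hKd k hk2
      have hkgeq : (k - 1) * g + g = k * g := kmul_eq hk1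
      have hS0elt : ∀ x ∈ S0, 1 ≤ x ∧ x ≤ n - (k * g + 1) := fun x hx => by
        have := hS0sub hx; rwa [Finset.mem_Icc] at this
      have hlt : ∀ x ∈ S0, x + g < n - (k - 1) * g := fun x hx => by
        have h5 := hS0elt x hx; omega
      rw [Finset.mem_filter, mem_legalF]
      refine ⟨⟨?_, GS.cons _ k S0 (by omega) hk1 hkl hlt hS0gs⟩, ?_⟩
      · intro x hx
        rcases Finset.mem_union.mp hx with hc | hs0
        · rcases mem_chainB.mp hc with ⟨m, hm, rfl⟩
          rw [Finset.mem_Icc]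
          have : m * g ≤ (k - 1) * g := Nat.mul_le_mul_right g (by omega)
          omega
        · have := hS0elt x hs0; rw [Finset.mem_Icc]; omega
      · exact Finset.mem_union_left _ (mem_chainB.mpr ⟨k - 1, by omega, by omega⟩)
  have hdisj : ((Finset.Icc 1 Kn : Finset ℕ) : Set ℕ).PairwiseDisjoint
      (fun k => (legalF g ℓ (n - (k * g + 1))).image
          (fun S' => chainB g (n - (k - 1) * g) k ∪ S')) := by
    intro k1 hk1 k2 hk2 hne
    simp only [Finset.coe_Icc, Set.mem_Icc] at hk1 hk2
    simp only [Function.onFun]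
    rw [Finset.disjoint_left]
    intro T hT1 hT2
    rw [Finset.mem_image] at hT1 hT2
    obtain ⟨S1, hS1mem, hT1e⟩ := hT1
    obtain ⟨S2, hS2mem, hT2e⟩ := hT2
    rw [mem_legalF] at hS1mem hS2mem
    have hS1elt : ∀ x ∈ S1, 1 ≤ x ∧ x ≤ n - (k1 * g + 1) := fun x hx => by
      have := hS1mem.1 hx; rwa [Finset.mem_Icc] at this
    have hS2elt : ∀ x ∈ S2, 1 ≤ x ∧ x ≤ n - (k2 * g + 1) := fun x hx => by
      have := hS2mem.1 hx; rwa [Finset.mem_Icc] at this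
    rcases lt_or_gt_of_ne hne with hlt | hgt
    · exact distinct_k hg hk1.1 hlt (hKd k2 hk2.2) hn hS1elt (hT1e.trans hT2e.symm)
    · exact distinct_k hg hk2.1 hgt (hKd k1 hk1.2) hn hS2elt (hT2e.trans hT1e.symm)
  have hcards := Finset.card_filter_add_card_filter_not
    (s := legalF g ℓ n) (p := fun S => n ∈ S)
  rw [h1, h2, Finset.card_biUnion hdisj] at hcards
  have himg : ∀ k ∈ Finset.Icc 1 Kn,
      ((legalF g ℓ (n - (k * g + 1))).image
        (fun S' => chainB g (n - (k - 1) * g) k ∪ S')).card =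
      (legalF g ℓ (n - (k * g + 1))).card := by
    intro k hkmem
    rw [Finset.mem_Icc] at hkmem
    have hkg1 : (k - 1) * g ≤ n - 1 := hKd k hkmem.2
    have hkgeq : (k - 1) * g + g = k * g := kmul_eq hkmem.1
    apply Finset.card_image_of_injOn
    intro S1 hS1 S2 hS2 he
    dsimp only at he
    rw [Finset.mem_coe, mem_legalF] at hS1 hS2
    have hb1 : ∀ x ∈ S1, 1 ≤ x ∧ x ≤ n - (k * g + 1) := fun x hx => by
      have := hS1.1 hx; rwa [Finset.mem_Icc] at this
    have hb2 : ∀ x ∈ S2, 1 ≤ x ∧ x ≤ n - (k * g + 1) := fun x hx => by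
      have := hS2.1 hx; rwa [Finset.mem_Icc] at this
    ext x
    constructor
    · intro hx
      have hxb := hb1 x hx
      have : x ∈ chainB g (n - (k - 1) * g) k ∪ S2 :=
        he ▸ Finset.mem_union_right _ hx
      rcases Finset.mem_union.mp this with hc | hs
      · rcases mem_chainB.mp hc with ⟨m, hm, he2⟩; omega
      · exact hs
    · intro hx
      have hxb := hb2 x hx
      have : x ∈ chainB g (n - (k - 1) * g) k ∪ S1 :=
        he ▸ Finset.mem_union_right _ hx
      rcases Finset.mem_union.mp this with hc | hs
      · rcases mem_chainB.mp hc with ⟨m, hm, he2⟩; omega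
      · exact hs
  rw [Finset.sum_congr rfl himg] at hcards
  omega

end Counting


section Final

variable {g ℓ : ℕ}

lemma sum_kanC (hg : 1 ≤ g) (m : ℕ) (hm : 1 ≤ m) (F : ℕ → ℕ) :
    ∑ p ∈ Finset.Icc 1 m, kanC g ℓ p * F p =
      ∑ k ∈ Finset.Icc 0 (min ℓ ((m - 1) / g)), F (k * g + 1) := by
  have himg : (Finset.Icc 1 m).filter (fun p => kanC g ℓ p = 1)
      = (Finset.Icc 0 (min ℓ ((m - 1) / g))).image (fun k => k * g + 1) := by
    ext p
    rw [Finset.mem_filter, Finset.mem_Icc, Finset.mem_image]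
    constructor
    · rintro ⟨⟨hp1, hp2⟩, hc⟩
      rw [kanC_eq_one_iff] at hc
      obtain ⟨-, hpL, hmod⟩ := hc
      obtain ⟨s', rfl⟩ : ∃ s', p = s' + 1 := ⟨p - 1, by omega⟩
      obtain ⟨c, hcc⟩ := (mod_succ_iff hg).mp hmod
      have hgc : g * c = c * g := mul_comm _ _
      refine ⟨c, ?_, by omega⟩
      rw [Finset.mem_Icc]
      refine ⟨Nat.zero_le _, le_min ?_ ?_⟩
      · by_contra hcl
        have h5 : (ℓ + 1) * g ≤ c * g := Nat.mul_le_mul_right g (by omega)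
        have h6 : (ℓ + 1) * g = ℓ * g + g := Nat.succ_mul _ _
        omega
      · refine (Nat.le_div_iff_mul_le (show 0 < g by omega)).mpr ?_
        omega
    · rintro ⟨k, hkmem, rfl⟩
      rw [Finset.mem_Icc] at hkmem
      have hkl : k ≤ ℓ := le_trans hkmem.2 (min_le_left _ _)
      have hkd : k ≤ (m - 1) / g := le_trans hkmem.2 (min_le_right _ _)
      have hkg : k * g ≤ m - 1 := (Nat.le_div_iff_mul_le (show 0 < g by omega)).mp hkd
      exact ⟨⟨by omega, by omega⟩, kanC_chain hg hkl⟩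
  have step1 : ∑ p ∈ Finset.Icc 1 m, kanC g ℓ p * F p =
      ∑ p ∈ (Finset.Icc 1 m).filter (fun p => kanC g ℓ p = 1), F p := by
    rw [Finset.sum_filter]
    apply Finset.sum_congr rfl
    intro p _
    by_cases hc : kanC g ℓ p = 1
    · rw [if_pos hc, hc, one_mul]
    · have h0 : kanC g ℓ p = 0 := by have := kanC_le_one (g := g) (ℓ := ℓ) p; omega
      rw [if_neg hc, h0, zero_mul]
  rw [step1, himg, Finset.sum_image]
  intro k1 _ k2 _ he
  have h1 : k1 * g = k2 * g := by have he' : k1 * g + 1 = k2 * g + 1 := he; omega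
  exact Nat.eq_of_mul_eq_mul_right (by omega) h1

lemma card_eq_K (hg : 1 ≤ g) (hℓ : 1 ≤ ℓ)
    (K : ℕ → ℕ) (hK1 : K 1 = 1)
    (hKsmall : ∀ n, 1 ≤ n → n < ℓ * g + 1 →
      K (n + 1) = (∑ p ∈ Finset.Icc 1 n, kanC g ℓ p * K (n + 1 - p)) + 1)
    (hKrec : ∀ n, ℓ * g + 1 ≤ n →
      K (n + 1) = ∑ p ∈ Finset.Icc 1 (ℓ * g + 1), kanC g ℓ p * K (n + 1 - p)) :
    ∀ n, (legalF g ℓ n).card = K (n + 1) := by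
  intro n
  induction n using Nat.strong_induction_on with
  | _ n IH =>
  rcases Nat.eq_zero_or_pos n with rfl | hn
  · rw [card_legalF_zero, hK1]
  · rw [legalF_card_succ hg hℓ n hn]
    have hIH1 : (legalF g ℓ (n - 1)).card = K n := by
      have := IH (n - 1) (by omega)
      rwa [show n - 1 + 1 = n by omega] at this
    by_cases hcase : ℓ * g + 1 ≤ n
    · -- large n
      have h7 : ℓ * g ≤ n - 1 := by omega
      have h8 : ℓ ≤ (n - 1) / g := (Nat.le_div_iff_mul_le (show 0 < g by omega)).mpr h7
      have hKn : min ℓ ((n - 1) / g + 1) = ℓ := min_eq_left (le_trans h8 (Nat.le_succ _))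
      rw [hKn, hIH1]
      rw [hKrec n hcase, sum_kanC hg (ℓ * g + 1) (by omega) (fun p => K (n + 1 - p))]
      have hL : (ℓ * g + 1 - 1) / g = ℓ := by
        rw [Nat.add_sub_cancel]
        exact Nat.mul_div_cancel _ (show 0 < g by omega)
      rw [hL, min_self]
      rw [show Finset.Icc 0 ℓ = insert 0 (Finset.Icc 1 ℓ) from by
        ext x; simp [Finset.mem_Icc, Finset.mem_insert]; omega]
      rw [Finset.sum_insert (by simp)]
      rw [show n + 1 - (0 * g + 1) = n from by simp]
      congr 1
      apply Finset.sum_congr rfl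
      intro k hk
      rw [Finset.mem_Icc] at hk
      have hkg : k * g ≤ ℓ * g := Nat.mul_le_mul_right g hk.2
      have hIH2 := IH (n - (k * g + 1)) (by omega)
      rw [hIH2]
      congr 1
      omega
    · -- small n
      have hn2 : n < ℓ * g + 1 := by omega
      obtain ⟨D, hD⟩ : ∃ D, (n - 1) / g = D := ⟨_, rfl⟩
      have hdmul : D * g ≤ n - 1 := by rw [← hD]; exact Nat.div_mul_le_self _ _
      have hdlt : n - 1 < D * g + g := by
        have hmlt : (n - 1) % g < g := Nat.mod_lt _ (by omega)
        have heq : D * g + (n - 1) % g = n - 1 := by rw [← hD]; exact Nat.div_add_mod' _ _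
        omega
      have hdl : D + 1 ≤ ℓ := by
        by_contra hc
        have h5 : ℓ * g ≤ D * g := Nat.mul_le_mul_right g (by omega)
        omega
      rw [hKsmall n hn hn2, sum_kanC hg n hn (fun p => K (n + 1 - p)), hD]
      rw [show min ℓ (D + 1) = D + 1 from min_eq_right hdl]
      rw [show min ℓ D = D from min_eq_right (by omega)]
      rw [show Finset.Icc 1 (D + 1) = insert (D + 1) (Finset.Icc 1 D) from by
        ext x; simp [Finset.mem_Icc, Finset.mem_insert]; omega]
      rw [Finset.sum_insert (by simp [Finset.mem_Icc])]
      rw [show Finset.Icc 0 D = insert 0 (Finset.Icc 1 D) from by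
        ext x; simp [Finset.mem_Icc, Finset.mem_insert]; omega]
      rw [Finset.sum_insert (by simp)]
      rw [show n + 1 - (0 * g + 1) = n from by simp]
      have hsucc : (D + 1) * g = D * g + g := Nat.succ_mul _ _
      rw [show n - ((D + 1) * g + 1) = 0 from by omega, card_legalF_zero]
      rw [hIH1]
      have hterms : ∑ k ∈ Finset.Icc 1 D, (legalF g ℓ (n - (k * g + 1))).card
          = ∑ k ∈ Finset.Icc 1 D, K (n + 1 - (k * g + 1)) := by
        apply Finset.sum_congr rfl
        intro k hk
        rw [Finset.mem_Icc] at hk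
        have hkg : k * g ≤ D * g := Nat.mul_le_mul_right g hk.2
        have hIH2 := IH (n - (k * g + 1)) (by omega)
        rw [hIH2]
        congr 1
        omega
      rw [hterms]
      omega

end Final

/-- For a Kangaroo recurrence `{K_n}` with `ℓ` hops of length `g`
and any `s ≥ 1`, the number of legal index sets `S ⊆ {1, …, s}` (including the empty
set) equals `K_{s+1}`. -/
theorem kangaroo_count_all (g ℓ : ℕ) (hg : 1 ≤ g) (hℓ : 1 ≤ ℓ)
    (K : ℕ → ℕ) (hK1 : K 1 = 1)
    (hKsmall : ∀ n, 1 ≤ n → n < ℓ * g + 1 →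
      K (n + 1) = (∑ p ∈ Finset.Icc 1 n, kanC g ℓ p * K (n + 1 - p)) + 1)
    (hKrec : ∀ n, ℓ * g + 1 ≤ n →
      K (n + 1) = ∑ p ∈ Finset.Icc 1 (ℓ * g + 1), kanC g ℓ p * K (n + 1 - p))
    (s : ℕ) (hs : 1 ≤ s) :
    {S : Finset ℕ | S ⊆ Finset.Icc 1 s ∧
        IsLegalSet (ℓ * g + 1) (kanC g ℓ) S}.ncard = K (s + 1) := by
  have hset : {S : Finset ℕ | S ⊆ Finset.Icc 1 s ∧ IsLegalSet (ℓ * g + 1) (kanC g ℓ) S}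
      = ↑(legalF g ℓ s) := by
    ext S
    simp only [Set.mem_setOf_eq, Finset.mem_coe, mem_legalF]
    constructor
    · rintro ⟨hsub, hleg⟩
      refine ⟨hsub, ?_⟩
      rcases S.eq_empty_or_nonempty with rfl | hne
      · exact GS.empty
      · exact partB hg hℓ (S.sup id) S rfl hleg.1 hne (hleg.2 hne)
    · rintro ⟨hsub, hgs⟩
      exact ⟨hsub, partA hg hℓ hgs⟩
  rw [hset, Set.ncard_coe_finset]
  exact card_eq_K hg hℓ K hK1 hKsmall hKrec s
end
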